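/- arXiv:math/0304421 — 9 statements merged into one kernel-verified Lean document; each statement's English description precedes it below -/
import Mathlib

section
/- Let n ≥ 1, 1 ≤ k ≤ n, and let A := {z ∈ 𝔻ⁿ : z_1⋯z_k = 0}, where 𝔻 is the open unit disc in ℂ. Then for every z ∈ 𝔻ⁿ, the generalized Möbius function satisfies m_{𝔻ⁿ}(A, z) = |z_1|·…·|z_k|. -/
open Finset

lemma schwarz_bound {g : ℂ → ℂ} {C : ℝ}
    (hd : DifferentiableOn ℂ g (Metric.ball 0 1)) (h0 : g 0 = 0)
    (hb : ∀ ζ ∈ Metric.ball (0 : ℂ) 1, ‖g ζ‖ ≤ C)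
    {ζ : ℂ} (hζ : ζ ∈ Metric.ball (0 : ℂ) 1) :
    ‖g ζ‖ ≤ C * ‖ζ‖ := by
  have hζ1 : ‖ζ‖ < 1 := by
    simpa [Metric.mem_ball, dist_zero_right] using hζ
  refine le_of_forall_pos_le_add fun ε hε => ?_
  have hmaps : Set.MapsTo g (Metric.ball 0 1) (Metric.ball (g 0) (C + ε)) := by
    intro w hw
    rw [h0, Metric.mem_ball, dist_zero_right]
    exact lt_of_le_of_lt (hb w hw) (lt_add_of_pos_right _ hε)
  have := Complex.dist_le_div_mul_dist_of_mapsTo_ball hd (hmaps.mono_right Metric.ball_subset_closedBall) hζ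
  rw [h0, dist_zero_right, dist_zero_right,
    div_one] at this
  calc ‖g ζ‖ ≤ (C + ε) * ‖ζ‖ := this
    _ = C * ‖ζ‖ + ε * ‖ζ‖ := by ring
    _ ≤ C * ‖ζ‖ + ε := by
        have : ε * ‖ζ‖ ≤ ε * 1 := by
          apply mul_le_mul_of_nonneg_left (le_of_lt hζ1) (le_of_lt hε)
        linarith

lemma key (n : ℕ) (S : Finset (Fin n)) :
    ∀ f : (Fin n → ℂ) → ℂ,
    DifferentiableOn ℂ f {z : Fin n → ℂ | ∀ j, ‖z j‖ < 1} →
    (∀ w : Fin n → ℂ, (∀ j, ‖w j‖ < 1) → ‖f w‖ < 1) →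
    (∀ w : Fin n → ℂ, (∀ j, ‖w j‖ < 1) → (∃ j ∈ S, w j = 0) → f w = 0) →
    ∀ z : Fin n → ℂ, (∀ j, ‖z j‖ < 1) →
      ‖f z‖ ≤ ∏ j ∈ S, ‖z j‖ := by
  induction S using Finset.induction_on with
  | empty =>
    intro f _ hb _ z hz
    simpa using (hb z hz).le
  | @insert i s his IH =>
    intro f hd hb h0 z hz
    set G : Set (Fin n → ℂ) := {z : Fin n → ℂ | ∀ j, ‖z j‖ < 1} with hGdef
    set C : ℝ := ∏ j ∈ s, ‖z j‖ with hC
    -- the slice function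
    set g : ℂ → ℂ := fun ζ => f (Function.update z i ζ) with hg
    have upd_mem : ∀ ζ : ℂ, ‖ζ‖ < 1 → ∀ j, ‖Function.update z i ζ j‖ < 1 := by
      intro ζ hζ j
      rw [Function.update_apply]
      split
      · exact hζ
      · exact hz j
    have hu : Differentiable ℂ (fun ζ : ℂ => Function.update z i ζ) := by
      rw [differentiable_pi]
      intro j
      by_cases hji : j = i
      · subst hji
        simp only [Function.update_self]
        exact differentiable_id
      · simp only [Function.update_of_ne hji]
        exact differentiable_const _
    have gd : DifferentiableOn ℂ g (Metric.ball 0 1) := by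
      apply hd.comp (hu.differentiableOn)
      intro ζ hζ
      have hζ1 : ‖ζ‖ < 1 := by
        simpa [Metric.mem_ball, dist_zero_right] using hζ
      exact upd_mem ζ hζ1
    have g0 : g 0 = 0 := by
      apply h0 _ (upd_mem 0 (by simp))
      exact ⟨i, Finset.mem_insert_self i s, by simp⟩
    have gb : ∀ ζ ∈ Metric.ball (0 : ℂ) 1, ‖g ζ‖ ≤ C := by
      intro ζ hζ
      have hζ1 : ‖ζ‖ < 1 := by
        simpa [Metric.mem_ball, dist_zero_right] using hζ
      have := IH f hd hb
        (fun w hw ⟨j, hj, hwj⟩ => h0 w hw ⟨j, Finset.mem_insert_of_mem hj, hwj⟩)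
        (Function.update z i ζ) (upd_mem ζ hζ1)
      have hprod : ∏ j ∈ s, ‖Function.update z i ζ j‖
          = ∏ j ∈ s, ‖z j‖ := by
        apply Finset.prod_congr rfl
        intro j hj
        have : j ≠ i := fun h => his (h ▸ hj)
        rw [Function.update_of_ne this]
      rw [hprod] at this
      exact this
    have hzi : (z i) ∈ Metric.ball (0 : ℂ) 1 := by
      simp [Metric.mem_ball, dist_zero_right]
      exact hz i
    have := schwarz_bound gd g0 gb hzi
    have hgz : g (z i) = f z := by
      rw [hg]
      simp [Function.update_eq_self]
    rw [hgz] at this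
    rw [Finset.prod_insert his]
    calc ‖f z‖ ≤ C * ‖z i‖ := this
      _ = ‖z i‖ * ∏ j ∈ s, ‖z j‖ := by rw [mul_comm]

lemma prodDiff {n : ℕ} (S : Finset (Fin n)) :
    Differentiable ℂ (fun w : Fin n → ℂ => ∏ j ∈ S, w j) := by
  induction S using Finset.induction_on with
  | empty => simpa using differentiable_const (1 : ℂ)
  | @insert i s hi ih =>
    simp only [Finset.prod_insert hi]
    exact (differentiable_apply i).mul ih

/-- The generalized Möbius function of `A ⊆ G` at `z`. -/
noncomputable def mob {n : ℕ} (G A : Set (Fin n → ℂ)) (z : Fin n → ℂ) : ℝ :=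
  sSup {x : ℝ | ∃ f : (Fin n → ℂ) → ℂ, DifferentiableOn ℂ f G ∧
    (∀ w ∈ G, ‖f w‖ < 1) ∧ (∀ w ∈ A, f w = 0) ∧ x = ‖f z‖}

/-- For the unit polydisc `𝔻ⁿ` and `A = {z ∈ 𝔻ⁿ : z_1⋯z_k = 0}`,
`m_{𝔻ⁿ}(A, z) = |z_1|⋯|z_k|`. -/
theorem stmt0 (n k : ℕ) (hn : 1 ≤ n) (hk1 : 1 ≤ k) (hkn : k ≤ n)
    (G A : Set (Fin n → ℂ))
    (hG : G = {z | ∀ j, ‖z j‖ < 1})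
    (hA : A = {z ∈ G | ∏ j ∈ univ.filter (fun j : Fin n => (j : ℕ) < k), z j = 0})
    (z : Fin n → ℂ) (hz : z ∈ G) :
    mob G A z = ∏ j ∈ univ.filter (fun j : Fin n => (j : ℕ) < k), ‖z j‖ := by
  set S : Finset (Fin n) := univ.filter (fun j : Fin n => (j : ℕ) < k) with hS
  have hSne : S.Nonempty := ⟨⟨0, hn⟩, by simp [hS]; omega⟩
  set P : ℝ := ∏ j ∈ S, ‖z j‖ with hP
  have hzG : ∀ j, ‖z j‖ < 1 := by rw [hG] at hz; exact hz
  -- the witness function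
  set f0 : (Fin n → ℂ) → ℂ := fun w => ∏ j ∈ S, w j with hf0
  have hf0d : Differentiable ℂ f0 := by
    rw [hf0]
    exact prodDiff S
  have hf0b : ∀ w ∈ G, ‖f0 w‖ < 1 := by
    intro w hw
    rw [hG] at hw
    rw [hf0, norm_prod]
    obtain ⟨j₀, hj₀⟩ := hSne
    rw [← Finset.mul_prod_erase _ _ hj₀]
    calc ‖w j₀‖ * ∏ j ∈ S.erase j₀, ‖w j‖
        ≤ ‖w j₀‖ * 1 := by
          apply mul_le_mul_of_nonneg_left _ (norm_nonneg _)
          exact Finset.prod_le_one (fun j _ => norm_nonneg _)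
            (fun j _ => (hw j).le)
      _ = ‖w j₀‖ := mul_one _
      _ < 1 := hw j₀
  have hf0A : ∀ w ∈ A, f0 w = 0 := by
    intro w hw
    rw [hA] at hw
    exact hw.2
  have hPmem : P ∈ {x : ℝ | ∃ f : (Fin n → ℂ) → ℂ, DifferentiableOn ℂ f G ∧
      (∀ w ∈ G, ‖f w‖ < 1) ∧ (∀ w ∈ A, f w = 0) ∧ x = ‖f z‖} := by
    exact ⟨f0, hf0d.differentiableOn, hf0b, hf0A, by rw [hf0, norm_prod]⟩
  have hub : ∀ x ∈ {x : ℝ | ∃ f : (Fin n → ℂ) → ℂ, DifferentiableOn ℂ f G ∧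
      (∀ w ∈ G, ‖f w‖ < 1) ∧ (∀ w ∈ A, f w = 0) ∧ x = ‖f z‖},
      x ≤ P := by
    rintro x ⟨f, hd, hb, h0, rfl⟩
    rw [hG] at hd hb
    apply key n S f hd (fun w hw => hb w hw)
    · intro w hw ⟨j, hj, hwj⟩
      apply h0
      rw [hA]
      refine ⟨by rw [hG]; exact hw, ?_⟩
      exact Finset.prod_eq_zero hj hwj
    · exact hzG
  rw [mob]
  exact le_antisymm (csSup_le ⟨P, hPmem⟩ hub) (le_csSup ⟨P, hub⟩ hPmem)
end

section
/- Let n ≥ 2, p_1,…,p_n > 0, 1 ≤ k ≤ n, and let z ∈ 𝔼 be such that (p_j|z_j|^{2p_j})_{j=1}^k is monotonically increasing. Then for every holomorphic f : 𝔼 → ℂ with |f| < 1 on 𝔼 and f ≡ 0 on A, one has |f(z)| ≤ R(z); consequently m_𝔼(A,z) ≤ R(z). -/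
open Finset

noncomputable def ellipsoid {n : ℕ} (p : Fin n → ℝ) : Set (Fin n → ℂ) :=
  {z | ∑ j, ‖z j‖ ^ (2 * p j) < 1}

def zeroSet {n : ℕ} (p : Fin n → ℝ) (k : ℕ) : Set (Fin n → ℂ) :=
  {z ∈ ellipsoid p | ∏ j ∈ univ.filter (fun j : Fin n => (j : ℕ) < k), z j = 0}

noncomputable def qq {n : ℕ} (p : Fin n → ℝ) (s : ℕ) : ℝ :=
  ∑ j ∈ univ.filter (fun j : Fin n => (j : ℕ) < s), (2 * p j)⁻¹

noncomputable def rr {n : ℕ} (p : Fin n → ℝ) (z : Fin n → ℂ) (s : ℕ) : ℝ :=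
  1 - ∑ j ∈ univ.filter (fun j : Fin n => s ≤ (j : ℕ)), ‖z j‖ ^ (2 * p j)

noncomputable def cc {n : ℕ} (p : Fin n → ℝ) (z : Fin n → ℂ) (s : ℕ) : ℝ :=
  rr p z s / qq p s

noncomputable def dd {n : ℕ} (p : Fin n → ℝ) (z : Fin n → ℂ) (k : ℕ) : ℕ :=
  sSup {s : ℕ | 1 ≤ s ∧ s ≤ k ∧
    ∀ hs : s - 1 < n,
      2 * p ⟨s - 1, hs⟩ * ‖z ⟨s - 1, hs⟩‖ ^ (2 * p ⟨s - 1, hs⟩) ≤ cc p z s}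

noncomputable def RR {n : ℕ} (p : Fin n → ℝ) (z : Fin n → ℂ) (k : ℕ) : ℝ :=
  ∏ j ∈ univ.filter (fun j : Fin n => (j : ℕ) < dd p z k),
    ‖z j‖ * (2 * p j / cc p z (dd p z k)) ^ (2 * p j)⁻¹

def monIncr {n : ℕ} (p : Fin n → ℝ) (z : Fin n → ℂ) (k : ℕ) : Prop :=
  ∀ i j : Fin n, (j : ℕ) < k → i ≤ j →
    p i * ‖z i‖ ^ (2 * p i) ≤ p j * ‖z j‖ ^ (2 * p j)

noncomputable def pshift {n : ℕ} (p : Fin n → ℝ) (D : ℕ) (j : Fin (n - D)) : ℝ :=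
  if h : D + (j : ℕ) < n then p ⟨D + (j : ℕ), h⟩ else 0

noncomputable def zrest {n : ℕ} (z : Fin n → ℂ) (D : ℕ) (j : Fin (n - D)) : ℂ :=
  if h : D + (j : ℕ) < n then z ⟨D + (j : ℕ), h⟩ else 0

noncomputable def rrest {n : ℕ} (p : Fin n → ℝ) (D : ℕ) (ζ : Fin (n - D) → ℂ) : ℝ :=
  1 - ∑ j, ‖ζ j‖ ^ (2 * pshift p D j)

/-- The polydisc radii used in the Schwarz-lemma argument. -/
noncomputable def rho {n : ℕ} (p : Fin n → ℝ) (c : ℝ) (j : Fin n) : ℝ :=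
  (c / (2 * p j)) ^ (2 * p j)⁻¹

private lemma aux_eps {x C r a : ℝ} (ha : 0 < a) (hr : 0 < r)
    (h : ∀ ε > 0, x ≤ (C + ε) / r * a) : x ≤ C / r * a := by
  refine le_of_forall_sub_le fun ε hε => ?_
  have h1 := h (ε * r / a) (by positivity)
  have h2 : (C + ε * r / a) / r * a = C / r * a + ε := by
    field_simp
  linarith

/-- Upper estimate: every competitor `f` for the Möbius function satisfies
`|f(z)| ≤ R(z)`, hence `m_𝔼(A,z) ≤ R(z)`. -/
theorem stmt1 (n k : ℕ) (hn : 2 ≤ n) (hk1 : 1 ≤ k) (hkn : k ≤ n)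
    (p : Fin n → ℝ) (hp : ∀ j, 0 < p j)
    (z : Fin n → ℂ) (hz : z ∈ ellipsoid p) (hmon : monIncr p z k) :
    (∀ f : (Fin n → ℂ) → ℂ, DifferentiableOn ℂ f (ellipsoid p) →
        (∀ w ∈ ellipsoid p, ‖f w‖ < 1) →
        (∀ w ∈ zeroSet p k, f w = 0) →
        ‖f z‖ ≤ RR p z k) ∧
      mob (ellipsoid p) (zeroSet p k) z ≤ RR p z k := by
  classical
  have hzsum : ∑ j, ‖z j‖ ^ (2 * p j) < 1 := hz
  have habs_nn : ∀ (w : Fin n → ℂ) (j : Fin n), 0 ≤ ‖w j‖ ^ (2 * p j) :=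
    fun w j => Real.rpow_nonneg (norm_nonneg _) _
  have hsplit : ∀ (s : ℕ) (F : Fin n → ℝ),
      ∑ j, F j = (∑ j ∈ univ.filter (fun j : Fin n => (j : ℕ) < s), F j)
        + ∑ j ∈ univ.filter (fun j : Fin n => s ≤ (j : ℕ)), F j := by
    intro s F
    have h1 : (univ.filter fun j : Fin n => ¬ (j : ℕ) < s)
        = univ.filter fun j : Fin n => s ≤ (j : ℕ) := by
      ext j; simp [not_lt]
    rw [← Finset.sum_filter_add_sum_filter_not univ (fun j : Fin n => (j : ℕ) < s) F, h1]
  have i0lt : 0 < n := by omega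
  have hfilter1 : univ.filter (fun j : Fin n => (j : ℕ) < 1) = {(⟨0, i0lt⟩ : Fin n)} := by
    ext j
    simp only [Finset.mem_filter, Finset.mem_univ, true_and, Finset.mem_singleton, Fin.ext_iff]
    omega
  -- `1` belongs to the defining set of `dd`.
  have hS1 : (1 : ℕ) ∈ {s : ℕ | 1 ≤ s ∧ s ≤ k ∧
      ∀ hs : s - 1 < n,
        2 * p ⟨s - 1, hs⟩ * ‖z ⟨s - 1, hs⟩‖ ^ (2 * p ⟨s - 1, hs⟩) ≤ cc p z s} := by
    refine ⟨le_refl 1, hk1, fun hs => ?_⟩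
    have hq : qq p 1 = (2 * p ⟨0, i0lt⟩)⁻¹ := by
      rw [qq, hfilter1, Finset.sum_singleton]
    have hsum1 := hsplit 1 (fun j => ‖z j‖ ^ (2 * p j))
    rw [hfilter1, Finset.sum_singleton] at hsum1
    have hr1 : ‖z ⟨0, i0lt⟩‖ ^ (2 * p ⟨0, i0lt⟩) ≤ rr p z 1 := by
      simp only [rr]
      linarith [hzsum, hsum1.symm.le, hsum1.le]
    have hc1 : cc p z 1 = rr p z 1 * (2 * p ⟨0, i0lt⟩) := by
      rw [cc, hq, div_eq_mul_inv, inv_inv]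
    have h2p : (0 : ℝ) < 2 * p ⟨0, i0lt⟩ := by have := hp ⟨0, i0lt⟩; positivity
    show 2 * p ⟨0, i0lt⟩ * ‖z ⟨0, i0lt⟩‖ ^ (2 * p ⟨0, i0lt⟩) ≤ cc p z 1
    rw [hc1]
    nlinarith [hr1, h2p]
  have hSbdd : BddAbove {s : ℕ | 1 ≤ s ∧ s ≤ k ∧
      ∀ hs : s - 1 < n,
        2 * p ⟨s - 1, hs⟩ * ‖z ⟨s - 1, hs⟩‖ ^ (2 * p ⟨s - 1, hs⟩) ≤ cc p z s} :=
    ⟨k, fun s hs => hs.2.1⟩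
  set D := dd p z k with hDdef
  have hDS : D ∈ {s : ℕ | 1 ≤ s ∧ s ≤ k ∧
      ∀ hs : s - 1 < n,
        2 * p ⟨s - 1, hs⟩ * ‖z ⟨s - 1, hs⟩‖ ^ (2 * p ⟨s - 1, hs⟩) ≤ cc p z s} :=
    Nat.sSup_mem ⟨1, hS1⟩ hSbdd
  obtain ⟨hD1, hDk, hDcond⟩ := hDS
  have hDn : D ≤ n := le_trans hDk hkn
  have hD1n : D - 1 < n := by omega
  have hcond := hDcond hD1n
  -- positivity of `q`, `r`, `c`
  have hq_pos : 0 < qq p D := by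
    refine Finset.sum_pos (fun j _ => by have := hp j; positivity) ⟨⟨0, i0lt⟩, ?_⟩
    simp only [Finset.mem_filter, Finset.mem_univ, true_and]
    omega
  have hsumD := hsplit D (fun j => ‖z j‖ ^ (2 * p j))
  have hfront_nn : 0 ≤ ∑ j ∈ univ.filter (fun j : Fin n => (j : ℕ) < D),
      ‖z j‖ ^ (2 * p j) :=
    Finset.sum_nonneg fun j _ => habs_nn z j
  have hr_pos : 0 < rr p z D := by
    simp only [rr]
    linarith [hzsum, hsumD.le, hsumD.ge]
  have hc_pos : 0 < cc p z D := div_pos hr_pos hq_pos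
  have hρ_pos : ∀ j : Fin n, 0 < rho p (cc p z D) j :=
    fun j => Real.rpow_pos_of_pos (by have := hp j; positivity) _
  have hρ_pow : ∀ j : Fin n, rho p (cc p z D) j ^ (2 * p j) = cc p z D / (2 * p j) := by
    intro j
    have hx : (0 : ℝ) ≤ cc p z D / (2 * p j) := by have := hp j; positivity
    have h2p : (2 : ℝ) * p j ≠ 0 := by have := hp j; positivity
    rw [rho, ← Real.rpow_mul hx, inv_mul_cancel₀ h2p, Real.rpow_one]
  -- coordinate bounds
  have hcoord : ∀ j : Fin n, (j : ℕ) < D →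
      ‖z j‖ ^ (2 * p j) ≤ cc p z D / (2 * p j) := by
    intro j hj
    have hek : ((⟨D - 1, hD1n⟩ : Fin n) : ℕ) < k := by simp; omega
    have hje : j ≤ (⟨D - 1, hD1n⟩ : Fin n) := by
      rw [Fin.le_def]; simp; omega
    have h1 := hmon j ⟨D - 1, hD1n⟩ hek hje
    rw [le_div_iff₀ (by have := hp j; positivity)]
    nlinarith [h1, hcond]
  have hzρ : ∀ j : Fin n, (j : ℕ) < D → ‖z j‖ ≤ rho p (cc p z D) j := by
    intro j hj
    have h2p : (0 : ℝ) < 2 * p j := by have := hp j; positivity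
    have h3 : ‖z j‖
        = (‖z j‖ ^ (2 * p j)) ^ (2 * p j)⁻¹ := by
      rw [← Real.rpow_mul (norm_nonneg _), mul_inv_cancel₀ h2p.ne', Real.rpow_one]
    rw [h3, rho]
    exact Real.rpow_le_rpow (habs_nn z j) (hcoord j hj) (by positivity)
  have hsumρ : ∑ j ∈ univ.filter (fun j : Fin n => (j : ℕ) < D),
      rho p (cc p z D) j ^ (2 * p j) = rr p z D := by
    rw [Finset.sum_congr rfl fun j _ => hρ_pow j]
    have : ∑ j ∈ univ.filter (fun j : Fin n => (j : ℕ) < D), cc p z D / (2 * p j)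
        = cc p z D * qq p D := by
      rw [qq, Finset.mul_sum]
      exact Finset.sum_congr rfl fun j _ => div_eq_mul_inv _ _
    rw [this, cc, div_mul_cancel₀ _ hq_pos.ne']
  -- the polydisc-with-tail is inside the ellipsoid
  have hmem : ∀ w : Fin n → ℂ,
      (∀ j : Fin n, (j : ℕ) < D → ‖w j‖ < rho p (cc p z D) j) →
      (∀ j : Fin n, D ≤ (j : ℕ) → ‖w j‖ ≤ ‖z j‖) →
      w ∈ ellipsoid p := by
    intro w h1 h2
    show ∑ j, ‖w j‖ ^ (2 * p j) < 1
    rw [hsplit D]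
    have hA : ∑ j ∈ univ.filter (fun j : Fin n => (j : ℕ) < D),
        ‖w j‖ ^ (2 * p j) < rr p z D := by
      rw [← hsumρ]
      refine Finset.sum_lt_sum_of_nonempty ⟨⟨0, i0lt⟩, ?_⟩ fun j hj => ?_
      · simp only [Finset.mem_filter, Finset.mem_univ, true_and]; omega
      · have hj' : (j : ℕ) < D := by simpa using hj
        exact Real.rpow_lt_rpow (norm_nonneg _) (h1 j hj')
          (by have := hp j; positivity)
    have hB : ∑ j ∈ univ.filter (fun j : Fin n => D ≤ (j : ℕ)),
        ‖w j‖ ^ (2 * p j)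
        ≤ ∑ j ∈ univ.filter (fun j : Fin n => D ≤ (j : ℕ)),
          ‖z j‖ ^ (2 * p j) :=
      Finset.sum_le_sum fun j hj =>
        Real.rpow_le_rpow (norm_nonneg _) (h2 j (by simpa using hj))
          (by have := hp j; positivity)
    simp only [rr] at hA
    linarith
  -- rewrite RR as a product of ratios
  have hRR : RR p z k = ∏ j ∈ univ.filter (fun j : Fin n => (j : ℕ) < D),
      (‖z j‖ / rho p (cc p z D) j) := by
    rw [RR, ← hDdef]
    refine Finset.prod_congr rfl fun j _ => ?_
    have h1 : 2 * p j / cc p z D = (cc p z D / (2 * p j))⁻¹ := (inv_div _ _).symm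
    have h2 : rho p (cc p z D) j = (cc p z D / (2 * p j)) ^ (2 * p j)⁻¹ := rfl
    rw [h1, Real.inv_rpow (by have := hp j; positivity), ← h2, ← div_eq_mul_inv]
  have hRR_nonneg : 0 ≤ RR p z k := by
    rw [hRR]
    exact Finset.prod_nonneg fun j _ => div_nonneg (norm_nonneg _) (hρ_pos j).le
  -- main bound for each competitor
  have hmain : ∀ f : (Fin n → ℂ) → ℂ, DifferentiableOn ℂ f (ellipsoid p) →
      (∀ w ∈ ellipsoid p, ‖f w‖ < 1) →
      (∀ w ∈ zeroSet p k, f w = 0) →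
      ‖f z‖ ≤ RR p z k := by
    intro f hf_d hf_lt hf_0
    by_cases hcaseA : ∃ j : Fin n, (j : ℕ) < D ∧ z j = 0
    · -- z itself lies in the zero set
      obtain ⟨j0, hj0D, hj0z⟩ := hcaseA
      have hzA : z ∈ zeroSet p k := by
        refine ⟨hz, Finset.prod_eq_zero (i := j0) ?_ hj0z⟩
        simp only [Finset.mem_filter, Finset.mem_univ, true_and]
        omega
      rw [hf_0 z hzA]
      simpa using hRR_nonneg
    push_neg at hcaseA
    have hz_ne : ∀ j : Fin n, (j : ℕ) < D → 0 < ‖z j‖ :=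
      fun j hj => norm_pos_iff.mpr (hcaseA j hj)
    -- the bound at the interior points t • z
    have hfinal : ∀ t : ℝ, t ∈ Set.Ioo (0 : ℝ) 1 →
        ‖f (fun j => (t : ℂ) * z j)‖ ≤ RR p z k := by
      intro t ht
      set y : Fin n → ℂ := fun j => (t : ℂ) * z j with hy
      have hyabs : ∀ j : Fin n, ‖y j‖ = t * ‖z j‖ := by
        intro j
        rw [hy]
        simp only [norm_mul, Complex.norm_real, Real.norm_eq_abs, abs_of_pos ht.1]
      have hyρ : ∀ j : Fin n, (j : ℕ) < D → ‖y j‖ < rho p (cc p z D) j := by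
        intro j hj
        rw [hyabs j]
        exact lt_of_lt_of_le (mul_lt_of_lt_one_left (hz_ne j hj) ht.2) (hzρ j hj)
      have hyle : ∀ j : Fin n, ‖y j‖ ≤ ‖z j‖ := by
        intro j
        rw [hyabs j]
        exact mul_le_of_le_one_left (norm_nonneg _) ht.2.le
      have hypos : ∀ j : Fin n, (j : ℕ) < D → 0 < ‖y j‖ := by
        intro j hj
        rw [hyabs j]
        exact mul_pos ht.1 (hz_ne j hj)
      -- the key downward induction
      have key : ∀ m : ℕ, m ≤ D → ∀ w : Fin n → ℂ,
          (∀ j : Fin n, (j : ℕ) < D → ‖w j‖ < rho p (cc p z D) j) →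
          (∀ j : Fin n, D - m ≤ (j : ℕ) → w j = y j) →
          ‖f w‖ ≤ ∏ j ∈ univ.filter
              (fun j : Fin n => D - m ≤ (j : ℕ) ∧ (j : ℕ) < D),
            (‖y j‖ / rho p (cc p z D) j) := by
        intro m
        induction m with
        | zero =>
          intro _ w hw1 hw2
          have hempty : univ.filter (fun j : Fin n => D - 0 ≤ (j : ℕ) ∧ (j : ℕ) < D)
              = (∅ : Finset (Fin n)) := by
            ext j
            simp only [Finset.mem_filter, Finset.mem_univ, true_and,
              Finset.notMem_empty, iff_false, not_and, not_lt]
            omega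
          rw [hempty, Finset.prod_empty]
          have hwE : w ∈ ellipsoid p := by
            refine hmem w hw1 fun j hj => ?_
            rw [hw2 j (by omega)]
            exact hyle j
          exact (hf_lt w hwE).le
        | succ m ih =>
          intro hm w hw1 hw2
          have hsD : D - (m + 1) < D := by omega
          set i : Fin n := ⟨D - (m + 1), by omega⟩ with hi
          have hws : w i = y i := hw2 i (by simp [hi])
          set g : ℂ → ℂ := fun lam => f (Function.update w i lam) with hg
          set C : ℝ := ∏ j ∈ univ.filter
              (fun j : Fin n => D - m ≤ (j : ℕ) ∧ (j : ℕ) < D),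
            (‖y j‖ / rho p (cc p z D) j) with hC
          have hC_pos : 0 < C := by
            refine Finset.prod_pos fun j hj => ?_
            have hjD : (j : ℕ) < D := (Finset.mem_filter.mp hj).2.2
            exact div_pos (hypos j hjD) (hρ_pos j)
          -- the updated point stays in the good region
          have hupd1 : ∀ lam : ℂ, ‖lam‖ < rho p (cc p z D) i →
              ∀ j : Fin n, (j : ℕ) < D →
                ‖Function.update w i lam j‖ < rho p (cc p z D) j := by
            intro lam hlam j hj
            rcases eq_or_ne j i with hji | hji
            · subst hji; rw [Function.update_self]; exact hlam
            · rw [Function.update_of_ne hji]; exact hw1 j hj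
          have hupd2 : ∀ lam : ℂ, ∀ j : Fin n, D - m ≤ (j : ℕ) →
              Function.update w i lam j = y j := by
            intro lam j hj
            have hji : j ≠ i := by
              intro h
              rw [h] at hj
              simp only [hi] at hj
              omega
            rw [Function.update_of_ne hji]
            exact hw2 j (by omega)
          have hmapsE : Set.MapsTo (fun lam => Function.update w i lam)
              (Metric.ball (0 : ℂ) (rho p (cc p z D) i)) (ellipsoid p) := by
            intro lam hlam
            rw [Metric.mem_ball, dist_zero_right] at hlam
            show Function.update w i lam ∈ ellipsoid p
            refine hmem _ (hupd1 lam hlam) fun j hj => ?_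
            rw [hupd2 lam j (by omega)]
            exact hyle j
          have hudiff : Differentiable ℂ (fun lam : ℂ => Function.update w i lam) := by
            rw [differentiable_pi]
            intro j
            simp only [Function.update_apply]
            by_cases hji : j = i
            · simp only [hji, if_pos rfl]
              exact differentiable_id
            · simp only [if_neg hji]
              exact differentiable_const _
          have hg_diff : DifferentiableOn ℂ g (Metric.ball (0 : ℂ) (rho p (cc p z D) i)) :=
            DifferentiableOn.comp hf_d hudiff.differentiableOn hmapsE
          have hg_le : ∀ lam ∈ Metric.ball (0 : ℂ) (rho p (cc p z D) i),
              ‖g lam‖ ≤ C := by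
            intro lam hlam
            rw [Metric.mem_ball, dist_zero_right] at hlam
            exact ih (by omega) (Function.update w i lam) (hupd1 lam hlam)
              (hupd2 lam)
          have hg0 : g 0 = 0 := by
            show f (Function.update w i 0) = 0
            refine hf_0 _ ⟨?_, ?_⟩
            · refine hmem _ (hupd1 0 (by simpa using hρ_pos i)) fun j hj => ?_
              rw [hupd2 0 j (by omega)]
              exact hyle j
            · refine Finset.prod_eq_zero (i := i) ?_ (Function.update_self _ _ _)
              simp only [Finset.mem_filter, Finset.mem_univ, true_and, hi]
              omega
          have hball : y i ∈ Metric.ball (0 : ℂ) (rho p (cc p z D) i) := by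
            rw [Metric.mem_ball, dist_zero_right]
            exact hyρ i (by simp [hi]; omega)
          have heps : ∀ ε > (0 : ℝ), ‖g (y i)‖
              ≤ (C + ε) / rho p (cc p z D) i * ‖y i‖ := by
            intro ε hε
            have hmapsg : Set.MapsTo g (Metric.ball (0 : ℂ) (rho p (cc p z D) i))
                (Metric.ball (g 0) (C + ε)) := by
              intro lam hlam
              rw [hg0, Metric.mem_ball, dist_zero_right]
              exact lt_of_le_of_lt (hg_le lam hlam) (by linarith)
            have := Complex.dist_le_div_mul_dist_of_mapsTo_ball hg_diff
              (hmapsg.mono_right Metric.ball_subset_closedBall) hball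
            rw [hg0, dist_zero_right, dist_zero_right] at this
            exact this
          have hgyi : ‖g (y i)‖
              ≤ C / rho p (cc p z D) i * ‖y i‖ :=
            aux_eps (hypos i (by simp [hi]; omega)) (hρ_pos i) heps
          have hgw : g (y i) = f w := by
            show f (Function.update w i (y i)) = f w
            rw [← hws, Function.update_eq_self]
          have hins : univ.filter
              (fun j : Fin n => D - (m + 1) ≤ (j : ℕ) ∧ (j : ℕ) < D)
              = insert i (univ.filter
                (fun j : Fin n => D - m ≤ (j : ℕ) ∧ (j : ℕ) < D)) := by
            ext j
            simp only [Finset.mem_filter, Finset.mem_univ, true_and, Finset.mem_insert,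
              Fin.ext_iff, hi]
            omega
          have hnotmem : i ∉ univ.filter
              (fun j : Fin n => D - m ≤ (j : ℕ) ∧ (j : ℕ) < D) := by
            simp only [Finset.mem_filter, Finset.mem_univ, true_and, hi, not_and]
            omega
          rw [hins, Finset.prod_insert hnotmem, ← hC]
          calc ‖f w‖ = ‖g (y i)‖ := by rw [hgw]
            _ ≤ C / rho p (cc p z D) i * ‖y i‖ := hgyi
            _ = ‖y i‖ / rho p (cc p z D) i * C := by ring
      -- apply the induction at the point y
      have h0 := key D le_rfl y hyρ (fun j _ => rfl)
      have hfe : univ.filter (fun j : Fin n => D - D ≤ (j : ℕ) ∧ (j : ℕ) < D)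
          = univ.filter (fun j : Fin n => (j : ℕ) < D) := by
        ext j
        simp only [Finset.mem_filter, Finset.mem_univ, true_and]
        omega
      rw [hfe] at h0
      have hle2 : ∏ j ∈ univ.filter (fun j : Fin n => (j : ℕ) < D),
          (‖y j‖ / rho p (cc p z D) j)
          ≤ ∏ j ∈ univ.filter (fun j : Fin n => (j : ℕ) < D),
            (‖z j‖ / rho p (cc p z D) j) := by
        refine Finset.prod_le_prod (fun j _ => ?_) (fun j _ => ?_)
        · exact div_nonneg (norm_nonneg _) (hρ_pos j).le
        · exact (div_le_div_iff_of_pos_right (hρ_pos j)).mpr (hyle j)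
      rw [hRR]
      calc ‖f y‖ ≤ _ := h0
        _ ≤ _ := hle2
    -- limiting argument t → 1⁻
    have hcont : ContinuousWithinAt f (ellipsoid p) z :=
      hf_d.continuousOn.continuousWithinAt hz
    have hmemIoo : Set.Ioo (0 : ℝ) 1 ∈ nhdsWithin (1 : ℝ) (Set.Iio 1) :=
      Ioo_mem_nhdsLT_of_mem (by constructor <;> norm_num)
    have hφ : Filter.Tendsto (fun t : ℝ => fun j => (t : ℂ) * z j)
        (nhdsWithin (1 : ℝ) (Set.Iio 1)) (nhdsWithin z (ellipsoid p)) := by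
      apply tendsto_nhdsWithin_of_tendsto_nhds_of_eventually_within
      · have hc : Continuous (fun t : ℝ => fun j : Fin n => (t : ℂ) * z j) :=
          continuous_pi fun j => (Complex.continuous_ofReal.mul continuous_const)
        have h1 := hc.tendsto 1
        have h2 : (fun j : Fin n => ((1 : ℝ) : ℂ) * z j) = z := by
          funext j; simp
        rw [h2] at h1
        exact h1.mono_left nhdsWithin_le_nhds
      · filter_upwards [hmemIoo] with t ht
        show ∑ j, ‖(t : ℂ) * z j‖ ^ (2 * p j) < 1
        refine lt_of_le_of_lt (Finset.sum_le_sum fun j _ => ?_) hzsum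
        rw [norm_mul, Complex.norm_real, Real.norm_eq_abs,
          Real.mul_rpow (abs_nonneg t) (norm_nonneg _)]
        have h1 : |t| ^ (2 * p j) ≤ 1 :=
          Real.rpow_le_one (abs_nonneg t)
            (by rw [abs_of_pos ht.1]; exact ht.2.le) (by have := hp j; positivity)
        exact mul_le_of_le_one_left (habs_nn z j) h1
    have hT : Filter.Tendsto (fun t : ℝ => ‖f (fun j => (t : ℂ) * z j)‖)
        (nhdsWithin (1 : ℝ) (Set.Iio 1)) (nhds (‖f z‖)) :=
      (continuous_norm.tendsto _).comp (hcont.tendsto.comp hφ)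
    refine le_of_tendsto hT ?_
    filter_upwards [hmemIoo] with t ht using hfinal t ht
  refine ⟨hmain, Real.sSup_le ?_ hRR_nonneg⟩
  rintro x ⟨f, hfd, hflt, hf0, rfl⟩
  exact hmain f hfd hflt hf0
end

section
/- Let n ≥ 2, p_1,…,p_n > 0, k = n, and let z ∈ 𝔼 be such that (p_j|z_j|^{2p_j})_{j=1}^n is monotonically increasing and such that d = n (i.e. 2p_n|z_n|^{2p_n} ≤ c_n(z)). Then m_𝔼(A,z) = R(z); in fact the function f(ζ) := Π_{j=1}^n ζ_j (2p_j/c_n(z))^{1/(2p_j)} is holomorphic on 𝔼, satisfies |f| < 1 on 𝔼, vanishes on A, and |f(z)| = R(z). -/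
open Finset

lemma schwarz_one {φ : ℂ → ℂ} (hd : DifferentiableOn ℂ φ (Metric.ball 0 1))
    (hb : ∀ u ∈ Metric.ball (0:ℂ) 1, ‖φ u‖ ≤ 1) (h0 : φ 0 = 0)
    {u : ℂ} (hu : ‖u‖ < 1) : ‖φ u‖ ≤ ‖u‖ := by
  refine le_of_forall_pos_le_add fun ε hε => ?_
  have hmaps : Set.MapsTo φ (Metric.ball 0 1) (Metric.ball (φ 0) (1 + ε)) := by
    intro x hx
    rw [h0, Metric.mem_ball, dist_zero_right]
    calc ‖φ x‖ ≤ 1 := hb x hx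
      _ < 1 + ε := by linarith
  have h := Complex.dist_le_div_mul_dist_of_mapsTo_ball hd (hmaps.mono_right Metric.ball_subset_closedBall)
    (mem_ball_zero_iff.2 (by simpa using hu))
  rw [h0, dist_zero_right, dist_zero_right, div_one] at h
  have habs : ‖φ u‖ = ‖φ u‖ := rfl
  have habs2 : ‖u‖ = ‖u‖ := rfl
  rw [habs, habs2] at h
  nlinarith [norm_nonneg u, norm_nonneg (φ u)]

/-- The case `k = n`, `d = n`: the explicit product function is extremal and
`m_𝔼(A,z) = R(z)`. -/
theorem stmt2 (n : ℕ) (hn : 2 ≤ n)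
    (p : Fin n → ℝ) (hp : ∀ j, 0 < p j)
    (z : Fin n → ℂ) (hz : z ∈ ellipsoid p) (hmon : monIncr p z n)
    (hd : dd p z n = n)
    (hdi : 2 * p ⟨n - 1, by omega⟩ *
        ‖z ⟨n - 1, by omega⟩‖ ^ (2 * p ⟨n - 1, by omega⟩) ≤ cc p z n)
    (f : (Fin n → ℂ) → ℂ)
    (hf : f = fun ζ => ∏ j, ζ j * (((2 * p j / cc p z n) ^ (2 * p j)⁻¹ : ℝ) : ℂ)) :
    mob (ellipsoid p) (zeroSet p n) z = RR p z n ∧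
      DifferentiableOn ℂ f (ellipsoid p) ∧
      (∀ w ∈ ellipsoid p, ‖f w‖ < 1) ∧
      (∀ w ∈ zeroSet p n, f w = 0) ∧
      ‖f z‖ = RR p z n := by
  have hp2 : ∀ j, (0:ℝ) < 2 * p j := fun j => by have := hp j; linarith
  have hfiltn : univ.filter (fun j : Fin n => (j:ℕ) < n) = (univ : Finset (Fin n)) := by
    ext j; simp [j.isLt]
  have hne : (univ : Finset (Fin n)).Nonempty := ⟨⟨0, by omega⟩, mem_univ _⟩
  set q := qq p n with hqdef
  have hqsum : q = ∑ j, (2 * p j)⁻¹ := by rw [hqdef, qq, hfiltn]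
  have hq0 : 0 < q := by
    rw [hqsum]
    exact Finset.sum_pos (fun j _ => by have := hp2 j; positivity) hne
  have hcc : cc p z n = q⁻¹ := by
    have he : univ.filter (fun j : Fin n => n ≤ (j:ℕ)) = (∅ : Finset (Fin n)) := by
      ext j; simp
    rw [cc, rr, he, Finset.sum_empty, sub_zero, one_div]
  -- the optimal radii
  set w : Fin n → ℝ := fun j => ((2 * p j * q)⁻¹) ^ ((2 * p j)⁻¹ : ℝ) with hwdef
  have hw0 : ∀ j, 0 < w j := fun j =>
    Real.rpow_pos_of_pos (by have := hp2 j; positivity) _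
  have hwp : ∀ j, w j ^ (2 * p j) = (2 * p j * q)⁻¹ := fun j =>
    Real.rpow_inv_rpow (by have := hp2 j; positivity) (hp2 j).ne'
  have hwinv : ∀ j, (w j)⁻¹ = (2 * p j * q) ^ ((2 * p j)⁻¹ : ℝ) := by
    intro j
    show (((2 * p j * q)⁻¹ : ℝ) ^ ((2 * p j)⁻¹ : ℝ))⁻¹ = _
    rw [Real.inv_rpow (mul_pos (hp2 j) hq0).le, inv_inv]
  have hxw : ∀ j, ((2 * p j / cc p z n) ^ ((2 * p j)⁻¹ : ℝ) : ℝ) = (w j)⁻¹ := by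
    intro j
    rw [hcc, hwinv]
    congr 1
    field_simp
  have hsumw : ∑ j, w j ^ (2 * p j) = 1 := by
    have : ∀ j : Fin n, w j ^ (2 * p j) = (2 * p j)⁻¹ * q⁻¹ := by
      intro j; rw [hwp j, mul_inv]
    rw [Finset.sum_congr rfl fun j _ => this j, ← Finset.sum_mul, ← hqsum,
      mul_inv_cancel₀ hq0.ne']
  -- scaled polydisc maps into the ellipsoid
  have hmaps : ∀ μ : Fin n → ℂ, (∀ j, ‖μ j‖ < 1) →
      (fun j => (w j : ℂ) * μ j) ∈ ellipsoid p := by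
    intro μ hμ
    have habs : ∀ j, ‖(w j : ℂ) * μ j‖ = w j * ‖μ j‖ := by
      intro j; rw [norm_mul, Complex.norm_real, Real.norm_eq_abs, abs_of_pos (hw0 j)]
    show ∑ j, ‖(w j : ℂ) * μ j‖ ^ (2 * p j) < 1
    have hlt : ∑ j, ‖(w j : ℂ) * μ j‖ ^ (2 * p j) < ∑ j, w j ^ (2 * p j) := by
      apply Finset.sum_lt_sum_of_nonempty hne
      intro j _
      rw [habs j, Real.mul_rpow (hw0 j).le (norm_nonneg _)]
      have h1 : ‖μ j‖ ^ (2 * p j) < 1 :=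
        Real.rpow_lt_one (norm_nonneg _) (hμ j) (hp2 j)
      have h2 := Real.rpow_pos_of_pos (hw0 j) (2 * p j)
      nlinarith
    rw [hsumw] at hlt; exact hlt
  -- |f| formula
  have hfabs : ∀ ζ : Fin n → ℂ, ‖f ζ‖ = ∏ j, ‖ζ j‖ * (w j)⁻¹ := by
    intro ζ
    rw [hf]
    simp only
    rw [norm_prod]
    refine Finset.prod_congr rfl fun j _ => ?_
    rw [norm_mul, Complex.norm_real, Real.norm_eq_abs, hxw j, abs_of_pos (inv_pos.2 (hw0 j))]
  -- AM-GM bound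
  have hAMGM : ∀ ζ : Fin n → ℂ, ζ ∈ ellipsoid p →
      ∏ j, ‖ζ j‖ * (w j)⁻¹ < 1 := by
    intro ζ hζ
    set α : Fin n → ℝ := fun j => (2 * p j * q)⁻¹ with hα
    have hα0 : ∀ j, 0 < α j := fun j => by
      have := hp2 j; have := hq0; positivity
    have hαsum : ∑ j, α j = 1 := by
      have : ∀ j : Fin n, α j = (2 * p j)⁻¹ * q⁻¹ := fun j => mul_inv _ _
      rw [Finset.sum_congr rfl fun j _ => this j, ← Finset.sum_mul, ← hqsum,
        mul_inv_cancel₀ hq0.ne']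
    set t : Fin n → ℝ := fun j => ‖ζ j‖ ^ (2 * p j) with ht
    have ht0 : ∀ j, 0 ≤ t j := fun j => Real.rpow_nonneg (norm_nonneg _) _
    have hS1 : ∑ j, t j < 1 := hζ
    have hS0 : (0:ℝ) ≤ ∑ j, t j := Finset.sum_nonneg fun j _ => ht0 j
    have hterm : ∀ j, ‖ζ j‖ * (w j)⁻¹ = ((t j / α j) ^ (α j)) ^ q := by
      intro j
      rw [← Real.rpow_mul (div_nonneg (ht0 j) (hα0 j).le)]
      have hαq : α j * q = (2 * p j)⁻¹ := by
        have : α j = (2 * p j)⁻¹ * q⁻¹ := mul_inv _ _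
        rw [this, mul_assoc, inv_mul_cancel₀ hq0.ne', mul_one]
      rw [hαq, Real.div_rpow (ht0 j) (hα0 j).le]
      have h1 : t j ^ ((2 * p j)⁻¹ : ℝ) = ‖ζ j‖ :=
        Real.rpow_rpow_inv (norm_nonneg _) (hp2 j).ne'
      have h2 : α j ^ ((2 * p j)⁻¹ : ℝ) = w j := rfl
      rw [h1, h2, div_eq_mul_inv]
    have hgm := Real.geom_mean_le_arith_mean_weighted univ α (fun j => t j / α j)
      (fun i _ => (hα0 i).le) hαsum (fun i _ => div_nonneg (ht0 i) (hα0 i).le)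
    have hsum : ∑ i, α i * (t i / α i) = ∑ i, t i := by
      refine Finset.sum_congr rfl fun i _ => ?_
      rw [← mul_div_assoc, mul_comm, mul_div_assoc, div_self (hα0 i).ne', mul_one]
    rw [hsum] at hgm
    calc ∏ j, ‖ζ j‖ * (w j)⁻¹ = ∏ j, ((t j / α j) ^ (α j)) ^ q := by
          exact Finset.prod_congr rfl fun j _ => hterm j
      _ = (∏ j, (t j / α j) ^ (α j)) ^ q := by
          exact Real.finset_prod_rpow _ _
            (fun i _ => Real.rpow_nonneg (div_nonneg (ht0 i) (hα0 i).le) _) _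
      _ ≤ (∑ j, t j) ^ q := by
          refine Real.rpow_le_rpow ?_ hgm hq0.le
          exact Finset.prod_nonneg fun i _ =>
            Real.rpow_nonneg (div_nonneg (ht0 i) (hα0 i).le) _
      _ < 1 := Real.rpow_lt_one hS0 hS1 hq0
  -- |z j| ≤ w j
  have hzw : ∀ j, ‖z j‖ ≤ w j := by
    intro j
    have hlast : ((⟨n - 1, by omega⟩ : Fin n) : ℕ) < n := by simp; omega
    have hjle : j ≤ (⟨n - 1, by omega⟩ : Fin n) := by
      rw [Fin.le_def]; have := j.isLt; simp; omega
    have h1 := hmon j ⟨n - 1, by omega⟩ hlast hjle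
    have h2 : 2 * p j * ‖z j‖ ^ (2 * p j) ≤ q⁻¹ := by
      rw [← hcc]
      calc 2 * p j * ‖z j‖ ^ (2 * p j)
          ≤ 2 * p ⟨n - 1, by omega⟩ *
            ‖z ⟨n - 1, by omega⟩‖ ^ (2 * p ⟨n - 1, by omega⟩) := by nlinarith
        _ ≤ cc p z n := hdi
    have h3 : ‖z j‖ ^ (2 * p j) ≤ (2 * p j * q)⁻¹ := by
      rw [mul_inv]
      exact (le_inv_mul_iff₀ (hp2 j)).2 h2
    by_contra hcon
    push_neg at hcon
    have hlt := Real.rpow_lt_rpow (hw0 j).le hcon (hp2 j)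
    rw [hwp j] at hlt
    linarith
  -- iterated Schwarz lemma on the scaled polydisc
  have key : ∀ g : (Fin n → ℂ) → ℂ, DifferentiableOn ℂ g (ellipsoid p) →
      (∀ ζ ∈ ellipsoid p, ‖g ζ‖ < 1) →
      (∀ ζ ∈ zeroSet p n, g ζ = 0) →
      ∀ m : ℕ, m ≤ n → ∀ μ : Fin n → ℂ, (∀ j, ‖μ j‖ < 1) →
        ‖g fun j => (w j : ℂ) * μ j‖ ≤
          ∏ j ∈ univ.filter (fun j : Fin n => (j:ℕ) < m), ‖μ j‖ := by
    intro g hg hgb hg0 m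
    induction m with
    | zero =>
      intro _ μ hμ
      have : univ.filter (fun j : Fin n => (j:ℕ) < 0) = (∅ : Finset (Fin n)) := by
        ext j; simp
      rw [this, Finset.prod_empty]
      exact (hgb _ (hmaps μ hμ)).le
    | succ m ih =>
      intro hm μ hμ
      have hm' : m < n := by omega
      set i : Fin n := ⟨m, hm'⟩ with hidef
      have hfilter : univ.filter (fun j : Fin n => (j:ℕ) < m + 1)
          = insert i (univ.filter (fun j : Fin n => (j:ℕ) < m)) := by
        ext j
        simp only [mem_filter, mem_univ, true_and, mem_insert, hidef, Fin.ext_iff]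
        omega
      have hinot : i ∉ univ.filter (fun j : Fin n => (j:ℕ) < m) := by
        simp [hidef]
      rw [hfilter, Finset.prod_insert hinot]
      by_cases hzero : ∃ j ∈ univ.filter (fun j : Fin n => (j:ℕ) < m), μ j = 0
      · obtain ⟨j0, hj0, hj0z⟩ := hzero
        have hj0n : j0 ∈ univ.filter (fun j : Fin n => (j:ℕ) < n) := by
          simp only [mem_filter, mem_univ, true_and] at hj0 ⊢; omega
        have hgz : g (fun j => (w j : ℂ) * μ j) = 0 := by
          refine hg0 _ ⟨hmaps μ hμ, ?_⟩
          exact Finset.prod_eq_zero hj0n (by rw [hj0z, mul_zero])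
        rw [hgz, norm_zero]
        have : (0:ℝ) ≤ ∏ j ∈ univ.filter (fun j : Fin n => (j:ℕ) < m),
            ‖μ j‖ := Finset.prod_nonneg fun _ _ => norm_nonneg _
        positivity
      · push_neg at hzero
        set P : ℂ := ∏ j ∈ univ.filter (fun j : Fin n => (j:ℕ) < m), μ j with hPdef
        have hPabs : ‖P‖ =
            ∏ j ∈ univ.filter (fun j : Fin n => (j:ℕ) < m), ‖μ j‖ :=
          norm_prod _ _
        have hP0 : P ≠ 0 := Finset.prod_ne_zero_iff.2 hzero
        have hPa0 : 0 < ‖P‖ := norm_pos_iff.2 hP0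
        set χ : ℂ → (Fin n → ℂ) := fun u j => (w j : ℂ) * (if j = i then u else μ j)
          with hχdef
        have hχsmall : ∀ u : ℂ, ‖u‖ < 1 →
            ∀ j, ‖if j = i then u else μ j‖ < 1 := by
          intro u hu j
          by_cases h : j = i <;> simp [h, hu, hμ j]
        have hχdiff : Differentiable ℂ χ := by
          rw [differentiable_pi]
          intro j
          by_cases h : j = i
          · simp only [hχdef, h, if_pos rfl]
            exact differentiable_id.const_mul _
          · simp only [hχdef, if_neg h]
            exact differentiable_const _
        set φ : ℂ → ℂ := fun u => g (χ u) / P with hφdef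
        have hφdiff : DifferentiableOn ℂ φ (Metric.ball 0 1) := by
          refine DifferentiableOn.div_const ?_ P
          refine hg.comp hχdiff.differentiableOn ?_
          intro u hu
          exact hmaps _ (hχsmall u (by simpa using mem_ball_zero_iff.1 hu))
        have hφ0 : φ 0 = 0 := by
          have hin : i ∈ univ.filter (fun j : Fin n => (j:ℕ) < n) := by
            simp only [mem_filter, mem_univ, true_and]; omega
          have : g (χ 0) = 0 := by
            refine hg0 _ ⟨hmaps _ (hχsmall 0 (by simp)), ?_⟩
            refine Finset.prod_eq_zero hin ?_
            simp [hχdef]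
          simp [hφdef, this]
        have hφle : ∀ u ∈ Metric.ball (0:ℂ) 1, ‖φ u‖ ≤ 1 := by
          intro u hu
          have hu1 : ‖u‖ < 1 := by simpa using mem_ball_zero_iff.1 hu
          have hih := ih (by omega) (fun j => if j = i then u else μ j) (hχsmall u hu1)
          have heq : ∏ j ∈ univ.filter (fun j : Fin n => (j:ℕ) < m),
              ‖if j = i then u else μ j‖ = ‖P‖ := by
            rw [hPabs]
            refine Finset.prod_congr rfl fun j hj => ?_
            have : j ≠ i := by
              simp only [mem_filter, mem_univ, true_and] at hj
              simp [hidef, Fin.ext_iff]; omega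
            rw [if_neg this]
          rw [heq] at hih
          rw [hφdef]
          simp only [norm_div]
          rw [div_le_one hPa0]
          exact hih
        have hsch := schwarz_one hφdiff hφle hφ0 (hμ i)
        have hχμ : χ (μ i) = fun j => (w j : ℂ) * μ j := by
          funext j
          by_cases h : j = i
          · subst h; simp [hχdef]
          · simp [hχdef, h]
        rw [hφdef] at hsch
        simp only [hχμ, norm_div] at hsch
        rw [div_le_iff₀ hPa0] at hsch
        calc ‖g fun j => (w j : ℂ) * μ j‖ ≤ ‖μ i‖ * ‖P‖ :=
              hsch
          _ = ‖μ i‖ * ∏ j ∈ univ.filter (fun j : Fin n => (j:ℕ) < m),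
              ‖μ j‖ := by rw [hPabs]
  -- upper bound for any competitor
  have hupper : ∀ g : (Fin n → ℂ) → ℂ, DifferentiableOn ℂ g (ellipsoid p) →
      (∀ ζ ∈ ellipsoid p, ‖g ζ‖ < 1) →
      (∀ ζ ∈ zeroSet p n, g ζ = 0) →
      ‖g z‖ ≤ ∏ j, ‖z j‖ * (w j)⁻¹ := by
    intro g hg hgb hg0
    set L : ℝ := ∏ j, ‖z j‖ * (w j)⁻¹ with hL
    have hseg : ∀ t : ℝ, t ∈ Set.Ioo (0:ℝ) 1 →
        ‖g fun j => (t:ℂ) * z j‖ ≤ L := by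
      intro t ht
      set μ : Fin n → ℂ := fun j => (t:ℂ) * z j * ((w j : ℂ))⁻¹ with hμdef
      have hμabs : ∀ j, ‖μ j‖ = t * ‖z j‖ * (w j)⁻¹ := by
        intro j
        rw [hμdef]
        simp only [norm_mul, norm_inv, Complex.norm_real, Real.norm_eq_abs, abs_of_pos (hw0 j),
          abs_of_pos ht.1]
      have hμ1 : ∀ j, ‖μ j‖ < 1 := by
        intro j
        rw [hμabs j]
        have h1 : ‖z j‖ * (w j)⁻¹ ≤ 1 := by
          rw [← div_eq_mul_inv, div_le_one (hw0 j)]; exact hzw j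
        have h2 : 0 ≤ ‖z j‖ * (w j)⁻¹ :=
          mul_nonneg (norm_nonneg _) (inv_pos.2 (hw0 j)).le
        nlinarith [ht.1, ht.2]
      have hkey := key g hg hgb hg0 n le_rfl μ hμ1
      have hwμ : (fun j => (w j : ℂ) * μ j) = fun j => (t:ℂ) * z j := by
        funext j
        rw [hμdef]
        have hwne : ((w j : ℝ) : ℂ) ≠ 0 := by exact_mod_cast (hw0 j).ne'
        field_simp
      rw [hwμ, hfiltn] at hkey
      refine hkey.trans ?_
      rw [hL]
      refine Finset.prod_le_prod (fun j _ => norm_nonneg _) fun j _ => ?_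
      rw [hμabs j]
      have h2 : 0 ≤ ‖z j‖ * (w j)⁻¹ :=
        mul_nonneg (norm_nonneg _) (inv_pos.2 (hw0 j)).le
      nlinarith [ht.1, ht.2]
    have hmem : ∀ t : ℝ, t ∈ Set.Ioo (0:ℝ) 1 →
        (fun j => (t:ℂ) * z j) ∈ ellipsoid p := by
      intro t ht
      show ∑ j, ‖(t:ℂ) * z j‖ ^ (2 * p j) < 1
      have hle : ∀ j : Fin n, ‖(t:ℂ) * z j‖ ^ (2 * p j) ≤
          ‖z j‖ ^ (2 * p j) := by
        intro j
        have : ‖(t:ℂ) * z j‖ = t * ‖z j‖ := by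
          rw [norm_mul, Complex.norm_real, Real.norm_eq_abs, abs_of_pos ht.1]
        rw [this]
        refine Real.rpow_le_rpow (mul_nonneg ht.1.le (norm_nonneg _)) ?_ (hp2 j).le
        nlinarith [ht.1, ht.2, norm_nonneg (z j)]
      calc ∑ j, ‖(t:ℂ) * z j‖ ^ (2 * p j)
          ≤ ∑ j, ‖z j‖ ^ (2 * p j) := Finset.sum_le_sum fun j _ => hle j
        _ < 1 := hz
    have hIoo : Set.Ioo (0:ℝ) 1 ∈ nhdsWithin (1:ℝ) (Set.Iio 1) :=
      Ioo_mem_nhdsLT_of_mem ⟨zero_lt_one, le_refl (1:ℝ)⟩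
    have htend1 : Filter.Tendsto (fun t : ℝ => (fun j => (t:ℂ) * z j))
        (nhdsWithin (1:ℝ) (Set.Iio 1)) (nhdsWithin z (ellipsoid p)) := by
      rw [tendsto_nhdsWithin_iff]
      constructor
      · have hc : Continuous (fun t : ℝ => (fun j => (t:ℂ) * z j)) :=
          continuous_pi fun j => Complex.continuous_ofReal.mul continuous_const
        have := hc.tendsto' 1 z (by funext j; simp)
        exact this.mono_left nhdsWithin_le_nhds
      · exact Filter.eventually_of_mem hIoo hmem
    have htendg : Filter.Tendsto (fun t : ℝ => ‖g fun j => (t:ℂ) * z j‖)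
        (nhdsWithin (1:ℝ) (Set.Iio 1)) (nhds (‖g z‖)) :=
      (continuous_norm.tendsto _).comp ((hg.continuousOn z hz).tendsto.comp htend1)
    exact le_of_tendsto htendg (Filter.eventually_of_mem hIoo hseg)
  -- identification of R(z)
  have hRR : RR p z n = ∏ j, ‖z j‖ * (w j)⁻¹ := by
    simp only [RR]
    rw [hd, hfiltn]
    exact Finset.prod_congr rfl fun j _ => by rw [hxw j]
  -- f is a competitor
  have hfdiff : DifferentiableOn ℂ f (ellipsoid p) := by
    rw [hf]
    apply Differentiable.differentiableOn
    have hgen : ∀ s : Finset (Fin n), Differentiable ℂ fun ζ : Fin n → ℂ =>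
        ∏ j ∈ s, (ζ j * (((2 * p j / cc p z n) ^ ((2 * p j)⁻¹ : ℝ) : ℝ) : ℂ)) := by
      intro s
      induction s using Finset.induction with
      | empty => simp only [Finset.prod_empty]; exact differentiable_const (1:ℂ)
      | insert _ _ hnotmem ih =>
        simp only [Finset.prod_insert hnotmem]
        exact (((ContinuousLinearMap.proj _).differentiable).mul_const _).mul ih
    exact hgen univ
  have hflt : ∀ ζ ∈ ellipsoid p, ‖f ζ‖ < 1 := by
    intro ζ hζ
    rw [hfabs ζ]
    exact hAMGM ζ hζ
  have hfzero : ∀ ζ ∈ zeroSet p n, f ζ = 0 := by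
    intro ζ hζ
    obtain ⟨-, hprod⟩ := hζ
    rw [hfiltn] at hprod
    obtain ⟨j, -, hj⟩ := Finset.prod_eq_zero_iff.1 hprod
    rw [hf]
    exact Finset.prod_eq_zero (mem_univ j) (by rw [hj, zero_mul])
  have hfz : ‖f z‖ = RR p z n := by rw [hfabs z, hRR]
  have hGreatest : IsGreatest {x : ℝ | ∃ g : (Fin n → ℂ) → ℂ,
      DifferentiableOn ℂ g (ellipsoid p) ∧
      (∀ w ∈ ellipsoid p, ‖g w‖ < 1) ∧ (∀ w ∈ zeroSet p n, g w = 0) ∧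
      x = ‖g z‖} (RR p z n) := by
    constructor
    · exact ⟨f, hfdiff, hflt, hfzero, hfz.symm⟩
    · rintro x ⟨g, hg1, hg2, hg3, rfl⟩
      rw [hRR]
      exact hupper g hg1 hg2 hg3
  exact ⟨hGreatest.csSup_eq, hfdiff, hflt, hfzero, hfz⟩
end

section
/- (Theorem 1(c), Möbius part.) Let n = 2, k = 1, p_1 > 0, and p_2 ≥ 1/2. Then for every z ∈ 𝔼, m_𝔼(A,z) = R(z). -/
open Finset

section Helpers
open Real


lemma bern {r α : ℝ} (hr : 0 ≤ r) (hα : 1 ≤ α) : 1 + α * (r - 1) ≤ r ^ α := by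
  have := one_add_mul_self_le_rpow_one_add (s := r - 1) (by linarith) hα
  simpa using this

lemma one_sub_rpow_pos {r α : ℝ} (hα : 1 ≤ α) (hr0 : 0 ≤ r) (hr1 : r < 1) : 0 < 1 - r ^ α := by
  have := rpow_lt_one hr0 hr1 (by linarith : (0:ℝ) < α)
  linarith

section
variable {α a : ℝ} (hα : 1 ≤ α) (ha0 : 0 < a) (ha1 : a < 1)

include hα ha0 ha1 in
lemma beta_pos : 0 < α * (a ^ (α-1) * (1-a)) / (1 - a ^ α) := by
  have h1 := one_sub_rpow_pos hα ha0.le ha1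
  have h2 : 0 < a ^ (α - 1) := rpow_pos_of_pos ha0 _
  have h3 : (0:ℝ) < α := by linarith
  apply div_pos _ h1
  have h4 : 0 < a ^ (α - 1) * (1 - a) := mul_pos h2 (by linarith)
  exact mul_pos h3 h4

include hα ha0 ha1 in
lemma beta_le_one : α * (a ^ (α-1) * (1-a)) / (1 - a ^ α) ≤ 1 := by
  have h1 := one_sub_rpow_pos hα ha0.le ha1
  rw [div_le_one h1]
  have hB : 1 + α * (1/a - 1) ≤ (1/a) ^ α := bern (by positivity) hα
  have h3 : (0:ℝ) < a ^ α := rpow_pos_of_pos ha0 _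
  have hB' : (1 + α * (1/a - 1)) * a ^ α ≤ 1 := by
    calc (1 + α * (1/a - 1)) * a ^ α ≤ (1/a) ^ α * a ^ α := by nlinarith [hB]
    _ = 1 := by
        rw [← Real.mul_rpow (by positivity) ha0.le, one_div_mul_cancel ha0.ne', Real.one_rpow]
  have e : a ^ α = a ^ (α-1) * a := by
    rw [← Real.rpow_add_one ha0.ne' (α-1)]; ring_nf
  rw [e] at hB' ⊢
  have hia : 1/a * a = 1 := one_div_mul_cancel ha0.ne'
  nlinarith [rpow_pos_of_pos ha0 (α-1)]
end

lemma psi_mono {α : ℝ} (hα : 1 ≤ α) :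
    MonotoneOn (fun r : ℝ => α * (r ^ (α - 1) * (1 - r)) / (1 - r ^ α)) (Set.Ioo 0 1) := by
  have hconv : Convex ℝ (Set.Ioo (0:ℝ) 1) := convex_Ioo 0 1
  have hder : ∀ r ∈ Set.Ioo (0:ℝ) 1, HasDerivAt
      (fun r : ℝ => α * (r ^ (α - 1) * (1 - r)) / (1 - r ^ α))
      ((α * ((α - 1) * r ^ (α - 1 - 1) * (1 - r) + r ^ (α - 1) * (-1)) * (1 - r ^ α)
        - α * (r ^ (α - 1) * (1 - r)) * (-(α * r ^ (α - 1)))) / (1 - r ^ α) ^ 2) r := by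
    intro r hr
    obtain ⟨hr0, hr1⟩ := hr
    have hra : r ^ α < 1 := rpow_lt_one hr0.le hr1 (by linarith)
    have h1 : HasDerivAt (fun r : ℝ => r ^ (α - 1)) ((α - 1) * r ^ (α - 1 - 1)) r :=
      Real.hasDerivAt_rpow_const (Or.inl hr0.ne')
    have h2 : HasDerivAt (fun r : ℝ => 1 - r) (-1) r := by
      simpa using (hasDerivAt_id r).const_sub 1
    have h3 : HasDerivAt (fun r : ℝ => 1 - r ^ α) (-(α * r ^ (α - 1))) r := by
      simpa using (Real.hasDerivAt_rpow_const (x := r) (p := α) (Or.inl hr0.ne')).const_sub 1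
    exact ((h1.mul h2).const_mul α).div h3 (by nlinarith)
  apply monotoneOn_of_deriv_nonneg hconv
  · exact fun r hr => ((hder r (by simpa using hr)).continuousAt).continuousWithinAt
  · intro r hr
    rw [interior_Ioo] at hr
    exact (hder r hr).differentiableAt.differentiableWithinAt
  · intro r hr
    rw [interior_Ioo] at hr
    obtain ⟨hr0, hr1⟩ := hr
    rw [(hder r ⟨hr0, hr1⟩).deriv]
    have hra : r ^ α < 1 := rpow_lt_one hr0.le hr1 (by linarith)
    have hu : (0:ℝ) ≤ r ^ (α - 1 - 1) := rpow_nonneg hr0.le _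
    have e1 : r ^ (α - 1) = r ^ (α - 1 - 1) * r := by
      rw [← Real.rpow_add_one hr0.ne' (α - 1 - 1)]; ring_nf
    have e2 : r ^ α = r ^ (α - 1 - 1) * r ^ 2 := by
      rw [← Real.rpow_natCast r 2, ← Real.rpow_add hr0 (α - 1 - 1)]; norm_num; ring_nf
    have hB : 1 + α * (r - 1) ≤ r ^ α := bern hr0.le hα
    apply div_nonneg _ (by positivity)
    have e3 : (α * ((α - 1) * r ^ (α - 1 - 1) * (1 - r) + r ^ (α - 1) * (-1)) * (1 - r ^ α)
        - α * (r ^ (α - 1) * (1 - r)) * (-(α * r ^ (α - 1))))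
        = α * r ^ (α - 1 - 1) * ((α - 1) - α * r + r ^ α) := by
      rw [e1]; rw [e2]; ring
    rw [e3]
    have h5 : (0:ℝ) ≤ (α - 1) - α * r + r ^ α := by nlinarith
    positivity

section
variable {α a : ℝ} (hα : 1 ≤ α) (ha0 : 0 < a) (ha1 : a < 1)

include hα ha0 ha1 in
lemma h_le_h_a {r : ℝ} (hr0 : 0 ≤ r) (hr1 : r < 1) :
    Real.log (1 - r ^ α) - (α * (a ^ (α-1) * (1-a)) / (1 - a ^ α)) * Real.log (1 - r)
      ≤ Real.log (1 - a ^ α) - (α * (a ^ (α-1) * (1-a)) / (1 - a ^ α)) * Real.log (1 - a) := by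
  set β := α * (a ^ (α-1) * (1-a)) / (1 - a ^ α) with hβ
  set h : ℝ → ℝ := fun r => Real.log (1 - r ^ α) - β * Real.log (1 - r) with hh
  have hder : ∀ r ∈ Set.Ioo (0:ℝ) 1, HasDerivAt h
      ((-(α * r ^ (α-1))) / (1 - r ^ α) - β * (-1 / (1 - r))) r := by
    intro r hr
    obtain ⟨hr0', hr1'⟩ := hr
    have hP := one_sub_rpow_pos hα hr0'.le hr1'
    have h3 : HasDerivAt (fun r : ℝ => 1 - r ^ α) (-(α * r ^ (α-1))) r := by
      simpa using (Real.hasDerivAt_rpow_const (x := r) (p := α) (Or.inl hr0'.ne')).const_sub 1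
    have h4 : HasDerivAt (fun r : ℝ => 1 - r) (-1) r := by
      simpa using (hasDerivAt_id r).const_sub 1
    exact (h3.log hP.ne').sub ((h4.log (by linarith)).const_mul β)
  have hsign : ∀ r : ℝ, 0 < r → r < 1 → 0 < 1 - r ^ α → 0 < 1 - r →
      (-(α * r ^ (α-1))) / (1 - r ^ α) - β * (-1 / (1 - r))
        = (β * (1 - r ^ α) - α * (r ^ (α-1) * (1-r))) / ((1-r) * (1 - r ^ α)) := by
    intro r hr0' hr1' hP h1r
    field_simp
    ring
  rcases le_total r a with hra | har
  · have hmono : MonotoneOn h (Set.Icc 0 a) := by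
      apply monotoneOn_of_deriv_nonneg (convex_Icc 0 a)
      · have c1 : ContinuousOn (fun r : ℝ => 1 - r ^ α) (Set.Icc 0 a) :=
          continuousOn_const.sub (fun x _ =>
            (Real.continuousAt_rpow_const x α (Or.inr (by linarith))).continuousWithinAt)
        have c2 : ContinuousOn (fun r : ℝ => 1 - r) (Set.Icc 0 a) :=
          (continuous_const.sub continuous_id).continuousOn
        exact (c1.log (fun x hx =>
            (one_sub_rpow_pos hα hx.1 (lt_of_le_of_lt hx.2 ha1)).ne')).sub
          ((continuousOn_const.mul (c2.log (fun x hx => by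
              have hxx : x < 1 := lt_of_le_of_lt hx.2 ha1
              exact (by linarith : (0:ℝ) < 1 - x).ne'))))
      · intro x hx
        rw [interior_Icc] at hx
        exact (hder x ⟨hx.1, lt_trans hx.2 ha1⟩).differentiableAt.differentiableWithinAt
      · intro x hx
        rw [interior_Icc] at hx
        obtain ⟨hx0, hxa⟩ := hx
        have hx1 : x < 1 := lt_trans hxa ha1
        have hP := one_sub_rpow_pos hα hx0.le hx1
        have h1x : 0 < 1 - x := by linarith
        rw [(hder x ⟨hx0, hx1⟩).deriv, hsign x hx0 hx1 hP h1x]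
        have hkey : α * (x ^ (α-1) * (1-x)) / (1 - x ^ α) ≤ β :=
          psi_mono hα ⟨hx0, hx1⟩ ⟨ha0, ha1⟩ hxa.le
        have h5 : α * (x ^ (α-1) * (1-x)) ≤ β * (1 - x ^ α) := (div_le_iff₀ hP).mp hkey
        apply div_nonneg (by linarith) (by positivity)
    rcases eq_or_lt_of_le hr0 with hr0' | hr0'
    · rcases eq_or_lt_of_le hra with hra' | hra'
      · simp [hra']
      · exact hmono (Set.mem_Icc.mpr ⟨hr0, hra⟩) (Set.mem_Icc.mpr ⟨ha0.le, le_refl a⟩) hra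
    · exact hmono (Set.mem_Icc.mpr ⟨hr0, hra⟩) (Set.mem_Icc.mpr ⟨ha0.le, le_refl a⟩) hra
  · have hanti : AntitoneOn h (Set.Ico a 1) := by
      apply antitoneOn_of_deriv_nonpos (convex_Ico a 1)
      · exact fun x hx => ((hder x ⟨lt_of_lt_of_le ha0 hx.1, hx.2⟩).continuousAt).continuousWithinAt
      · intro x hx
        rw [interior_Ico] at hx
        exact (hder x ⟨lt_trans ha0 hx.1, hx.2⟩).differentiableAt.differentiableWithinAt
      · intro x hx
        rw [interior_Ico] at hx
        obtain ⟨hxa, hx1⟩ := hx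
        have hx0 : 0 < x := lt_trans ha0 hxa
        have hP := one_sub_rpow_pos hα hx0.le hx1
        have h1x : 0 < 1 - x := by linarith
        rw [(hder x ⟨hx0, hx1⟩).deriv, hsign x hx0 hx1 hP h1x]
        have hkey : β ≤ α * (x ^ (α-1) * (1-x)) / (1 - x ^ α) :=
          psi_mono hα ⟨ha0, ha1⟩ ⟨hx0, hx1⟩ hxa.le
        have h5 : β * (1 - x ^ α) ≤ α * (x ^ (α-1) * (1-x)) := (le_div_iff₀ hP).mp hkey
        apply div_nonpos_of_nonpos_of_nonneg (by linarith) (by positivity)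
    exact hanti (Set.mem_Ico.mpr ⟨le_refl a, ha1⟩) (Set.mem_Ico.mpr ⟨har, hr1⟩) har

include hα ha0 ha1 in
lemma key_ineq {r : ℝ} (hr0 : 0 ≤ r) (hr1 : r < 1) :
    (1-a) ^ (α * (a ^ (α-1) * (1-a)) / (1 - a ^ α)) * (1 - r ^ α)
      ≤ (1 - a ^ α) * (1-r) ^ (α * (a ^ (α-1) * (1-a)) / (1 - a ^ α)) := by
  set β := α * (a ^ (α-1) * (1-a)) / (1 - a ^ α) with hβ
  have h := h_le_h_a hα ha0 ha1 hr0 hr1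
  have hP := one_sub_rpow_pos hα hr0 hr1
  have hA := one_sub_rpow_pos hα ha0.le ha1
  have h1r : 0 < 1 - r := by linarith
  have h1a : 0 < 1 - a := by linarith
  have h2 : Real.log (1 - r ^ α) + β * Real.log (1 - a)
      ≤ Real.log (1 - a ^ α) + β * Real.log (1 - r) := by linarith
  have h3 := Real.exp_le_exp.mpr h2
  rw [Real.exp_add, Real.exp_add, Real.exp_log hP, Real.exp_log hA] at h3
  rw [show β * Real.log (1-a) = Real.log (1-a) * β by ring,
    show β * Real.log (1-r) = Real.log (1-r) * β by ring,
    ← Real.rpow_def_of_pos h1a, ← Real.rpow_def_of_pos h1r] at h3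
  linarith
end

lemma mem_ellipsoid_iff (p : Fin 2 → ℝ) (z : Fin 2 → ℂ) :
    z ∈ ellipsoid p ↔
      ‖z 0‖ ^ (2 * p 0) + ‖z 1‖ ^ (2 * p 1) < 1 := by
  simp [ellipsoid, Fin.sum_univ_two]

lemma filter_lt_one : (univ.filter (fun j : Fin 2 => (j : ℕ) < 1)) = {0} := by decide

lemma lt_one_of_rpow_lt_one {x P : ℝ} (hx : 0 ≤ x) (h : x ^ P < 1) (hP : 0 < P) : x < 1 := by
  by_contra hc
  push_neg at hc
  have : (1:ℝ) = 1 ^ P := (Real.one_rpow P).symm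
  nlinarith [Real.rpow_le_rpow zero_le_one hc hP.le]


lemma extremal (p : Fin 2 → ℝ) (hp : ∀ j, 0 < p j) (hp2 : (1:ℝ)/2 ≤ p 1)
    (z : Fin 2 → ℂ) (hz : z ∈ ellipsoid p) :
    ∃ f : (Fin 2 → ℂ) → ℂ, DifferentiableOn ℂ f (ellipsoid p) ∧
      (∀ w ∈ ellipsoid p, ‖f w‖ < 1) ∧
      (∀ w ∈ zeroSet p 1, f w = 0) ∧
      ‖z 0‖ * ((1 - ‖z 1‖ ^ (2 * p 1))⁻¹) ^ (2 * p 0)⁻¹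
        = ‖f z‖ := by
  have hP : (0:ℝ) < 2 * p 0 := by have := hp 0; linarith
  have hα1 : (1:ℝ) ≤ 2 * p 1 := by linarith
  have hα : (0:ℝ) < 2 * p 1 := by linarith
  set P := 2 * p 0
  set α := 2 * p 1 with hαdef
  by_cases hz1 : z 1 = 0
  · -- simple case: f w = w 0
    refine ⟨fun w => w 0, ?_, ?_, ?_, ?_⟩
    · exact fun w _ => ((ContinuousLinearMap.proj 0 : (Fin 2 → ℂ) →L[ℂ] ℂ).differentiable
        |>.differentiableAt.differentiableWithinAt)
    · intro w hw
      rw [mem_ellipsoid_iff] at hw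
      have h1 : (0:ℝ) ≤ ‖w 1‖ ^ α := Real.rpow_nonneg (norm_nonneg _) _
      exact lt_one_of_rpow_lt_one (norm_nonneg _) (by linarith) hP
    · intro w hw
      obtain ⟨-, hw2⟩ := hw
      rwa [filter_lt_one, prod_singleton] at hw2
    · rw [hz1]
      simp [Real.zero_rpow hα.ne']
  · -- main case
    set a := ‖z 1‖ with hadef
    have ha0 : 0 < a := norm_pos_iff.mpr hz1
    have hzE := (mem_ellipsoid_iff p z).mp hz
    have hA1 : a ^ α < 1 := by
      have : (0:ℝ) ≤ ‖z 0‖ ^ P := Real.rpow_nonneg (norm_nonneg _) _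
      linarith
    have ha1 : a < 1 := lt_one_of_rpow_lt_one ha0.le hA1 hα
    have h1a : (0:ℝ) < 1 - a := by linarith
    have h1A : (0:ℝ) < 1 - a ^ α := by linarith
    set β := α * (a ^ (α-1) * (1-a)) / (1 - a ^ α) with hβdef
    have hβ0 : 0 < β := beta_pos hα1 ha0 ha1
    set γ : ℝ := -(β / P) with hγdef
    have hγP : -(β / P) * P = -β := by field_simp
    set C : ℝ := ((1-a) ^ β / (1 - a ^ α)) ^ P⁻¹ with hCdef
    have hC : 0 < C := Real.rpow_pos_of_pos (by positivity) _
    set B : (Fin 2 → ℂ) → ℂ := fun w => 1 - (starRingEnd ℂ) (z 1) * w 1 / (a:ℂ) with hBdef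
    have hBabs : ∀ w : Fin 2 → ℂ,
        ‖(starRingEnd ℂ) (z 1) * w 1 / (a:ℂ)‖ = ‖w 1‖ := by
      intro w
      rw [norm_div, norm_mul, Complex.norm_conj, Complex.norm_real, Real.norm_eq_abs, abs_of_pos ha0, ← hadef,
        mul_comm, mul_div_assoc, div_self ha0.ne', mul_one]
    have hBlb : ∀ w : Fin 2 → ℂ, 1 - ‖w 1‖ ≤ ‖B w‖ := by
      intro w
      have := norm_sub_norm_le (1:ℂ) ((starRingEnd ℂ) (z 1) * w 1 / (a:ℂ))
      rw [norm_one, hBabs w] at this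
      exact this
    have hBre : ∀ w : Fin 2 → ℂ, ‖w 1‖ < 1 → B w ∈ Complex.slitPlane := by
      intro w hw
      apply Or.inl
      have h1 : ((starRingEnd ℂ) (z 1) * w 1 / (a:ℂ)).re
          ≤ ‖(starRingEnd ℂ) (z 1) * w 1 / (a:ℂ)‖ := Complex.re_le_norm _
      rw [hBabs w] at h1
      have : (B w).re = 1 - ((starRingEnd ℂ) (z 1) * w 1 / (a:ℂ)).re := by
        simp [hBdef, Complex.sub_re]
      rw [this]
      linarith
    have hw1lt : ∀ w ∈ ellipsoid p, ‖w 1‖ < 1 := by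
      intro w hw
      rw [mem_ellipsoid_iff] at hw
      have h1 : (0:ℝ) ≤ ‖w 0‖ ^ P := Real.rpow_nonneg (norm_nonneg _) _
      exact lt_one_of_rpow_lt_one (norm_nonneg _) (by linarith) hα
    refine ⟨fun w => w 0 * ((C:ℂ) * (B w) ^ (γ:ℂ)), ?_, ?_, ?_, ?_⟩
    · intro w hw
      apply DifferentiableAt.differentiableWithinAt
      apply DifferentiableAt.mul
      · exact (ContinuousLinearMap.proj 0 : (Fin 2 → ℂ) →L[ℂ] ℂ).differentiable.differentiableAt
      · apply DifferentiableAt.const_mul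
        apply DifferentiableAt.cpow _ (differentiableAt_const _) (hBre w (hw1lt w hw))
        have hB' : B = fun y : Fin 2 → ℂ => 1 - ((starRingEnd ℂ) (z 1) / (a:ℂ)) * y 1 := by
          funext y; rw [hBdef]; ring
        rw [hB']
        exact ((ContinuousLinearMap.proj 1 : (Fin 2 → ℂ) →L[ℂ] ℂ).differentiable.differentiableAt
          |>.const_mul _).const_sub _
    · intro w hw
      set r := ‖w 1‖ with hrdef
      have hr1 : r < 1 := hw1lt w hw
      have hr0 : 0 ≤ r := norm_nonneg _
      have hwE := (mem_ellipsoid_iff p w).mp hw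
      have h1r : (0:ℝ) < 1 - r := by linarith
      have hPr : (0:ℝ) < 1 - r ^ α := by
        have := Real.rpow_lt_one hr0 hr1 hα
        linarith
      have hBpos : 0 < ‖B w‖ := lt_of_lt_of_le h1r (hBlb w)
      set M := C * ‖B w‖ ^ γ with hMdef
      have hM0 : 0 < M := by positivity
      have habs : ‖w 0 * ((C:ℂ) * (B w) ^ (γ:ℂ))‖ = ‖w 0‖ * M := by
        rw [norm_mul, norm_mul, Complex.norm_real, Real.norm_eq_abs, abs_of_pos hC, Complex.norm_cpow_real]
      rw [habs]
      have hXβ : (0:ℝ) < ‖B w‖ ^ β := Real.rpow_pos_of_pos hBpos _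
      have hMP : M ^ P = (1-a) ^ β / (1 - a ^ α) * (‖B w‖ ^ β)⁻¹ := by
        rw [hMdef, Real.mul_rpow hC.le (Real.rpow_nonneg hBpos.le _), hCdef,
          Real.rpow_inv_rpow (by positivity) hP.ne', ← Real.rpow_mul hBpos.le, hγdef, hγP,
          Real.rpow_neg hBpos.le]
      have hkey := key_ineq hα1 ha0 ha1 hr0 hr1
      rw [← hβdef] at hkey
      have hBβ : (1-r) ^ β ≤ ‖B w‖ ^ β :=
        Real.rpow_le_rpow h1r.le (hBlb w) hβ0.le
      have hstar : (1-a) ^ β * (1 - r ^ α) ≤ (1 - a ^ α) * ‖B w‖ ^ β := by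
        calc (1-a) ^ β * (1 - r ^ α) ≤ (1 - a ^ α) * (1-r) ^ β := hkey
          _ ≤ (1 - a ^ α) * ‖B w‖ ^ β := by nlinarith
      have hMP_le : M ^ P ≤ (1 - r ^ α)⁻¹ := by
        rw [hMP]
        have h2 : (1-a) ^ β / (1 - a ^ α) * (‖B w‖ ^ β)⁻¹
            = (1-a) ^ β / ((1 - a ^ α) * ‖B w‖ ^ β) := by
          field_simp
        rw [h2, div_le_iff₀ (mul_pos h1A hXβ)]
        calc (1-a) ^ β = (1-a) ^ β * (1 - r ^ α) * (1 - r ^ α)⁻¹ := by field_simp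
          _ ≤ (1 - a ^ α) * ‖B w‖ ^ β * (1 - r ^ α)⁻¹ :=
              mul_le_mul_of_nonneg_right hstar (by positivity)
          _ = (1 - r ^ α)⁻¹ * ((1 - a ^ α) * ‖B w‖ ^ β) := by ring
      have hw0lt : ‖w 0‖ < (1 - r ^ α) ^ P⁻¹ := by
        have h1 : ‖w 0‖ ^ P < 1 - r ^ α := by linarith
        calc ‖w 0‖ = (‖w 0‖ ^ P) ^ P⁻¹ :=
              (Real.rpow_rpow_inv (norm_nonneg _) hP.ne').symm
          _ < (1 - r ^ α) ^ P⁻¹ := Real.rpow_lt_rpow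
              (Real.rpow_nonneg (norm_nonneg _) _) h1 (by positivity)
      have hMle : M ≤ ((1 - r ^ α) ^ P⁻¹)⁻¹ := by
        rw [← Real.rpow_rpow_inv hM0.le hP.ne', ← Real.inv_rpow hPr.le]
        exact Real.rpow_le_rpow (Real.rpow_nonneg (by positivity) _) hMP_le (by positivity)
      have hX0 : (0:ℝ) < (1 - r ^ α) ^ P⁻¹ := Real.rpow_pos_of_pos hPr _
      calc ‖w 0‖ * M < (1 - r ^ α) ^ P⁻¹ * M :=
            mul_lt_mul_of_pos_right hw0lt hM0
        _ ≤ (1 - r ^ α) ^ P⁻¹ * ((1 - r ^ α) ^ P⁻¹)⁻¹ :=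
            mul_le_mul_of_nonneg_left hMle hX0.le
        _ = 1 := mul_inv_cancel₀ hX0.ne'
    · intro w hw
      obtain ⟨-, hw2⟩ := hw
      rw [filter_lt_one, prod_singleton] at hw2
      show w 0 * ((C:ℂ) * (B w) ^ (γ:ℂ)) = 0
      rw [hw2, zero_mul]
    · have hBz : B z = ((1 - a : ℝ) : ℂ) := by
        rw [hBdef]
        have h1 : (starRingEnd ℂ) (z 1) * z 1 = ((a^2 : ℝ) : ℂ) := by
          rw [mul_comm, Complex.mul_conj, Complex.normSq_eq_norm_sq, ← hadef]
        show 1 - (starRingEnd ℂ) (z 1) * z 1 / (a:ℂ) = ((1 - a : ℝ) : ℂ)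
        rw [h1]
        have haC : (a:ℂ) ≠ 0 := Complex.ofReal_ne_zero.mpr ha0.ne'
        push_cast
        field_simp
      have habsz : ‖z 0 * ((C:ℂ) * (B z) ^ (γ:ℂ))‖
          = ‖z 0‖ * (C * (1-a) ^ γ) := by
        rw [norm_mul, norm_mul, hBz, Complex.norm_cpow_real, Complex.norm_real, Real.norm_eq_abs,
          Complex.norm_real, Real.norm_eq_abs, abs_of_pos hC, abs_of_pos h1a]
      rw [habsz]
      congr 1
      have hL0 : 0 < C * (1-a) ^ γ := by positivity
      have hLP : (C * (1-a) ^ γ) ^ P = (1 - a ^ α)⁻¹ := by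
        rw [Real.mul_rpow hC.le (Real.rpow_nonneg h1a.le _), hCdef,
          Real.rpow_inv_rpow (by positivity) hP.ne', ← Real.rpow_mul h1a.le, hγdef, hγP,
          Real.rpow_neg h1a.le]
        field_simp
      rw [← hLP, Real.rpow_rpow_inv hL0.le hP.ne']

lemma upper (p : Fin 2 → ℝ) (hp : ∀ j, 0 < p j)
    (z : Fin 2 → ℂ) (hz : z ∈ ellipsoid p)
    (f : (Fin 2 → ℂ) → ℂ) (hdf : DifferentiableOn ℂ f (ellipsoid p))
    (hb : ∀ w ∈ ellipsoid p, ‖f w‖ < 1)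
    (h0 : ∀ w ∈ zeroSet p 1, f w = 0) :
    ‖f z‖ ≤
      ‖z 0‖ * ((1 - ‖z 1‖ ^ (2 * p 1))⁻¹) ^ (2 * p 0)⁻¹ := by
  have hP : (0:ℝ) < 2 * p 0 := by have := hp 0; linarith
  have hα : (0:ℝ) < 2 * p 1 := by have := hp 1; linarith
  set P := 2 * p 0
  set α := 2 * p 1
  set A := ‖z 1‖ ^ α with hA
  have hzE : ‖z 0‖ ^ P + A < 1 := (mem_ellipsoid_iff p z).mp hz
  have hA0 : 0 ≤ A := Real.rpow_nonneg (norm_nonneg _) _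
  have hA1 : 0 < 1 - A := by
    have : (0:ℝ) ≤ ‖z 0‖ ^ P := Real.rpow_nonneg (norm_nonneg _) _
    linarith
  set ρ := (1 - A) ^ P⁻¹ with hρdef
  have hρ : 0 < ρ := Real.rpow_pos_of_pos hA1 _
  have hρP : ρ ^ P = 1 - A := Real.rpow_inv_rpow hA1.le hP.ne'
  set L : ℂ → Fin 2 → ℂ := fun lam => ![lam * (ρ:ℂ), z 1] with hL
  have hLdiff : Differentiable ℂ L := by
    rw [differentiable_pi]
    intro i
    fin_cases i
    · simp only [hL, Matrix.cons_val_zero]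
      exact differentiable_id.mul_const _
    · simp only [hL, Matrix.cons_val_one, Matrix.head_cons]
      exact differentiable_const _
  have hmaps : ∀ lam : ℂ, ‖lam‖ < 1 → L lam ∈ ellipsoid p := by
    intro lam hl
    rw [mem_ellipsoid_iff]
    have e0 : (L lam) 0 = lam * (ρ:ℂ) := rfl
    have e1 : (L lam) 1 = z 1 := rfl
    rw [e0, e1]
    have : ‖lam * (ρ:ℂ)‖ = ‖lam‖ * ρ := by
      rw [norm_mul, Complex.norm_real, Real.norm_eq_abs, abs_of_pos hρ]
    rw [this, Real.mul_rpow (norm_nonneg _) hρ.le, hρP]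
    have hlP : ‖lam‖ ^ P < 1 := Real.rpow_lt_one (norm_nonneg _) hl hP
    have h1 : ‖lam‖ ^ P * (1 - A) < 1 - A := by
      nlinarith [Real.rpow_nonneg (norm_nonneg lam) P]
    linarith
  have hφd : DifferentiableOn ℂ (f ∘ L) (Metric.ball 0 1) := by
    apply hdf.comp hLdiff.differentiableOn
    intro lam hl
    exact hmaps lam (by simpa using mem_ball_zero_iff.mp hl)
  have hφmaps : Set.MapsTo (f ∘ L) (Metric.ball 0 1) (Metric.ball 0 1) := by
    intro lam hl
    rw [mem_ball_zero_iff]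
    exact hb _ (hmaps lam (by simpa using mem_ball_zero_iff.mp hl))
  have hφ0 : (f ∘ L) 0 = 0 := by
    apply h0
    constructor
    · exact hmaps 0 (by simp)
    · rw [filter_lt_one, prod_singleton]
      show (0:ℂ) * (ρ:ℂ) = 0
      ring
  have hz0lt : ‖z 0‖ < ρ := by
    have h1 : ‖z 0‖ ^ P < 1 - A := by linarith
    calc ‖z 0‖ = (‖z 0‖ ^ P) ^ P⁻¹ :=
          (Real.rpow_rpow_inv (norm_nonneg _) hP.ne').symm
      _ < (1 - A) ^ P⁻¹ := Real.rpow_lt_rpow (Real.rpow_nonneg (norm_nonneg _) _) h1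
          (by positivity)
  have hlt : ‖z 0 / (ρ:ℂ)‖ < 1 := by
    rw [norm_div, Complex.norm_real, Real.norm_eq_abs, abs_of_pos hρ, div_lt_one hρ]
    exact hz0lt
  have hschwarz := Complex.norm_le_norm_of_mapsTo_ball hφd (hφmaps.mono_right Metric.ball_subset_closedBall) hφ0 (by
    simpa using hlt : ‖z 0 / (ρ:ℂ) - 0‖ < 1)
  have hLz : L (z 0 / (ρ:ℂ)) = z := by
    funext i
    fin_cases i
    · show z 0 / (ρ:ℂ) * (ρ:ℂ) = z 0
      exact div_mul_cancel₀ _ (by exact_mod_cast hρ.ne')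
    · rfl
  simp only [sub_zero] at hschwarz
  rw [show (f ∘ L) (z 0 / (ρ:ℂ)) = f z by rw [Function.comp_apply, hLz]] at hschwarz
  calc ‖f z‖ ≤ ‖z 0 / (ρ:ℂ)‖ := hschwarz
    _ = ‖z 0‖ * ρ⁻¹ := by
        rw [norm_div, Complex.norm_real, Real.norm_eq_abs, abs_of_pos hρ, div_eq_mul_inv]
    _ = ‖z 0‖ * (1 - A)⁻¹ ^ P⁻¹ := by
        rw [hρdef, ← Real.inv_rpow hA1.le]

/-- Theorem 1(c), Möbius part: for `n = 2`, `k = 1`, `p_1 > 0`, `p_2 ≥ 1/2`,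
`m_𝔼(A,z) = R(z)` for every `z ∈ 𝔼`. -/
theorem stmt4 (p : Fin 2 → ℝ) (hp : ∀ j, 0 < p j) (hp2 : (1 : ℝ) / 2 ≤ p 1)
    (z : Fin 2 → ℂ) (hz : z ∈ ellipsoid p) :
    mob (ellipsoid p) (zeroSet p 1) z = RR p z 1 := by
  obtain ⟨f, hd, hb, h0, hval⟩ := extremal p hp hp2 z hz
  set R := ‖z 0‖ * ((1 - ‖z 1‖ ^ (2 * p 1))⁻¹) ^ (2 * p 0)⁻¹ with hRdef
  have hP : (0:ℝ) < 2 * p 0 := by have := hp 0; linarith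
  have hzE := (mem_ellipsoid_iff p z).mp hz
  have hA1 : 0 < 1 - ‖z 1‖ ^ (2 * p 1) := by
    have : (0:ℝ) ≤ ‖z 0‖ ^ (2 * p 0) := Real.rpow_nonneg (norm_nonneg _) _
    linarith
  have hcc : cc p z 1 = (1 - ‖z 1‖ ^ (2 * p 1)) * (2 * p 0) := by
    unfold cc rr qq
    rw [show univ.filter (fun j : Fin 2 => 1 ≤ (j:ℕ)) = {1} from by decide,
      show univ.filter (fun j : Fin 2 => (j:ℕ) < 1) = {0} from by decide,
      sum_singleton, sum_singleton]
    field_simp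
  have hdd : dd p z 1 = 1 := by
    unfold dd
    have hset : {s : ℕ | 1 ≤ s ∧ s ≤ 1 ∧ ∀ hs : s - 1 < 2,
        2 * p ⟨s - 1, hs⟩ * ‖z ⟨s - 1, hs⟩‖ ^ (2 * p ⟨s - 1, hs⟩)
          ≤ cc p z s} = {1} := by
      ext s
      simp only [Set.mem_setOf_eq, Set.mem_singleton_iff]
      constructor
      · rintro ⟨h1, h2, -⟩; omega
      · rintro rfl
        refine ⟨le_refl 1, le_refl 1, fun hs => ?_⟩
        have he : (⟨1 - 1, hs⟩ : Fin 2) = 0 := rfl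
        rw [he, hcc]
        nlinarith [hzE, Real.rpow_nonneg (norm_nonneg (z 1)) (2 * p 1)]
    rw [hset, csSup_singleton]
  have hRR : RR p z 1 = R := by
    unfold RR
    rw [hdd, show univ.filter (fun j : Fin 2 => (j:ℕ) < 1) = {0} from by decide,
      prod_singleton, hcc]
    congr 2
    rw [mul_comm (1 - ‖z 1‖ ^ (2 * p 1)) (2 * p 0), div_mul_eq_div_div,
      div_self hP.ne', one_div]
  rw [hRR]
  unfold mob
  apply IsGreatest.csSup_eq
  constructor
  · exact ⟨f, hd, hb, h0, hval⟩
  · rintro x ⟨g, hgd, hgb, hg0, rfl⟩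
    exact upper p hp z hz g hgd hgb hg0

end Helpers
end

section
/- (Theorem 1(d), restated via the Green-function formula g_𝔼(A,·) = R.) Let n ≥ 2, p_1,…,p_n > 0, 1 ≤ k ≤ n, and suppose there exists j ∈ {k+1,…,n} with p_j < 1/2. Then there exists z ∈ 𝔼 with (p_j|z_j|^{2p_j})_{j=1}^k monotonically increasing such that m_𝔼(A,z) < R(z). -/
open Finset

section Aux


open Metric Set in
/-- Convexity-type bound: `(δ-ξ)^(-α) ≥ δ^(-α) + α δ^(-α) δ⁻¹ ξ`. -/
lemma aux_bound5 {d ξ a : ℝ} (hd : 0 < d) (hξ0 : 0 ≤ ξ) (hξd : ξ < d) (ha : 0 < a) :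
    (d ^ a)⁻¹ + a * (d ^ a)⁻¹ * d⁻¹ * ξ ≤ ((d - ξ) ^ a)⁻¹ := by
  have hu0 : 0 ≤ ξ / d := div_nonneg hξ0 hd.le
  have hu1 : ξ / d < 1 := (div_lt_one hd).2 hξd
  have hdξ : d - ξ = d * (1 - ξ / d) := by field_simp
  have h1u : 0 < 1 - ξ / d := by linarith
  have hsplit : (d - ξ) ^ a = d ^ a * (1 - ξ / d) ^ a := by
    rw [hdξ, Real.mul_rpow hd.le h1u.le]
  have hexp : (1 - ξ / d) ^ a ≤ Real.exp (-(a * (ξ / d))) := by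
    rw [Real.rpow_def_of_pos h1u]
    apply Real.exp_le_exp.2
    have hlog : Real.log (1 - ξ / d) ≤ -(ξ / d) := by
      have := Real.log_le_sub_one_of_pos h1u
      linarith
    nlinarith [hlog, ha.le]
  have hexp2 : (1 : ℝ) + a * (ξ / d) ≤ Real.exp (a * (ξ / d)) := by
    have := Real.add_one_le_exp (a * (ξ / d))
    linarith
  have hpos1 : 0 < (1 - ξ / d) ^ a := Real.rpow_pos_of_pos h1u a
  have hposd : 0 < d ^ a := Real.rpow_pos_of_pos hd a
  have hkey : (1 : ℝ) + a * (ξ / d) ≤ ((1 - ξ / d) ^ a)⁻¹ := by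
    have h3 : ((1 - ξ / d) ^ a)⁻¹ ≥ (Real.exp (-(a * (ξ / d))))⁻¹ := by
      apply inv_anti₀ _ hexp
      positivity
    rw [← Real.exp_neg, neg_neg] at h3
    linarith
  have : ((d - ξ) ^ a)⁻¹ = (d ^ a)⁻¹ * ((1 - ξ / d) ^ a)⁻¹ := by
    rw [hsplit, mul_inv]
  rw [this]
  have h4 : (d ^ a)⁻¹ * (1 + a * (ξ / d)) ≤ (d ^ a)⁻¹ * ((1 - ξ / d) ^ a)⁻¹ :=
    mul_le_mul_of_nonneg_left hkey (by positivity)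
  calc (d ^ a)⁻¹ + a * (d ^ a)⁻¹ * d⁻¹ * ξ = (d ^ a)⁻¹ * (1 + a * (ξ / d)) := by
        field_simp
    _ ≤ _ := h4

end Aux

set_option maxHeartbeats 2000000 in
/-- Theorem 1(d): if some `p_j < 1/2` with `j ∈ {k+1,…,n}`, then the Möbius and
Green functions differ, i.e. there is `z ∈ 𝔼` (with the required monotonicity)
such that `m_𝔼(A,z) < R(z) = g_𝔼(A,z)`. -/
theorem stmt5 (n k : ℕ) (hn : 2 ≤ n) (hk1 : 1 ≤ k) (hkn : k ≤ n)
    (p : Fin n → ℝ) (hp : ∀ j, 0 < p j)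
    (hj : ∃ j : Fin n, k ≤ (j : ℕ) ∧ p j < 1 / 2) :
    ∃ z ∈ ellipsoid p, monIncr p z k ∧
      mob (ellipsoid p) (zeroSet p k) z < RR p z k := by
  classical
  obtain ⟨j0, hkj0, hqj⟩ := hj
  have h0n : 0 < n := by omega
  set i0 : Fin n := ⟨0, h0n⟩ with hi0def
  have hi0v : (i0 : ℕ) = 0 := rfl
  have hp0 : 0 < p i0 := hp i0
  have hj0i0 : j0 ≠ i0 := by
    intro h
    rw [h] at hkj0
    omega
  set β : ℝ := 2 * p j0 with hβdef
  have hβ0 : 0 < β := by have := hp j0; positivity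
  have hβ1 : β < 1 := by rw [hβdef]; linarith
  set α : ℝ := (2 * p i0)⁻¹ with hαdef
  have hα0 : 0 < α := by positivity
  have h2p0 : (2 * p i0) ≠ 0 := by positivity
  have hpj2 : ∀ j : Fin n, (2 * p j) ≠ 0 := fun j => by have := hp j; positivity
  set M : Finset (Fin n) := univ.filter (fun j : Fin n => 1 ≤ (j : ℕ) ∧ (j : ℕ) < k)
    with hMdef
  set Q : ℝ := ∑ j ∈ M, (p j)⁻¹ with hQdef
  have hQ0 : 0 ≤ Q := Finset.sum_nonneg fun j _ => by have := hp j; positivity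
  set δ : ℝ := (2 * (Q * p i0 + 1))⁻¹ with hδdef
  have hδ0 : 0 < δ := by rw [hδdef]; positivity
  have hδhalf : δ ≤ 1 / 2 := by
    rw [hδdef]
    rw [show (1 : ℝ) / 2 = (2 : ℝ)⁻¹ by norm_num]
    apply inv_anti₀ (by norm_num)
    nlinarith [hQ0, hp0.le]
  set c : ℝ := if 2 ≤ k then (1 - δ) / Q else 1 with hcdef
  have hQpos : 2 ≤ k → 0 < Q := by
    intro hk2
    have h1n : 1 < n := by omega
    have hmem : (⟨1, h1n⟩ : Fin n) ∈ M := by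
      rw [hMdef]
      simp only [Finset.mem_filter, Finset.mem_univ, true_and]
      omega
    exact Finset.sum_pos' (fun j _ => by have := hp j; positivity)
      ⟨⟨1, h1n⟩, hmem, by have := hp ⟨1, h1n⟩; positivity⟩
  have hMempty : ¬ 2 ≤ k → M = ∅ := by
    intro hk2
    rw [hMdef]
    apply Finset.filter_false_of_mem
    intro j _
    omega
  have hc0 : 0 < c := by
    rw [hcdef]
    split
    · have := hQpos ‹_›
      apply div_pos (by linarith) this
    · norm_num
  set D : ℝ := 1 - c * Q with hDdef
  have hcQ_eq : 2 ≤ k → c * Q = 1 - δ := by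
    intro hk2
    rw [hcdef, if_pos hk2, div_mul_cancel₀ _ (hQpos hk2).ne']
  have hcQ0 : 0 ≤ c * Q := mul_nonneg hc0.le hQ0
  have hDδ : 2 ≤ k → D = δ := by
    intro hk2
    rw [hDdef, hcQ_eq hk2]; ring
  have hD0 : 0 < D := by
    by_cases hk2 : 2 ≤ k
    · rw [hDδ hk2]; exact hδ0
    · rw [hDdef, hQdef, hMempty hk2]
      simp
  have hD1 : D ≤ 1 := by rw [hDdef]; linarith
  have hδc : 2 ≤ k → δ < c * (p i0)⁻¹ := by
    intro hk2
    have hQp := hQpos hk2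
    have hX : 0 < Q * p i0 := mul_pos hQp hp0
    have key : δ * (Q * p i0) < 1 - δ := by
      have h1 : δ * (2 * (Q * p i0 + 1)) = 1 := by
        rw [hδdef]; field_simp
      ring_nf at h1 ⊢
      nlinarith [h1]
    have h3 : c * (p i0)⁻¹ = (1 - δ) / (Q * p i0) := by
      rw [hcdef, if_pos hk2]
      field_simp
    rw [h3, lt_div_iff₀ hX]
    linarith [key]
  -- the middle coordinate moduli
  set m : Fin n → ℝ := fun j => (c / p j) ^ (2 * p j)⁻¹ with hmdef
  have hm0 : ∀ j, 0 ≤ m j := fun j => Real.rpow_nonneg (by have := hp j; positivity) _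
  have hmval : ∀ j, (m j) ^ (2 * p j) = c * (p j)⁻¹ := by
    intro j
    show ((c / p j) ^ (2 * p j)⁻¹) ^ (2 * p j) = _
    rw [Real.rpow_inv_rpow (div_nonneg hc0.le (hp j).le) (hpj2 j), div_eq_mul_inv]
  -- the point family
  set Z : ℂ → ℂ → Fin n → ℂ := fun ζ w j =>
    if j = i0 then ζ else if (j : ℕ) < k then ((m j : ℝ) : ℂ) else if j = j0 then w else 0
    with hZdef
  have hZi0 : ∀ ζ w : ℂ, Z ζ w i0 = ζ := fun ζ w => by simp [hZdef]
  have hZmid : ∀ (ζ w : ℂ) (j : Fin n), j ≠ i0 → (j : ℕ) < k → Z ζ w j = ((m j : ℝ) : ℂ) :=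
    fun ζ w j h1 h2 => by simp [hZdef, h1, h2]
  have hj0k : ¬ ((j0 : ℕ) < k) := by omega
  have hZj0 : ∀ ζ w : ℂ, Z ζ w j0 = w := fun ζ w => by simp [hZdef, hj0i0, hj0k]
  have hZzero : ∀ (ζ w : ℂ) (j : Fin n), j ≠ i0 → ¬ ((j : ℕ) < k) → j ≠ j0 → Z ζ w j = 0 :=
    fun ζ w j h1 h2 h3 => by simp [hZdef, h1, h2, h3]
  have hZd1 : ∀ w : ℂ, Differentiable ℂ (fun ζ => Z ζ w) := by
    intro w
    apply differentiable_pi.2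
    intro j
    rw [hZdef]
    by_cases h : j = i0
    · simpa [h] using differentiable_id
    · simpa [h] using differentiable_const _
  have hZd2 : ∀ ζ : ℂ, Differentiable ℂ (fun w => Z ζ w) := by
    intro ζ
    apply differentiable_pi.2
    intro j
    rw [hZdef]
    by_cases h1 : j = i0
    · simpa [h1] using differentiable_const _
    · by_cases h2 : (j : ℕ) < k
      · simpa [h1, h2] using differentiable_const _
      · by_cases h3 : j = j0
        · subst h3
          simpa [h1, h2] using differentiable_id
        · simpa [h1, h2, h3] using differentiable_const _
  -- pointwise modulus computation
  have Xeq : ∀ (ζ w : ℂ) (j : Fin n), ‖Z ζ w j‖ ^ (2 * p j)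
      = (if j = i0 then ‖ζ‖ ^ (2 * p i0) else 0)
        + (if 1 ≤ (j : ℕ) ∧ (j : ℕ) < k then c * (p j)⁻¹ else 0)
        + (if j = j0 then ‖w‖ ^ β else 0) := by
    intro ζ w j
    by_cases h1 : j = i0
    · subst h1
      rw [hZi0, if_pos rfl, if_neg (by rw [hi0v]; omega : ¬ (1 ≤ (i0 : ℕ) ∧ (i0 : ℕ) < k)),
        if_neg hj0i0.symm]
      ring
    · have hv1 : 1 ≤ (j : ℕ) := by
        rcases Nat.eq_zero_or_pos (j : ℕ) with h | h
        · exact absurd (Fin.ext h : j = i0) h1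
        · omega
      by_cases h2 : (j : ℕ) < k
      · have hjj0 : j ≠ j0 := by
          intro h; subst h; omega
        rw [hZmid ζ w j h1 h2, if_neg h1, if_pos ⟨hv1, h2⟩, if_neg hjj0]
        rw [Complex.norm_real, Real.norm_eq_abs, abs_of_nonneg (hm0 j), hmval j]
        ring
      · by_cases h3 : j = j0
        · subst h3
          rw [hZj0, if_neg h1, if_neg (by omega : ¬ (1 ≤ (j : ℕ) ∧ (j : ℕ) < k)), if_pos rfl,
            hβdef]
          ring
        · rw [hZzero ζ w j h1 h2 h3, if_neg h1,
            if_neg (by omega : ¬ (1 ≤ (j : ℕ) ∧ (j : ℕ) < k)), if_neg h3]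
          rw [norm_zero, Real.zero_rpow (hpj2 j)]
          ring
  -- summation formula
  have Xsum : ∀ (ζ w : ℂ) (F : Finset (Fin n)),
      ∑ j ∈ F, ‖Z ζ w j‖ ^ (2 * p j)
      = (if i0 ∈ F then ‖ζ‖ ^ (2 * p i0) else 0)
        + c * (∑ j ∈ F.filter (fun j : Fin n => 1 ≤ (j : ℕ) ∧ (j : ℕ) < k), (p j)⁻¹)
        + (if j0 ∈ F then ‖w‖ ^ β else 0) := by
    intro ζ w F
    rw [Finset.sum_congr rfl (fun j _ => Xeq ζ w j)]
    rw [Finset.sum_add_distrib, Finset.sum_add_distrib]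
    congr 1
    · congr 1
      · exact Finset.sum_ite_eq' F i0 _
      · rw [← Finset.sum_filter, Finset.mul_sum]
    · exact Finset.sum_ite_eq' F j0 _
  -- ellipsoid membership criterion
  have memE : ∀ ζ w : ℂ, ‖ζ‖ ^ (2 * p i0) + ‖w‖ ^ β < D →
      Z ζ w ∈ ellipsoid p := by
    intro ζ w h
    show ∑ j, ‖Z ζ w j‖ ^ (2 * p j) < 1
    rw [Xsum ζ w univ]
    rw [if_pos (Finset.mem_univ i0), if_pos (Finset.mem_univ j0)]
    rw [show univ.filter (fun j : Fin n => 1 ≤ (j : ℕ) ∧ (j : ℕ) < k) = M from hMdef.symm,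
      ← hQdef]
    rw [hDdef] at h
    linarith
  -- zero set membership
  have memA : ∀ w : ℂ, ‖w‖ ^ β < D → Z 0 w ∈ zeroSet p k := by
    intro w h
    constructor
    · apply memE
      rw [norm_zero, Real.zero_rpow (hpj2 i0)]
      linarith
    · apply Finset.prod_eq_zero (i := i0)
      · simp only [Finset.mem_filter, Finset.mem_univ, true_and, hi0v]
        omega
      · simp [hZdef]
  -- parameter choices
  set ρ0 : ℝ := (D / 2) ^ β⁻¹ with hρ0def
  have hρ00 : 0 < ρ0 := Real.rpow_pos_of_pos (by linarith) _
  have hρ0β : ρ0 ^ β = D / 2 := Real.rpow_inv_rpow (by linarith) hβ0.ne'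
  set E : ℝ := 2 * ((D / 2) ^ α)⁻¹ / ρ0 with hEdef
  have hDα : 0 < (D / 2) ^ α := Real.rpow_pos_of_pos (by linarith) α
  have hE0 : 0 < E := by
    apply div_pos _ hρ00
    positivity
  set K : ℝ := α * (D ^ α)⁻¹ * D⁻¹ with hKdef
  have hDα2 : 0 < D ^ α := Real.rpow_pos_of_pos hD0 α
  have hK0 : 0 < K := by rw [hKdef]; positivity
  set w0 : ℝ := min (ρ0 / 2) ((K / (2 * E)) ^ (1 - β)⁻¹) with hw0def
  have hKE : 0 < K / (2 * E) := div_pos hK0 (by linarith)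
  have hw00 : 0 < w0 := lt_min (by linarith) (Real.rpow_pos_of_pos hKE _)
  have hw0ρ : w0 < ρ0 := lt_of_le_of_lt (min_le_left _ _) (by linarith)
  have hw0β : w0 ^ β < D / 2 := by
    rw [← hρ0β]
    exact Real.rpow_lt_rpow hw00.le hw0ρ hβ0
  have hw0βpos : 0 < w0 ^ β := Real.rpow_pos_of_pos hw00 β
  set t : ℝ := min ((D / 2) ^ α / 2) ((c / p i0) ^ α) with htdef
  have ht0 : 0 < t := lt_min (by linarith) (Real.rpow_pos_of_pos (div_pos hc0 hp0) α)
  have htlt : t < (D / 2) ^ α := lt_of_le_of_lt (min_le_left _ _) (by linarith)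
  have ht' : t ^ (2 * p i0) < D / 2 := by
    calc t ^ (2 * p i0) < ((D / 2) ^ α) ^ (2 * p i0) :=
          Real.rpow_lt_rpow ht0.le htlt (by positivity)
      _ = D / 2 := by rw [hαdef]; exact Real.rpow_inv_rpow (by linarith) h2p0
  have htc' : p i0 * t ^ (2 * p i0) ≤ c := by
    have h1 : t ^ (2 * p i0) ≤ ((c / p i0) ^ α) ^ (2 * p i0) :=
      Real.rpow_le_rpow ht0.le (min_le_right _ _) (by positivity)
    rw [hαdef, Real.rpow_inv_rpow (div_nonneg hc0.le hp0.le) h2p0] at h1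
    rw [mul_comm]
    calc t ^ (2 * p i0) * p i0 ≤ (c / p i0) * p i0 :=
          mul_le_mul_of_nonneg_right h1 hp0.le
      _ = c := by field_simp
  -- Schwarz bound on vertical slices
  have S1 : ∀ f : (Fin n → ℂ) → ℂ, DifferentiableOn ℂ f (ellipsoid p) →
      (∀ v ∈ ellipsoid p, ‖f v‖ < 1) → (∀ v ∈ zeroSet p k, f v = 0) →
      ∀ w : ℂ, ‖w‖ ^ β < D / 2 →
      ‖f (Z (t : ℂ) w)‖ ≤ t * (((D - ‖w‖ ^ β) ^ α)⁻¹) := by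
    intro f hfd hfb hfv w hw
    have ha0 : 0 ≤ ‖w‖ ^ β := Real.rpow_nonneg (norm_nonneg w) β
    have haD : ‖w‖ ^ β < D := by linarith
    set a : ℝ := ‖w‖ ^ β with hadef
    set ρ : ℝ := (D - a) ^ α with hρdef
    have hρpos : 0 < ρ := Real.rpow_pos_of_pos (by linarith) α
    have hρpow : ρ ^ (2 * p i0) = D - a := by
      rw [hρdef, hαdef]; exact Real.rpow_inv_rpow (by linarith) h2p0
    have hmapsE : Set.MapsTo (fun ζ => Z ζ w) (Metric.ball (0:ℂ) ρ) (ellipsoid p) := by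
      intro ζ hζ
      apply memE
      have hζn : ‖ζ‖ < ρ := by
        exact mem_ball_zero_iff.1 hζ
      have h2 : ‖ζ‖ ^ (2 * p i0) < ρ ^ (2 * p i0) :=
        Real.rpow_lt_rpow (norm_nonneg ζ) hζn (by positivity)
      rw [hρpow] at h2
      linarith
    have hgd : DifferentiableOn ℂ (fun ζ => f (Z ζ w)) (Metric.ball (0:ℂ) ρ) :=
      hfd.comp ((hZd1 w).differentiableOn) hmapsE
    have hg0 : f (Z 0 w) = 0 := hfv _ (memA w haD)
    have hgmaps : Set.MapsTo (fun ζ => f (Z ζ w)) (Metric.ball (0:ℂ) ρ)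
        (Metric.ball (f (Z 0 w)) 1) := by
      intro ζ hζ
      simp only [Metric.mem_ball]
      rw [hg0, dist_zero_right]
      exact hfb _ (hmapsE hζ)
    have htmem : (t : ℂ) ∈ Metric.ball (0:ℂ) ρ := by
      rw [mem_ball_zero_iff, Complex.norm_real, Real.norm_eq_abs, abs_of_pos ht0]
      calc t < (D / 2) ^ α := htlt
        _ ≤ ρ := by
          rw [hρdef]
          exact Real.rpow_le_rpow (by linarith) (by linarith) hα0.le
    have hS := Complex.dist_le_div_mul_dist_of_mapsTo_ball hgd (hgmaps.mono_right Metric.ball_subset_closedBall) htmem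
    calc ‖f (Z (t:ℂ) w)‖
        = dist (f (Z (t:ℂ) w)) (f (Z 0 w)) := by
          rw [hg0, dist_zero_right]
      _ ≤ 1 / ρ * dist ((t:ℂ)) 0 := hS
      _ = t * (((D - a) ^ α)⁻¹) := by
          rw [dist_zero_right, Complex.norm_real, Real.norm_eq_abs, abs_of_pos ht0, hρdef]
          ring
  -- the key upper bound for competitors
  have KEY : ∀ f : (Fin n → ℂ) → ℂ, DifferentiableOn ℂ f (ellipsoid p) →
      (∀ v ∈ ellipsoid p, ‖f v‖ < 1) → (∀ v ∈ zeroSet p k, f v = 0) →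
      ‖f (Z (t : ℂ) (w0 : ℂ))‖ ≤ t * ((D ^ α)⁻¹ + E * w0) := by
    intro f hfd hfb hfv
    set C : ℝ := t * (((D / 2) ^ α)⁻¹) with hCdef
    have hC0 : 0 < C := mul_pos ht0 (inv_pos.2 hDα)
    have hwsmall : ∀ w : ℂ, w ∈ Metric.ball (0:ℂ) ρ0 → ‖w‖ ^ β < D / 2 := by
      intro w hwb
      have h1 : ‖w‖ < ρ0 := by
        exact mem_ball_zero_iff.1 hwb
      calc ‖w‖ ^ β < ρ0 ^ β :=
            Real.rpow_lt_rpow (norm_nonneg w) h1 hβ0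
        _ = D / 2 := hρ0β
    have hψbd : ∀ w : ℂ, w ∈ Metric.ball (0:ℂ) ρ0 → ‖f (Z (t:ℂ) w)‖ ≤ C := by
      intro w hwb
      have h1 := S1 f hfd hfb hfv w (hwsmall w hwb)
      have h2 : ((D - ‖w‖ ^ β) ^ α)⁻¹ ≤ ((D / 2) ^ α)⁻¹ := by
        apply inv_anti₀ hDα
        apply Real.rpow_le_rpow (by linarith) _ hα0.le
        have := hwsmall w hwb
        linarith
      calc ‖f (Z (t:ℂ) w)‖ ≤ t * (((D - ‖w‖ ^ β) ^ α)⁻¹) := h1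
        _ ≤ C := by rw [hCdef]; exact mul_le_mul_of_nonneg_left h2 ht0.le
    have hψ0 : ‖f (Z (t:ℂ) 0)‖ ≤ t * ((D ^ α)⁻¹) := by
      have h1 := S1 f hfd hfb hfv 0 (by rw [norm_zero, Real.zero_rpow hβ0.ne']; linarith)
      rw [norm_zero, Real.zero_rpow hβ0.ne', sub_zero] at h1
      exact h1
    have hψ0C : ‖f (Z (t:ℂ) 0)‖ < C := by
      have h2 : (D ^ α)⁻¹ < ((D / 2) ^ α)⁻¹ := by
        apply inv_strictAnti₀ hDα
        exact Real.rpow_lt_rpow (by linarith) (by linarith) hα0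
      calc ‖f (Z (t:ℂ) 0)‖ ≤ t * (D ^ α)⁻¹ := hψ0
        _ < C := by rw [hCdef]; exact mul_lt_mul_of_pos_left h2 ht0
    have hψd : DifferentiableOn ℂ (fun w => f (Z (t:ℂ) w)) (Metric.ball (0:ℂ) ρ0) := by
      apply hfd.comp ((hZd2 (t:ℂ)).differentiableOn)
      intro w hwb
      apply memE
      have h1 := hwsmall w hwb
      have h2 : ‖(t:ℂ)‖ ^ (2 * p i0) < D / 2 := by
        rw [Complex.norm_real, Real.norm_eq_abs, abs_of_pos ht0]; exact ht'
      linarith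
    have hψmaps : Set.MapsTo (fun w => f (Z (t:ℂ) w)) (Metric.ball (0:ℂ) ρ0)
        (Metric.ball (f (Z (t:ℂ) 0)) (2 * C)) := by
      intro w hwb
      simp only [Metric.mem_ball]
      calc dist (f (Z (t:ℂ) w)) (f (Z (t:ℂ) 0)) ≤ ‖f (Z (t:ℂ) w)‖ + ‖f (Z (t:ℂ) 0)‖ :=
            dist_le_norm_add_norm _ _
        _ < 2 * C := by
            have h3 := hψbd w hwb
            linarith [hψ0C]
    have hw0mem : (w0 : ℂ) ∈ Metric.ball (0:ℂ) ρ0 := by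
      rw [mem_ball_zero_iff, Complex.norm_real, Real.norm_eq_abs, abs_of_pos hw00]
      exact hw0ρ
    have hS2 := Complex.dist_le_div_mul_dist_of_mapsTo_ball hψd (hψmaps.mono_right Metric.ball_subset_closedBall) hw0mem
    have hdist : dist (f (Z (t:ℂ) (w0:ℂ))) (f (Z (t:ℂ) 0)) ≤ 2 * C / ρ0 * w0 := by
      calc dist (f (Z (t:ℂ) (w0:ℂ))) (f (Z (t:ℂ) 0)) ≤ 2 * C / ρ0 * dist ((w0:ℂ)) 0 := hS2
        _ = 2 * C / ρ0 * w0 := by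
            rw [dist_zero_right, Complex.norm_real, Real.norm_eq_abs, abs_of_pos hw00]
    have htri : ‖f (Z (t:ℂ) (w0:ℂ))‖
        ≤ ‖f (Z (t:ℂ) 0)‖ + dist (f (Z (t:ℂ) (w0:ℂ))) (f (Z (t:ℂ) 0)) := by
      have h3 := norm_add_le (f (Z (t:ℂ) 0))
        (f (Z (t:ℂ) (w0:ℂ)) - f (Z (t:ℂ) 0))
      have h4 : f (Z (t:ℂ) 0) + (f (Z (t:ℂ) (w0:ℂ)) - f (Z (t:ℂ) 0))
          = f (Z (t:ℂ) (w0:ℂ)) := by ring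
      rw [h4] at h3
      rw [Complex.dist_eq]
      exact h3
    calc ‖f (Z (t:ℂ) (w0:ℂ))‖
        ≤ t * (D ^ α)⁻¹ + 2 * C / ρ0 * w0 := by linarith [htri, hψ0, hdist]
      _ = t * ((D ^ α)⁻¹ + E * w0) := by rw [hCdef, hEdef]; ring
  -- the chosen point: facts
  have habs_t : ‖(t:ℂ)‖ = t := by rw [Complex.norm_real, Real.norm_eq_abs, abs_of_pos ht0]
  have habs_w0 : ‖(w0:ℂ)‖ = w0 := by rw [Complex.norm_real, Real.norm_eq_abs, abs_of_pos hw00]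
  have hzE : Z (t:ℂ) (w0:ℂ) ∈ ellipsoid p := by
    apply memE
    rw [habs_t, habs_w0]
    linarith [ht', hw0β]
  have hmono : monIncr p (Z (t:ℂ) (w0:ℂ)) k := by
    intro i j hjk hij
    have hijv : (i : ℕ) ≤ (j : ℕ) := Fin.le_def.1 hij
    rw [Xeq ((t:ℝ):ℂ) ((w0:ℝ):ℂ) i, Xeq ((t:ℝ):ℂ) ((w0:ℝ):ℂ) j]
    by_cases hji : j = i0
    · have hjv0 : (j : ℕ) = 0 := by rw [hji, hi0v]
      have hi : i = i0 := Fin.ext (by omega)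
      rw [hi, hji]
    · have hjv : 1 ≤ (j : ℕ) := by
        rcases Nat.eq_zero_or_pos (j : ℕ) with h | h
        · exact absurd (Fin.ext h : j = i0) hji
        · omega
      have hjj0 : j ≠ j0 := by intro h; subst h; omega
      rw [if_neg hji, if_pos (⟨hjv, hjk⟩ : 1 ≤ (j : ℕ) ∧ (j : ℕ) < k), if_neg hjj0]
      have hval : p j * (0 + c * (p j)⁻¹ + 0) = c := by
        have hne := (hp j).ne'
        field_simp
        ring
      rw [hval]
      by_cases hii : i = i0
      · rw [hii, if_pos rfl,
          if_neg (by rw [hi0v]; omega : ¬ (1 ≤ (i0 : ℕ) ∧ (i0 : ℕ) < k)),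
          if_neg hj0i0.symm, habs_t]
        calc p i0 * (t ^ (2 * p i0) + 0 + 0) = p i0 * t ^ (2 * p i0) := by ring
          _ ≤ c := htc'
      · have hiv1 : 1 ≤ (i : ℕ) := by
          rcases Nat.eq_zero_or_pos (i : ℕ) with h | h
          · exact absurd (Fin.ext h : i = i0) hii
          · omega
        have hik : (i : ℕ) < k := by omega
        have hij0 : i ≠ j0 := by intro h; subst h; omega
        rw [if_neg hii, if_pos (⟨hiv1, hik⟩ : 1 ≤ (i : ℕ) ∧ (i : ℕ) < k), if_neg hij0]
        have hval2 : p i * (0 + c * (p i)⁻¹ + 0) = c := by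
          have hne := (hp i).ne'
          field_simp
          ring
        rw [hval2]
  -- value of rr at 1
  have hrr1 : rr p (Z (t:ℂ) (w0:ℂ)) 1 = D - w0 ^ β := by
    unfold rr
    rw [Xsum]
    rw [if_neg (by simp [hi0v] : i0 ∉ univ.filter (fun j : Fin n => 1 ≤ (j : ℕ)))]
    rw [if_pos (by simp; omega : j0 ∈ univ.filter (fun j : Fin n => 1 ≤ (j : ℕ)))]
    have hfilter : (univ.filter (fun j : Fin n => 1 ≤ (j : ℕ))).filter
        (fun j : Fin n => 1 ≤ (j : ℕ) ∧ (j : ℕ) < k) = M := by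
      rw [hMdef]
      ext j
      simp only [Finset.mem_filter, Finset.mem_univ, true_and]
      tauto
    rw [hfilter, ← hQdef, habs_w0, hDdef]
    ring
  have hqq1 : qq p 1 = (2 * p i0)⁻¹ := by
    unfold qq
    have h1 : univ.filter (fun j : Fin n => (j : ℕ) < 1) = {i0} := by
      ext j
      simp only [Finset.mem_filter, Finset.mem_univ, true_and, Finset.mem_singleton]
      constructor
      · intro h; exact Fin.ext (by omega)
      · rintro rfl; omega
    rw [h1, Finset.sum_singleton]
  have hD2 : 0 < D - w0 ^ β := by linarith [hw0β]
  have hcc1 : cc p (Z (t:ℂ) (w0:ℂ)) 1 = (D - w0 ^ β) * (2 * p i0) := by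
    unfold cc
    rw [hrr1, hqq1, div_eq_mul_inv, inv_inv]
  -- the set defining dd is {1}
  have hsetdd : {s : ℕ | 1 ≤ s ∧ s ≤ k ∧ ∀ hs : s - 1 < n,
      2 * p ⟨s - 1, hs⟩ * ‖Z (t:ℂ) (w0:ℂ) ⟨s - 1, hs⟩‖ ^ (2 * p ⟨s - 1, hs⟩)
        ≤ cc p (Z (t:ℂ) (w0:ℂ)) s} = {1} := by
    ext s
    simp only [Set.mem_setOf_eq, Set.mem_singleton_iff]
    constructor
    · rintro ⟨hs1, hsk, hcond⟩
      by_contra hne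
      have hs2 : 2 ≤ s := by omega
      have hk2 : 2 ≤ k := by omega
      have hsn : s - 1 < n := by omega
      have hcd := hcond hsn
      set jd : Fin n := ⟨s - 1, hsn⟩ with hjddef
      have hjdv : (jd : ℕ) = s - 1 := rfl
      have hjdi0 : jd ≠ i0 := by
        intro h
        have h2 := congrArg Fin.val h
        rw [hjdv, hi0v] at h2
        omega
      have hjdk : (jd : ℕ) < k := by rw [hjdv]; omega
      have hjdj0 : jd ≠ j0 := by
        intro h
        have h2 := congrArg Fin.val h
        rw [hjdv] at h2
        omega
      rw [hZmid _ _ jd hjdi0 hjdk, Complex.norm_real, Real.norm_eq_abs, abs_of_nonneg (hm0 jd), hmval jd]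
        at hcd
      have hval3 : 2 * p jd * (c * (p jd)⁻¹) = 2 * c := by
        have hne := (hp jd).ne'
        field_simp
      rw [hval3] at hcd
      -- now compute cc p z s and derive a contradiction
      set Ps : ℝ := ∑ j ∈ M.filter (fun j : Fin n => (j : ℕ) < s), (p j)⁻¹ with hPsdef
      have hPs0 : 0 ≤ Ps :=
        Finset.sum_nonneg fun j _ => by have := hp j; positivity
      have hQsplit : ∑ j ∈ M.filter (fun j : Fin n => s ≤ (j : ℕ)), (p j)⁻¹ = Q - Ps := by
        have h1 := Finset.sum_filter_add_sum_filter_not M (fun j : Fin n => (j : ℕ) < s)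
          (fun j => (p j)⁻¹)
        have h2 : M.filter (fun j : Fin n => ¬ (j : ℕ) < s)
            = M.filter (fun j : Fin n => s ≤ (j : ℕ)) := by
          apply Finset.filter_congr
          intro j _
          simp [not_lt]
        rw [h2] at h1
        rw [hQdef, hPsdef]
        linarith [h1]
      have hrrs : rr p (Z (t:ℂ) (w0:ℂ)) s = 1 - (c * (Q - Ps) + w0 ^ β) := by
        unfold rr
        rw [Xsum]
        rw [if_neg (by simp [hi0v]; omega : i0 ∉ univ.filter (fun j : Fin n => s ≤ (j : ℕ)))]
        rw [if_pos (by simp only [Finset.mem_filter, Finset.mem_univ, true_and]; omega :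
          j0 ∈ univ.filter (fun j : Fin n => s ≤ (j : ℕ)))]
        have hff : (univ.filter (fun j : Fin n => s ≤ (j : ℕ))).filter
            (fun j : Fin n => 1 ≤ (j : ℕ) ∧ (j : ℕ) < k)
            = M.filter (fun j : Fin n => s ≤ (j : ℕ)) := by
          rw [hMdef]
          ext j
          simp only [Finset.mem_filter, Finset.mem_univ, true_and]
          tauto
        rw [hff, hQsplit, habs_w0]
        ring
      have hqqs : qq p s = (2 * p i0)⁻¹ + 2⁻¹ * Ps := by
        unfold qq
        have hins : univ.filter (fun j : Fin n => (j : ℕ) < s)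
            = insert i0 (M.filter (fun j : Fin n => (j : ℕ) < s)) := by
          rw [hMdef]
          ext j
          simp only [Finset.mem_filter, Finset.mem_univ, true_and, Finset.mem_insert]
          constructor
          · intro h
            by_cases hj : (j : ℕ) = 0
            · left; exact Fin.ext (by rw [hj, hi0v])
            · right; exact ⟨⟨by omega, by omega⟩, h⟩
          · rintro (rfl | ⟨⟨h1, h2⟩, h3⟩)
            · omega
            · exact h3
        have hnotin : i0 ∉ M.filter (fun j : Fin n => (j : ℕ) < s) := by
          simp [hMdef, hi0v]
        rw [hins, Finset.sum_insert hnotin]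
        congr 1
        rw [hPsdef, Finset.mul_sum]
        apply Finset.sum_congr rfl
        intro j _
        rw [mul_inv]
      have hqpos2 : (0:ℝ) < (2 * p i0)⁻¹ + 2⁻¹ * Ps := by positivity
      have hccs : cc p (Z (t:ℂ) (w0:ℂ)) s < 2 * c := by
        unfold cc
        rw [hrrs, hqqs, div_lt_iff₀ hqpos2]
        have hcp : δ < c * (p i0)⁻¹ := hδc hk2
        have hDδ2 : D = δ := hDδ hk2
        have hexp : 2 * c * ((2 * p i0)⁻¹ + 2⁻¹ * Ps) = c * (p i0)⁻¹ + c * Ps := by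
          rw [mul_inv]
          ring
        rw [hexp]
        have h5 : 1 - (c * (Q - Ps) + w0 ^ β) = D + c * Ps - w0 ^ β := by
          rw [hDdef]; ring
        rw [h5, hDδ2]
        linarith [hw0βpos, hcp]
      linarith [hcd, hccs]
    · rintro rfl
      refine ⟨le_rfl, hk1, fun hs => ?_⟩
      have hidx : (⟨1 - 1, hs⟩ : Fin n) = i0 := rfl
      rw [hidx, hZi0, habs_t, hcc1]
      have ht'2 : t ^ (2 * p i0) ≤ D - w0 ^ β := by linarith [ht', hw0β]
      nlinarith [ht'2, hp0]
  have hdd : dd p (Z (t:ℂ) (w0:ℂ)) k = 1 := by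
    unfold dd
    rw [hsetdd]
    exact csSup_singleton 1
  -- the value of RR
  have hfilter1 : univ.filter (fun j : Fin n => (j : ℕ) < 1) = {i0} := by
    ext j
    simp only [Finset.mem_filter, Finset.mem_univ, true_and, Finset.mem_singleton]
    constructor
    · intro h; exact Fin.ext (by omega)
    · rintro rfl; omega
  have hRR : RR p (Z (t:ℂ) (w0:ℂ)) k = t * (((D - w0 ^ β) ^ α)⁻¹) := by
    unfold RR
    rw [hdd, hfilter1, Finset.prod_singleton, hZi0, habs_t, hcc1]
    have h6 : 2 * p i0 / ((D - w0 ^ β) * (2 * p i0)) = (D - w0 ^ β)⁻¹ := by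
      rw [div_eq_iff (mul_pos hD2 (by positivity : (0:ℝ) < 2 * p i0)).ne',
        inv_mul_cancel_left₀ hD2.ne']
    rw [h6, ← hαdef, Real.inv_rpow hD2.le]
  -- conclusion
  refine ⟨Z (t:ℂ) (w0:ℂ), hzE, hmono, ?_⟩
  have hbound : mob (ellipsoid p) (zeroSet p k) (Z (t:ℂ) (w0:ℂ))
      ≤ t * ((D ^ α)⁻¹ + E * w0) := by
    unfold mob
    apply Real.sSup_le
    · rintro x ⟨f, hfd, hfb, hfv, rfl⟩
      exact KEY f hfd hfb hfv
    · exact mul_nonneg ht0.le (add_nonneg (inv_nonneg.2 hDα2.le)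
        (mul_nonneg hE0.le hw00.le))
  have hfinal : t * ((D ^ α)⁻¹ + E * w0) < RR p (Z (t:ℂ) (w0:ℂ)) k := by
    rw [hRR]
    apply mul_lt_mul_of_pos_left _ ht0
    have haux := aux_bound5 hD0 hw0βpos.le (by linarith [hw0β] : w0 ^ β < D) hα0
    rw [← hKdef] at haux
    have hKw : E * w0 < K * w0 ^ β := by
      have hsplit : w0 = w0 ^ (1 - β) * w0 ^ β := by
        rw [← Real.rpow_add hw00, sub_add_cancel, Real.rpow_one]
      have hEw : E * w0 ^ (1 - β) < K := by
        have h10 : w0 ≤ (K / (2 * E)) ^ (1 - β)⁻¹ := min_le_right _ _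
        have h9 : w0 ^ (1 - β) ≤ K / (2 * E) := by
          calc w0 ^ (1 - β) ≤ ((K / (2 * E)) ^ (1 - β)⁻¹) ^ (1 - β) :=
                Real.rpow_le_rpow hw00.le h10 (by linarith)
            _ = K / (2 * E) := Real.rpow_inv_rpow hKE.le (by intro h; linarith [hβ1] : (1 - β) ≠ 0)
        calc E * w0 ^ (1 - β) ≤ E * (K / (2 * E)) := mul_le_mul_of_nonneg_left h9 hE0.le
          _ = K / 2 := by field_simp
          _ < K := by linarith
      calc E * w0 = (E * w0 ^ (1 - β)) * w0 ^ β := by rw [mul_assoc, ← hsplit]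
        _ < K * w0 ^ β := mul_lt_mul_of_pos_right hEw hw0βpos
    linarith [haux, hKw]
  exact lt_of_le_of_lt hbound hfinal
end

section
/- (Proposition b.) Let n ≥ 2, p_1,…,p_n > 0, 1 ≤ k ≤ n, and let z ∈ 𝔼 with (p_j|z_j|^{2p_j})_{j=1}^k monotonically increasing, z_j ≠ 0 for j = 1,…,d, and d < n. Assume p_j ≥ 1/2 for j = d+1,…,n. Then there exists h : 𝔼' → ℂ holomorphic, h ≢ 0, with h(ζ) = 0 whenever ζ_{d+1}⋯ζ_k = 0 (a vacuous condition if d = k), such that ζ ↦ |h(ζ)| · r_d(ζ)^{q_d} attains its maximum over 𝔼' at the point (z_{d+1},…,z_n). -/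
open Finset

lemma bern0 {a r rs : ℝ} (hr : 0 ≤ r) (hrs : 0 < rs) (ha : 1 ≤ a) :
    a * (rs ^ a / rs) * (r - rs) ≤ r ^ a - rs ^ a := by
  have hs : -1 ≤ r / rs - 1 := by
    have : 0 ≤ r / rs := div_nonneg hr hrs.le
    linarith
  have hB := one_add_mul_self_le_rpow_one_add hs ha
  have h1 : 1 + (r / rs - 1) = r / rs := by ring
  rw [h1, Real.div_rpow hr hrs.le] at hB
  have hrsa : 0 < rs ^ a := Real.rpow_pos_of_pos hrs a
  have h2 := mul_le_mul_of_nonneg_right hB hrsa.le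
  rw [div_mul_cancel₀ _ hrsa.ne'] at h2
  have hexp : a * (rs ^ a / rs) * (r - rs) = (1 + a * (r / rs - 1)) * rs ^ a - rs ^ a := by
    field_simp
    ring
  linarith

lemma lemNS {a μ rs : ℝ} (ha : 1 ≤ a) (hμ : 0 < μ) (hrs : 0 < rs) (r : ℝ) (hr : 0 ≤ r) :
    a * μ * rs ^ a / rs * r - μ * r ^ a ≤ a * μ * rs ^ a / rs * rs - μ * rs ^ a := by
  have hb := mul_le_mul_of_nonneg_left (bern0 hr hrs ha) hμ.le
  have h1 : a * μ * rs ^ a / rs * r - a * μ * rs ^ a / rs * rs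
      = μ * (a * (rs ^ a / rs) * (r - rs)) := by
    field_simp
  nlinarith

lemma lemS {a μ rs : ℝ} (ha : 1 ≤ a) (hμ : 0 < μ) (hrs : 0 < rs) (r : ℝ) (hr : 0 ≤ r) :
    r * Real.exp ((a * μ * rs ^ a - 1) / rs * r - μ * r ^ a) ≤
      rs * Real.exp ((a * μ * rs ^ a - 1) / rs * rs - μ * rs ^ a) := by
  set c := (a * μ * rs ^ a - 1) / rs with hcdef
  have key : r / rs - 1 + (c * r - μ * r ^ a) ≤ c * rs - μ * rs ^ a := by
    have hb := mul_le_mul_of_nonneg_left (bern0 hr hrs ha) hμ.le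
    have h1 : r / rs - 1 + (c * r - c * rs) = μ * (a * (rs ^ a / rs) * (r - rs)) := by
      rw [hcdef]; field_simp; ring
    nlinarith
  have h2 : r ≤ rs * Real.exp (r / rs - 1) := by
    have h3 := Real.add_one_le_exp (r / rs - 1)
    have h4 : r / rs ≤ Real.exp (r / rs - 1) := by linarith
    calc r = rs * (r / rs) := by field_simp
      _ ≤ rs * Real.exp (r / rs - 1) := mul_le_mul_of_nonneg_left h4 hrs.le
  calc r * Real.exp (c * r - μ * r ^ a)
      ≤ rs * Real.exp (r / rs - 1) * Real.exp (c * r - μ * r ^ a) :=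
        mul_le_mul_of_nonneg_right h2 (Real.exp_nonneg _)
    _ = rs * Real.exp (r / rs - 1 + (c * r - μ * r ^ a)) := by
        rw [Real.exp_add]; ring
    _ ≤ rs * Real.exp (c * rs - μ * rs ^ a) :=
        mul_le_mul_of_nonneg_left (Real.exp_le_exp.mpr key) hrs.le


set_option maxHeartbeats 1000000 in
/-- Proposition b: if `p_j ≥ 1/2` for `j = d+1,…,n`, an extremal `h` on `𝔼'`
as in Lemma max(b) exists. -/
theorem stmt11 (n k : ℕ) (hn : 2 ≤ n) (hk1 : 1 ≤ k) (hkn : k ≤ n)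
    (p : Fin n → ℝ) (hp : ∀ j, 0 < p j)
    (z : Fin n → ℂ) (hz : z ∈ ellipsoid p) (hmon : monIncr p z k)
    (hznz : ∀ j : Fin n, (j : ℕ) < dd p z k → z j ≠ 0)
    (hdn : dd p z k < n)
    (hp' : ∀ j : Fin n, dd p z k ≤ (j : ℕ) → (1 : ℝ) / 2 ≤ p j) :
    ∃ h : (Fin (n - dd p z k) → ℂ) → ℂ,
      DifferentiableOn ℂ h (ellipsoid (pshift p (dd p z k))) ∧
      (∃ ζ ∈ ellipsoid (pshift p (dd p z k)), h ζ ≠ 0) ∧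
      (∀ ζ ∈ ellipsoid (pshift p (dd p z k)),
        (∏ j ∈ univ.filter (fun j : Fin (n - dd p z k) => dd p z k + (j : ℕ) < k), ζ j) = 0 →
          h ζ = 0) ∧
      (∀ ζ ∈ ellipsoid (pshift p (dd p z k)),
        ‖h ζ‖ * rrest p (dd p z k) ζ ^ qq p (dd p z k) ≤
          ‖h (zrest z (dd p z k))‖ *
            rrest p (dd p z k) (zrest z (dd p z k)) ^ qq p (dd p z k)) := by
  classical
  have hzE : ∑ j, ‖z j‖ ^ (2 * p j) < 1 := hz
  have ht0 : ∀ i : Fin n, (0:ℝ) ≤ ‖z i‖ ^ (2 * p i) :=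
    fun i => Real.rpow_nonneg (norm_nonneg _) _
  set Sd : Set ℕ := {s : ℕ | 1 ≤ s ∧ s ≤ k ∧
    ∀ hs : s - 1 < n,
      2 * p ⟨s - 1, hs⟩ * ‖z ⟨s - 1, hs⟩‖ ^ (2 * p ⟨s - 1, hs⟩) ≤ cc p z s}
    with hSddef
  have hbdd : BddAbove Sd := ⟨k, fun s hs => hs.2.1⟩
  have h1mem : 1 ∈ Sd := by
    refine ⟨le_refl 1, hk1, fun hs => ?_⟩
    show 2 * p ⟨0, hs⟩ * ‖z ⟨0, hs⟩‖ ^ (2 * p ⟨0, hs⟩) ≤ cc p z 1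
    have hq1 : qq p 1 = (2 * p ⟨0, hs⟩)⁻¹ := by
      unfold qq
      have he : univ.filter (fun j : Fin n => (j : ℕ) < 1) = {⟨0, hs⟩} := by
        ext j; simp [Fin.ext_iff, Nat.lt_one_iff]
      rw [he, Finset.sum_singleton]
    have hsplit : (univ : Finset (Fin n)) = insert (⟨0, hs⟩ : Fin n)
        (univ.filter fun j : Fin n => 1 ≤ (j : ℕ)) := by
      ext j; simp [Fin.ext_iff]; omega
    have hnotmem : (⟨0, hs⟩ : Fin n) ∉ univ.filter fun j : Fin n => 1 ≤ (j : ℕ) := by simp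
    have hsum : ‖z ⟨0, hs⟩‖ ^ (2 * p ⟨0, hs⟩) +
        ∑ j ∈ univ.filter (fun j : Fin n => 1 ≤ (j : ℕ)),
          ‖z j‖ ^ (2 * p j) < 1 := by
      have hzE' := hzE
      rw [hsplit, Finset.sum_insert hnotmem] at hzE'
      exact hzE'
    have hrr1 : rr p z 1 = 1 - ∑ j ∈ univ.filter (fun j : Fin n => 1 ≤ (j : ℕ)),
        ‖z j‖ ^ (2 * p j) := rfl
    rw [cc, hq1, hrr1, div_eq_mul_inv, inv_inv]
    have hp0 : 0 < 2 * p ⟨0, hs⟩ := by have := hp ⟨0, hs⟩; linarith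
    nlinarith [hsum, ht0 ⟨0, hs⟩]
  have hDmem : dd p z k ∈ Sd := Nat.sSup_mem ⟨1, h1mem⟩ hbdd
  have hsupSd : sSup Sd = dd p z k := by rw [hSddef]; rfl
  set D := dd p z k with hDdef
  obtain ⟨hD1, hDk, hDcond⟩ := hDmem
  have hm : ∀ j : Fin (n - D), D + (j : ℕ) < n := fun j => by omega
  have hpsh : ∀ j : Fin (n - D), pshift p D j = p ⟨D + (j:ℕ), hm j⟩ := fun j => dif_pos (hm j)
  have hzsh : ∀ j : Fin (n - D), zrest z D j = z ⟨D + (j:ℕ), hm j⟩ := fun j => dif_pos (hm j)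
  have half : ∀ j : Fin (n - D), 1 ≤ 2 * pshift p D j := by
    intro j
    have := hp' ⟨D + (j:ℕ), hm j⟩ (by simp)
    rw [hpsh j]; linarith
  have hreindex : ∀ f : Fin n → ℝ, (∑ j : Fin (n - D), f ⟨D + (j:ℕ), hm j⟩)
      = ∑ i ∈ univ.filter (fun i : Fin n => D ≤ (i:ℕ)), f i := by
    intro f
    refine Finset.sum_nbij' (i := fun j : Fin (n-D) => (⟨D + (j:ℕ), hm j⟩ : Fin n))
      (j := fun i : Fin n => (⟨(i:ℕ) - D, by omega⟩ : Fin (n - D)))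
      ?_ ?_ ?_ ?_ ?_
    · intro a _; simp
    · intro a _; simp
    · intro a _; ext; simp
    · intro a ha; simp only [Finset.mem_filter, Finset.mem_univ, true_and] at ha
      ext; simp; omega
    · intro a _; rfl
  have hxs_eq : (∑ j : Fin (n - D), ‖zrest z D j‖ ^ (2 * pshift p D j))
      = ∑ i ∈ univ.filter (fun i : Fin n => D ≤ (i:ℕ)), ‖z i‖ ^ (2 * p i) := by
    rw [← hreindex (fun i => ‖z i‖ ^ (2 * p i))]
    exact Finset.sum_congr rfl fun j _ => by rw [hzsh j, hpsh j]
  have hQ0 : 0 < qq p D := by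
    unfold qq
    apply Finset.sum_pos
    · intro i _; have := hp i; positivity
    · refine ⟨⟨0, by omega⟩, ?_⟩
      simp only [Finset.mem_filter, Finset.mem_univ, true_and]
      omega
  have hsub : ∑ i ∈ univ.filter (fun i : Fin n => D ≤ (i:ℕ)),
        ‖z i‖ ^ (2 * p i) ≤ ∑ i, ‖z i‖ ^ (2 * p i) :=
    Finset.sum_le_sum_of_subset_of_nonneg (Finset.subset_univ _) (fun i _ _ => ht0 i)
  have hR0 : 0 < rr p z D := by unfold rr; linarith
  set Q := qq p D with hQdef
  set R := rr p z D with hRdef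
  set μ := Q / R with hμdef
  have hμ0 : 0 < μ := div_pos hQ0 hR0
  -- failure of the dd-condition at D + 1
  have hfail : D < k →
      cc p z (D + 1) < 2 * p ⟨D, hdn⟩ * ‖z ⟨D, hdn⟩‖ ^ (2 * p ⟨D, hdn⟩) := by
    intro hDk'
    by_contra hcon
    push_neg at hcon
    have hmem : (D + 1) ∈ Sd := by
      refine ⟨by omega, by omega, fun hs => ?_⟩
      have he : (⟨D + 1 - 1, hs⟩ : Fin n) = ⟨D, hdn⟩ := by ext; simp
      rw [he]
      exact hcon
    have hle := le_csSup hbdd hmem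
    rw [hsupSd] at hle
    omega
  have hsplitq : univ.filter (fun j : Fin n => (j:ℕ) < D + 1)
      = insert (⟨D, hdn⟩ : Fin n) (univ.filter fun j : Fin n => (j:ℕ) < D) := by
    ext j; simp [Fin.ext_iff]; omega
  have hsplitr : univ.filter (fun j : Fin n => D ≤ (j:ℕ))
      = insert (⟨D, hdn⟩ : Fin n) (univ.filter fun j : Fin n => D + 1 ≤ (j:ℕ)) := by
    ext j; simp [Fin.ext_iff]; omega
  have hnm1 : (⟨D, hdn⟩ : Fin n) ∉ univ.filter fun j : Fin n => (j:ℕ) < D := by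
    simp only [Finset.mem_filter, Finset.mem_univ, true_and, Fin.val_mk]; omega
  have hnm2 : (⟨D, hdn⟩ : Fin n) ∉ univ.filter fun j : Fin n => D + 1 ≤ (j:ℕ) := by
    simp only [Finset.mem_filter, Finset.mem_univ, true_and, Fin.val_mk]; omega
  have hqsucc : qq p (D+1) = (2 * p ⟨D, hdn⟩)⁻¹ + Q := by
    rw [hQdef]
    unfold qq
    rw [hsplitq, Finset.sum_insert hnm1]
  have hrsucc : rr p z (D+1) = R + ‖z ⟨D,hdn⟩‖ ^ (2 * p ⟨D,hdn⟩) := by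
    rw [hRdef]
    unfold rr
    rw [hsplitr, Finset.sum_insert hnm2]
    ring
  have hkey : D < k → R / Q <
      2 * p ⟨D,hdn⟩ * ‖z ⟨D,hdn⟩‖ ^ (2 * p ⟨D,hdn⟩) := by
    intro hDk'
    have hA := hfail hDk'
    have hpD : 0 < 2 * p ⟨D,hdn⟩ := by have := hp ⟨D,hdn⟩; linarith
    have hdenom : 0 < (2 * p ⟨D,hdn⟩)⁻¹ + Q := by positivity
    have hcc : cc p z (D+1) = (R + ‖z ⟨D,hdn⟩‖ ^ (2 * p ⟨D,hdn⟩))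
        / ((2 * p ⟨D,hdn⟩)⁻¹ + Q) := by
      unfold cc; rw [hqsucc, hrsucc]
    rw [hcc, div_lt_iff₀ hdenom] at hA
    rw [mul_add] at hA
    have ht_eq : 2 * p ⟨D,hdn⟩ * ‖z ⟨D,hdn⟩‖ ^ (2 * p ⟨D,hdn⟩)
        * (2 * p ⟨D,hdn⟩)⁻¹ = ‖z ⟨D,hdn⟩‖ ^ (2 * p ⟨D,hdn⟩) := by
      have := (hp ⟨D,hdn⟩).ne'
      field_simp
    rw [ht_eq] at hA
    rw [div_lt_iff₀ hQ0]
    linarith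
  have hc1 : ∀ j : Fin (n - D), D + (j:ℕ) < k →
      1 ≤ 2 * pshift p D j * μ * ‖zrest z D j‖ ^ (2 * pshift p D j) := by
    intro j hjk
    have hDk' : D < k := by omega
    have hkey' := hkey hDk'
    have hjn : D + (j:ℕ) < n := hm j
    have hmono := hmon ⟨D, hdn⟩ ⟨D + (j:ℕ), hjn⟩ hjk (by simp [Fin.le_def])
    have h2 : R / Q < 2 * p ⟨D + (j:ℕ), hjn⟩
        * ‖z ⟨D + (j:ℕ), hjn⟩‖ ^ (2 * p ⟨D + (j:ℕ), hjn⟩) := by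
      nlinarith [hkey', hmono]
    rw [div_lt_iff₀ hQ0] at h2
    rw [hpsh j, hzsh j, hμdef]
    rw [show 2 * p ⟨D + (j:ℕ), hjn⟩ * (Q / R)
          * ‖z ⟨D + (j:ℕ), hjn⟩‖ ^ (2 * p ⟨D + (j:ℕ), hjn⟩)
        = 2 * p ⟨D + (j:ℕ), hjn⟩
          * ‖z ⟨D + (j:ℕ), hjn⟩‖ ^ (2 * p ⟨D + (j:ℕ), hjn⟩) * Q / R from by ring]
    rw [le_div_iff₀ hR0, one_mul]
    linarith [h2]
  have hz'ne : ∀ j : Fin (n - D), D + (j:ℕ) < k → zrest z D j ≠ 0 := by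
    intro j hjk h0
    have hcc := hc1 j hjk
    rw [h0] at hcc
    rw [norm_zero, Real.zero_rpow (by have := half j; intro hcon; rw [hcon] at this; linarith)]
      at hcc
    rw [mul_zero] at hcc
    linarith
  -- the coefficients of the extremal function
  set cR : Fin (n - D) → ℝ := fun j =>
    if D + (j:ℕ) < k then
      (2 * pshift p D j * μ * ‖zrest z D j‖ ^ (2 * pshift p D j) - 1)
        / ‖zrest z D j‖
    else 2 * pshift p D j * μ * ‖zrest z D j‖ ^ (2 * pshift p D j)
        / ‖zrest z D j‖
    with hcRdef
  have hcR0 : ∀ j : Fin (n - D), 0 ≤ cR j := by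
    intro j
    simp only [hcRdef]
    split_ifs with hjk
    · exact div_nonneg (by linarith [hc1 j hjk]) (norm_nonneg _)
    · apply div_nonneg _ (norm_nonneg _)
      have h1 := half j
      have h2 : (0:ℝ) ≤ ‖zrest z D j‖ ^ (2 * pshift p D j) :=
        Real.rpow_nonneg (norm_nonneg _) _
      exact mul_nonneg (mul_nonneg (by linarith) hμ0.le) h2
  set b : Fin (n - D) → ℂ := fun j =>
    if zrest z D j = 0 then 0
    else ((cR j / ‖zrest z D j‖ : ℝ) : ℂ) * (starRingEnd ℂ) (zrest z D j)
    with hbdef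
  have habsb : ∀ j, zrest z D j ≠ 0 → ‖b j‖ = cR j := by
    intro j hne
    simp only [hbdef, if_neg hne]
    rw [norm_mul, Complex.norm_conj, Complex.norm_real, Real.norm_eq_abs,
      abs_of_nonneg (div_nonneg (hcR0 j) (norm_nonneg _)),
      div_mul_cancel₀ _ (norm_pos_iff.mpr hne).ne']
  have hre_le : ∀ (j : Fin (n - D)) (w : ℂ), (b j * w).re ≤ cR j * ‖w‖ := by
    intro j w
    by_cases hne : zrest z D j = 0
    · simp only [hbdef, if_pos hne, zero_mul, Complex.zero_re]
      exact mul_nonneg (hcR0 j) (norm_nonneg w)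
    · calc (b j * w).re ≤ ‖b j * w‖ := Complex.re_le_norm _
        _ = ‖b j‖ * ‖w‖ := norm_mul _ _
        _ = cR j * ‖w‖ := by rw [habsb j hne]
  have hre_eq : ∀ j : Fin (n - D), zrest z D j ≠ 0 →
      (b j * zrest z D j).re = cR j * ‖zrest z D j‖ := by
    intro j hne
    simp only [hbdef, if_neg hne]
    rw [mul_assoc, mul_comm ((starRingEnd ℂ) (zrest z D j)) (zrest z D j),
      Complex.mul_conj]
    rw [← Complex.ofReal_mul, Complex.ofReal_re]
    rw [Complex.normSq_eq_norm_sq, sq]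
    have hane : ‖zrest z D j‖ ≠ 0 := (norm_pos_iff.mpr hne).ne'
    field_simp
  -- the extremal function
  set h : (Fin (n - D) → ℂ) → ℂ := fun ζ =>
    (∏ j ∈ univ.filter (fun j : Fin (n - D) => D + (j:ℕ) < k), ζ j)
      * Complex.exp (∑ j, b j * ζ j) with hhdef
  -- the coordinate factors
  set F : Fin (n - D) → ℂ → ℝ := fun j w =>
    (if D + (j:ℕ) < k then ‖w‖ else 1)
      * Real.exp ((b j * w).re - μ * ‖w‖ ^ (2 * pshift p D j)) with hFdef
  have hF0 : ∀ (j : Fin (n - D)) (w : ℂ), 0 ≤ F j w := by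
    intro j w
    simp only [hFdef]
    apply mul_nonneg _ (Real.exp_nonneg _)
    split_ifs
    exacts [norm_nonneg _, zero_le_one]
  have hfact : ∀ ξ : Fin (n - D) → ℂ,
      ‖h ξ‖
          * Real.exp (-(μ * ∑ j, ‖ξ j‖ ^ (2 * pshift p D j)))
        = ∏ j, F j (ξ j) := by
    intro ξ
    have e1 : ‖h ξ‖ =
        (∏ j ∈ univ.filter (fun j : Fin (n - D) => D + (j:ℕ) < k), ‖ξ j‖)
          * Real.exp (∑ j, (b j * ξ j).re) := by
      simp only [hhdef]
      rw [norm_mul, norm_prod, Complex.norm_exp, Complex.re_sum]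
    have e2 : (∏ j, F j (ξ j)) =
        (∏ j ∈ univ.filter (fun j : Fin (n - D) => D + (j:ℕ) < k), ‖ξ j‖)
          * Real.exp (∑ j, ((b j * ξ j).re
              - μ * ‖ξ j‖ ^ (2 * pshift p D j))) := by
      simp only [hFdef]
      rw [Finset.prod_mul_distrib, Real.exp_sum, Finset.prod_filter]
    rw [e1, e2, mul_assoc, ← Real.exp_add]
    congr 2
    rw [Finset.sum_sub_distrib, Finset.mul_sum]
    ring
  have hFle : ∀ (j : Fin (n - D)) (w : ℂ), F j w ≤ F j (zrest z D j) := by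
    intro j w
    have ha := half j
    by_cases hjk : D + (j:ℕ) < k
    · have hne := hz'ne j hjk
      have hrs : 0 < ‖zrest z D j‖ := norm_pos_iff.mpr hne
      have hcr_eq : cR j = (2 * pshift p D j * μ
          * ‖zrest z D j‖ ^ (2 * pshift p D j) - 1)
            / ‖zrest z D j‖ := by
        simp only [hcRdef, if_pos hjk]
      have step1 : F j w ≤ ‖w‖ *
          Real.exp (cR j * ‖w‖ - μ * ‖w‖ ^ (2 * pshift p D j)) := by
        simp only [hFdef, if_pos hjk]
        apply mul_le_mul_of_nonneg_left _ (norm_nonneg w)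
        apply Real.exp_le_exp.mpr
        have := hre_le j w
        linarith
      have step2 : ‖w‖ *
          Real.exp (cR j * ‖w‖ - μ * ‖w‖ ^ (2 * pshift p D j))
          ≤ ‖zrest z D j‖ * Real.exp (cR j * ‖zrest z D j‖
              - μ * ‖zrest z D j‖ ^ (2 * pshift p D j)) := by
        rw [hcr_eq]
        exact lemS ha hμ0 hrs (‖w‖) (norm_nonneg w)
      have step3 : ‖zrest z D j‖ * Real.exp (cR j * ‖zrest z D j‖
          - μ * ‖zrest z D j‖ ^ (2 * pshift p D j)) = F j (zrest z D j) := by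
        simp only [hFdef, if_pos hjk]
        rw [hre_eq j hne]
      rw [← step3]
      exact le_trans step1 step2
    · by_cases hne : zrest z D j = 0
      · have h0 : F j (zrest z D j) = 1 := by
          simp only [hFdef, if_neg hjk, hbdef, if_pos hne, hne]
          rw [norm_zero, Real.zero_rpow (by intro hcon; rw [hcon] at ha; linarith)]
          simp
        have h1 : F j w ≤ 1 := by
          simp only [hFdef, if_neg hjk, hbdef, if_pos hne]
          simp only [zero_mul, Complex.zero_re, zero_sub, one_mul]
          rw [Real.exp_le_one_iff]
          have : (0:ℝ) ≤ ‖w‖ ^ (2 * pshift p D j) :=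
            Real.rpow_nonneg (norm_nonneg _) _
          nlinarith [hμ0.le]
        rw [h0]; exact h1
      · have hrs : 0 < ‖zrest z D j‖ := norm_pos_iff.mpr hne
        have hcr_eq : cR j = 2 * pshift p D j * μ
            * ‖zrest z D j‖ ^ (2 * pshift p D j)
              / ‖zrest z D j‖ := by
          simp only [hcRdef, if_neg hjk]
        have key := lemNS ha hμ0 hrs (‖w‖) (norm_nonneg w)
        simp only [hFdef, if_neg hjk, one_mul]
        apply Real.exp_le_exp.mpr
        have h1 := hre_le j w
        rw [hre_eq j hne, hcr_eq]
        rw [hcr_eq] at h1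
        linarith
  -- membership of the restricted point
  have hz'mem : zrest z D ∈ ellipsoid (pshift p D) := by
    show (∑ j, ‖zrest z D j‖ ^ (2 * pshift p D j)) < 1
    rw [hxs_eq]
    exact lt_of_le_of_lt hsub hzE
  have hrrz' : rrest p D (zrest z D) = R := by
    show 1 - (∑ j, ‖zrest z D j‖ ^ (2 * pshift p D j)) = R
    rw [hxs_eq, hRdef]
    rfl
  refine ⟨h, ?_, ?_, ?_, ?_⟩
  · -- differentiability
    apply Differentiable.differentiableOn
    simp only [hhdef]
    apply Differentiable.mul
    · have hprodDiff : ∀ s : Finset (Fin (n - D)),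
          Differentiable ℂ fun y : Fin (n - D) → ℂ => ∏ j ∈ s, y j := by
        intro s
        induction s using Finset.induction with
        | empty => simpa using differentiable_const (1 : ℂ)
        | insert a s' hx ih =>
            have : (fun y : Fin (n - D) → ℂ => ∏ j ∈ insert a s', y j)
                = fun y : Fin (n - D) → ℂ => y a * ∏ j ∈ s', y j := by
              funext y; rw [Finset.prod_insert hx]
            rw [this]
            exact (differentiable_apply _).mul ih
      exact hprodDiff _
    · fun_prop
  · -- not identically zero
    refine ⟨zrest z D, hz'mem, ?_⟩
    simp only [hhdef]
    apply mul_ne_zero _ (Complex.exp_ne_zero _)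
    rw [Finset.prod_ne_zero_iff]
    intro j hj
    exact hz'ne j (Finset.mem_filter.mp hj).2
  · -- vanishing on the analytic set
    intro ζ _ hprod
    simp only [hhdef]
    exact mul_eq_zero_of_left hprod _
  · -- the maximality
    intro ζ hζ
    have hζ1 : (∑ j, ‖ζ j‖ ^ (2 * pshift p D j)) < 1 := hζ
    set x := ∑ j, ‖ζ j‖ ^ (2 * pshift p D j) with hxdef
    set xs := ∑ j, ‖zrest z D j‖ ^ (2 * pshift p D j) with hxsdef
    have hRxs : R = 1 - xs := by
      rw [hRdef, hxs_eq]
      rfl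
    have hrrζ : rrest p D ζ = 1 - x := by
      show 1 - (∑ j, ‖ζ j‖ ^ (2 * pshift p D j)) = 1 - x
      rw [hxdef]
    have hfactζ := hfact ζ
    have hfactz := hfact (zrest z D)
    rw [← hxdef] at hfactζ
    rw [← hxsdef] at hfactz
    have hR1x : (1 : ℝ) - x ≤ R * Real.exp ((xs - x) / R) := by
      have hexp := Real.add_one_le_exp ((xs - x) / R)
      have h3 := mul_le_mul_of_nonneg_left hexp hR0.le
      have heq : R * ((xs - x) / R + 1) = xs - x + R := by
        rw [mul_add, mul_one, mul_div_cancel₀ _ hR0.ne']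
      have heq2 : xs - x + R = 1 - x := by rw [hRxs]; ring
      nlinarith [h3]
    have key1 : rrest p D ζ ^ Q ≤ R ^ Q * Real.exp (μ * (xs - x)) := by
      rw [hrrζ]
      have h1 : ((1:ℝ) - x) ^ Q ≤ (R * Real.exp ((xs - x)/R)) ^ Q :=
        Real.rpow_le_rpow (by linarith) hR1x hQ0.le
      have h2 : (R * Real.exp ((xs - x)/R)) ^ Q = R ^ Q * Real.exp (μ * (xs - x)) := by
        rw [Real.mul_rpow hR0.le (Real.exp_nonneg _), ← Real.exp_mul]
        congr 2
        rw [hμdef]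
        field_simp
      rw [h2] at h1
      exact h1
    have hone : Real.exp (μ * xs) * Real.exp (-(μ * xs)) = 1 := by
      rw [← Real.exp_add]; simp
    calc ‖h ζ‖ * rrest p D ζ ^ Q
        ≤ ‖h ζ‖ * (R ^ Q * Real.exp (μ * (xs - x))) :=
          mul_le_mul_of_nonneg_left key1 (norm_nonneg _)
      _ = (R ^ Q * Real.exp (μ * xs)) * (‖h ζ‖ * Real.exp (-(μ * x))) := by
          rw [show μ * (xs - x) = μ * xs + -(μ * x) by ring, Real.exp_add]
          ring
      _ = (R ^ Q * Real.exp (μ * xs)) * ∏ j, F j (ζ j) := by rw [hfactζ]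
      _ ≤ (R ^ Q * Real.exp (μ * xs)) * ∏ j, F j (zrest z D j) := by
          apply mul_le_mul_of_nonneg_left _ (by positivity)
          exact Finset.prod_le_prod (fun j _ => hF0 j _) (fun j _ => hFle j _)
      _ = (R ^ Q * Real.exp (μ * xs))
            * (‖h (zrest z D)‖ * Real.exp (-(μ * xs))) := by rw [hfactz]
      _ = ‖h (zrest z D)‖ * R ^ Q
            * (Real.exp (μ * xs) * Real.exp (-(μ * xs))) := by ring
      _ = ‖h (zrest z D)‖ * R ^ Q := by rw [hone, mul_one]
      _ = ‖h (zrest z D)‖ * rrest p D (zrest z D) ^ Q := by rw [hrrz']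
end

section
/- (Proposition c, concrete form.) Let n ≥ 2, 1 ≤ k ≤ n − 1, p_{k+1},…,p_n > 0 with p_{k+1} < 1/2, and let q > 0. Then there exists c' ∈ (0,1) such that for every holomorphic h : 𝔼' → ℂ with h ≢ 0, the function ζ ↦ |h(ζ)| · r(ζ)^{q} does not attain its maximum over 𝔼' at any point of the form (w, 0, …, 0) with 0 < |w| < c'. -/
open Finset

/-- Proposition c, concrete form: if `p_{k+1} < 1/2`, then for some `c' ∈ (0,1)`
no `h ∈ 𝒪(𝔼')`, `h ≢ 0`, can be such that `|h| r^q` attains its maximum over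
`𝔼'` at a point `(w,0,…,0)` with `0 < |w| < c'`. -/
theorem stmt12 (n k : ℕ) (hn : 2 ≤ n) (hk1 : 1 ≤ k) (hkn : k + 1 ≤ n)
    (p : Fin n → ℝ) (hp : ∀ j : Fin n, k ≤ (j : ℕ) → 0 < p j)
    (hpk : p ⟨k, by omega⟩ < 1 / 2)
    (q : ℝ) (hq : 0 < q) :
    ∃ c' : ℝ, 0 < c' ∧ c' < 1 ∧
      ∀ h : (Fin (n - k) → ℂ) → ℂ,
        DifferentiableOn ℂ h (ellipsoid (pshift p k)) →
        (∃ ζ ∈ ellipsoid (pshift p k), h ζ ≠ 0) →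
        ∀ w : ℂ, 0 < ‖w‖ → ‖w‖ < c' →
          ¬ (∀ ζ ∈ ellipsoid (pshift p k),
            ‖h ζ‖ * rrest p k ζ ^ q ≤
              ‖h (fun j => if (j : ℕ) = 0 then w else 0)‖ *
                rrest p k (fun j => if (j : ℕ) = 0 then w else 0) ^ q) := by
  classical
  haveI : NeZero (n - k) := ⟨by omega⟩
  set p' : Fin (n - k) → ℝ := pshift p k with hp'def
  have hp' : ∀ j, 0 < p' j := by
    intro j
    have hj : k + (j : ℕ) < n := by omega
    simp only [hp'def, pshift, dif_pos hj]
    exact hp _ (by simp)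
  set P : ℝ := p' 0 with hPdef
  have hP0 : 0 < P := hp' 0
  have hP2 : P < 1 / 2 := by
    have hj : k + ((0 : Fin (n - k)) : ℕ) < n := by omega
    have he : (⟨k + ((0 : Fin (n - k)) : ℕ), hj⟩ : Fin n) = ⟨k, by omega⟩ := by
      ext; simp
    simp only [hPdef, hp'def, pshift, dif_pos hj, he]
    exact hpk
  have h2P : 0 < 1 - 2 * P := by linarith
  -- constants
  set κ : ℝ := (1 - (1 / 2 : ℝ) ^ (2 * P)) ^ q with hκdef
  have hhalf : (1 / 2 : ℝ) ^ (2 * P) < 1 :=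
    Real.rpow_lt_one (by norm_num) (by norm_num) (by linarith)
  have hhalf0 : (0:ℝ) < (1 / 2 : ℝ) ^ (2 * P) := Real.rpow_pos_of_pos (by norm_num) _
  have hκ0 : 0 < κ := Real.rpow_pos_of_pos (by linarith) q
  set q' : ℝ := min q 1 with hq'def
  have hq'0 : 0 < q' := lt_min hq one_pos
  have hq'1 : q' ≤ 1 := min_le_right _ _
  have hq'q : q' ≤ q := min_le_left _ _
  set C : ℝ := 4 / (κ * q') with hCdef
  have hC0 : 0 < C := by positivity
  refine ⟨min (1 / 2) ((1 / C) ^ (1 - 2 * P)⁻¹),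
    lt_min (by norm_num) (Real.rpow_pos_of_pos (by positivity) _),
    lt_of_le_of_lt (min_le_left _ _) (by norm_num), ?_⟩
  rintro h hdiff ⟨ζ₀, hζ₀, hζne⟩ w hw0 hwc Hmax
  set ρ : ℝ := ‖w‖ with hρdef
  have hρh : ρ < 1 / 2 := lt_of_lt_of_le hwc (min_le_left _ _)
  have hρβ : ρ < (1 / C) ^ (1 - 2 * P)⁻¹ := lt_of_lt_of_le hwc (min_le_right _ _)
  have hρ1 : ρ < 1 := by linarith
  -- the slice map
  set e : ℂ → (Fin (n - k) → ℂ) := fun t j => if (j : ℕ) = 0 then t else 0 with hedef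
  have hsum : ∀ t : ℂ, ∑ j, ‖e t j‖ ^ (2 * p' j) = ‖t‖ ^ (2 * P) := by
    intro t
    rw [Fintype.sum_eq_single (0 : Fin (n - k))]
    · simp [hedef, hPdef]
    · intro j hj
      have hj' : (j : ℕ) ≠ 0 := by
        intro h0
        exact hj (Fin.val_injective (by simp [h0]))
      simp [hedef, hj', hj, Real.zero_rpow (by linarith [hp' j] : (2 : ℝ) * p' j ≠ 0)]
  have hrrest : ∀ t : ℂ, rrest p k (e t) = 1 - ‖t‖ ^ (2 * P) := by
    intro t
    simp only [rrest, ← hp'def, hsum]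
  have hmem : ∀ t : ℂ, ‖t‖ < 1 → e t ∈ ellipsoid p' := by
    intro t ht
    simp only [ellipsoid, Set.mem_setOf_eq, hsum]
    exact Real.rpow_lt_one (norm_nonneg t) ht (by linarith)
  -- translate Hmax
  have Hmax' : ∀ ζ ∈ ellipsoid p', ‖h ζ‖ * rrest p k ζ ^ q ≤
      ‖h (e w)‖ * rrest p k (e w) ^ q := Hmax
  set u₀ : ℝ := ‖h (e w)‖ with hu₀def
  set u : ℝ := ρ ^ (2 * P) with hudef
  have hu0 : 0 < u := Real.rpow_pos_of_pos hw0 _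
  have hu1 : u < 1 := Real.rpow_lt_one (norm_nonneg w) hρ1 (by linarith)
  have hrw : rrest p k (e w) = 1 - u := hrrest w
  have hr0 : 0 < 1 - u := by linarith
  have hr0q1 : (1 - u) ^ q < 1 := Real.rpow_lt_one (by linarith) (by linarith) hq
  have hr0q0 : 0 < (1 - u) ^ q := Real.rpow_pos_of_pos hr0 q
  -- u₀ > 0
  have hu₀ : 0 < u₀ := by
    have hζr : 0 < rrest p k ζ₀ := by
      simp only [ellipsoid, Set.mem_setOf_eq, ← hp'def] at hζ₀
      simp only [rrest, ← hp'def]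
      linarith
    have h1 : 0 < ‖h ζ₀‖ * rrest p k ζ₀ ^ q :=
      mul_pos (norm_pos_iff.mpr hζne) (Real.rpow_pos_of_pos hζr q)
    have h2 := Hmax' ζ₀ hζ₀
    rcases mul_pos_iff.mp (lt_of_lt_of_le h1 h2) with ⟨ha, _⟩ | ⟨_, hb⟩
    · exact ha
    · exact absurd hb (not_lt.mpr (Real.rpow_nonneg (by rw [hrw]; linarith) q))
  -- bound on |h (e t)| for |t| < 1/2
  have hbound : ∀ t : ℂ, ‖t‖ < 1 / 2 →
      ‖h (e t)‖ ≤ u₀ * (1 - u) ^ q / κ := by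
    intro t ht
    have hme := Hmax' (e t) (hmem t (by linarith))
    rw [hrrest t, hrw] at hme
    have htP : ‖t‖ ^ (2 * P) ≤ (1 / 2 : ℝ) ^ (2 * P) :=
      Real.rpow_le_rpow (norm_nonneg t) ht.le (by linarith)
    have hκle : κ ≤ (1 - ‖t‖ ^ (2 * P)) ^ q :=
      Real.rpow_le_rpow (by linarith) (by linarith) hq.le
    have h3 : ‖h (e t)‖ * κ ≤ u₀ * (1 - u) ^ q :=
      le_trans (mul_le_mul_of_nonneg_left hκle (norm_nonneg _)) hme
    rw [le_div_iff₀ hκ0]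
    exact h3
  -- g is differentiable on the ball
  have hediff : Differentiable ℂ e := by
    have hev : e = fun t => t • (e 1) := by
      funext t j
      simp only [hedef, Pi.smul_apply, smul_eq_mul]
      split <;> simp
    rw [hev]
    exact differentiable_id.smul_const (e 1)
  have hgdiff : DifferentiableOn ℂ (fun t => h (e t)) (Metric.ball 0 (1 / 2)) := by
    apply hdiff.comp (hediff.differentiableOn)
    intro t ht
    rw [mem_ball_zero_iff] at ht
    exact hmem t (by linarith)
  -- Schwarz
  set g : ℂ → ℂ := fun t => h (e t) with hgdef
  have hmaps : Set.MapsTo g (Metric.ball 0 (1 / 2)) (Metric.ball (g 0) (2 * u₀ / κ)) := by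
    intro t ht
    rw [mem_ball_zero_iff] at ht
    rw [Metric.mem_ball]
    have h1 : dist (g t) (g 0) ≤ ‖g t‖ + ‖g 0‖ := by
      exact dist_le_norm_add_norm _ _
    have h2 := hbound t ht
    have h3 := hbound 0 (by simp)
    have h4 : u₀ * (1 - u) ^ q / κ < u₀ / κ := by
      rw [div_lt_div_iff₀ hκ0 hκ0]
      nlinarith [mul_pos hu₀ hκ0]
    calc dist (g t) (g 0) ≤ ‖g t‖ + ‖g 0‖ := h1
      _ ≤ u₀ * (1 - u) ^ q / κ + u₀ * (1 - u) ^ q / κ := add_le_add h2 h3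
      _ < u₀ / κ + u₀ / κ := by linarith
      _ = 2 * u₀ / κ := by ring
  have hwball : w ∈ Metric.ball (0 : ℂ) (1 / 2) := by
    rw [mem_ball_zero_iff]; exact hρh
  have hschwarz := Complex.dist_le_div_mul_dist_of_mapsTo_ball hgdiff (hmaps.mono_right Metric.ball_subset_closedBall) hwball
  rw [dist_zero_right, ← hρdef] at hschwarz
  have hschwarz' : dist (g w) (g 0) ≤ 4 * u₀ / κ * ρ := by
    calc dist (g w) (g 0) ≤ 2 * u₀ / κ / (1 / 2) * ρ := hschwarz
      _ = 4 * u₀ / κ * ρ := by ring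
  -- |g 0| ≤ u₀ (1-u)^q
  have hg0 : ‖g 0‖ ≤ u₀ * (1 - u) ^ q := by
    have hme := Hmax' (e 0) (hmem 0 (by simp))
    rw [hrrest 0, hrw] at hme
    simpa [Real.zero_rpow (by linarith : (2 : ℝ) * P ≠ 0), Real.one_rpow] using hme
  -- main inequality
  have hmain : u₀ ≤ 4 * u₀ / κ * ρ + u₀ * (1 - u) ^ q := by
    calc u₀ = dist (g w) 0 := by rw [dist_zero_right]
      _ ≤ dist (g w) (g 0) + dist (g 0) 0 := dist_triangle _ _ _
      _ ≤ 4 * u₀ / κ * ρ + ‖g 0‖ := by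
          rw [dist_zero_right]; exact add_le_add hschwarz' le_rfl
      _ ≤ 4 * u₀ / κ * ρ + u₀ * (1 - u) ^ q := add_le_add le_rfl hg0
  -- Bernoulli
  have hbern : (1 - u) ^ q ≤ 1 - q' * u := by
    have hb1 : (1 - u) ^ q ≤ (1 - u) ^ q' :=
      Real.rpow_le_rpow_of_exponent_ge hr0 (by linarith) hq'q
    have hb2 := rpow_one_add_le_one_add_mul_self (show (-1 : ℝ) ≤ -u by linarith) hq'0.le hq'1
    rw [show (1 : ℝ) + -u = 1 - u by ring, show (1 : ℝ) + q' * -u = 1 - q' * u by ring] at hb2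
    linarith
  -- derive q' * u ≤ 4 / κ * ρ
  have hkey : q' * u ≤ 4 / κ * ρ := by
    have h5a : u₀ * (1 - u) ^ q ≤ u₀ * (1 - q' * u) :=
      mul_le_mul_of_nonneg_left hbern hu₀.le
    have h5b : u₀ * (1 - q' * u) = u₀ - u₀ * (q' * u) := by ring
    have h5c : (4 : ℝ) * u₀ / κ * ρ = u₀ * (4 / κ * ρ) := by ring
    have h5 : u₀ * (q' * u) ≤ u₀ * (4 / κ * ρ) := by
      rw [h5b] at h5a
      rw [← h5c]
      linarith
    exact le_of_mul_le_mul_left h5 hu₀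
  -- contradiction: 4/κ * ρ < q' * u
  have hx : ρ ^ (1 - 2 * P) < 1 / C := by
    have h6 : ρ ^ (1 - 2 * P) < ((1 / C) ^ (1 - 2 * P)⁻¹) ^ (1 - 2 * P) :=
      Real.rpow_lt_rpow (norm_nonneg w) hρβ h2P
    rwa [← Real.rpow_mul (by positivity : (0:ℝ) ≤ 1 / C),
      inv_mul_cancel₀ (by linarith : (1 - 2 * P) ≠ 0), Real.rpow_one] at h6
  have hCρu : C * ρ < u := by
    have h7 : ρ = ρ ^ (1 - 2 * P) * u := by
      rw [hudef, ← Real.rpow_add hw0]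
      norm_num
    have h8 : C * ρ ^ (1 - 2 * P) < 1 := by
      have := mul_lt_mul_of_pos_left hx hC0
      rwa [mul_one_div, div_self hC0.ne'] at this
    calc C * ρ = C * ρ ^ (1 - 2 * P) * u := by rw [mul_assoc, ← h7]
      _ < 1 * u := mul_lt_mul_of_pos_right h8 hu0
      _ = u := one_mul u
  have hcontr : 4 / κ * ρ < q' * u := by
    have h9 : 4 / κ = q' * C := by
      rw [hCdef]; field_simp [hκ0.ne', hq'0.ne']
    calc 4 / κ * ρ = q' * (C * ρ) := by rw [h9]; ring
      _ < q' * u := mul_lt_mul_of_pos_left hCρu hq'0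
  linarith
end

section
/- (Proposition d, concrete form.) Let p_1, p_2 > 0 and assume p_2 ≥ 1/2 or 8p_1 + 4p_2(1 − p_2) > 1. Let t_0 ∈ (0,1) satisfy t_0^{2p_2} > p_1/(p_1 + p_2). Then there exists a holomorphic function h : 𝔻 → ℂ, h ≢ 0, with h(0) = 0, such that the function ζ ↦ |h(ζ)| · (1 − |ζ|^{2p_2})^{1/(2p_1)} attains its maximum over 𝔻 at the point t_0. -/
open Real Set

private lemma Qpos13 {a c : ℝ} (ha : 0 < a) (hc : 0 < c)
    (hcond : 1 ≤ c ∨ (1 - c)^2 < 4*a) {x : ℝ} (hx0 : 0 < x) (hx1 : x < 1) :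
    0 < a*(1-x)^2 + c*x^2 + c*(c-1)*x := by
  rcases hcond with h | h
  · have h1 : 0 < a*(1-x)^2 := mul_pos ha (pow_pos (by linarith) 2)
    have h2 : 0 < c*x^2 := mul_pos hc (pow_pos hx0 2)
    have h3 : 0 ≤ c*(c-1)*x := mul_nonneg (mul_nonneg hc.le (by linarith)) hx0.le
    linarith
  · nlinarith [sq_nonneg (2*(a+c)*x - (2*a + c*(1-c))),
      mul_pos (mul_pos hc hc) (show (0:ℝ) < 4*a - (1-c)^2 by linarith)]

private lemma key13 (a c : ℝ) (ha : 0 < a) (hc : 0 < c)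
    (hcond : 1 ≤ c ∨ (1 - c)^2 < 4*a)
    (t₀ : ℝ) (ht0 : 0 < t₀) (ht1 : t₀ < 1) :
    ∀ r ∈ Set.Ico (0:ℝ) 1,
      r * Real.exp ((c/a * t₀ ^ (c-1) / (1 - t₀ ^ c) - t₀⁻¹) * r) * (1 - r ^ c) ^ a⁻¹ ≤
      t₀ * Real.exp ((c/a * t₀ ^ (c-1) / (1 - t₀ ^ c) - t₀⁻¹) * t₀) * (1 - t₀ ^ c) ^ a⁻¹ := by
  set s : ℝ := c/a * t₀ ^ (c-1) / (1 - t₀ ^ c) - t₀⁻¹ with hs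
  -- basic facts about r^c for r ∈ (0,1)
  have hxlt : ∀ r : ℝ, 0 < r → r < 1 → r ^ c < 1 := fun r h0 h1 =>
    Real.rpow_lt_one h0.le h1 hc
  have hxpos : ∀ r : ℝ, 0 < r → 0 < r ^ c := fun r h0 => Real.rpow_pos_of_pos h0 c
  set L : ℝ → ℝ := fun r => Real.log r + s*r + a⁻¹ * Real.log (1 - r^c) with hL
  set L' : ℝ → ℝ := fun r => r⁻¹ + s - c/a * r^(c-1) / (1 - r^c) with hL'
  -- first derivative
  have hDL : ∀ r ∈ Ioo (0:ℝ) 1, HasDerivAt L (L' r) r := by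
    intro r hr
    obtain ⟨hr0, hr1⟩ := hr
    have hden : (1 : ℝ) - r ^ c ≠ 0 := by have := hxlt r hr0 hr1; linarith
    have d1 : HasDerivAt (fun r : ℝ => Real.log r) r⁻¹ r := Real.hasDerivAt_log hr0.ne'
    have d2 : HasDerivAt (fun r : ℝ => s * r) s r := by
      simpa using (hasDerivAt_id r).const_mul s
    have d3 : HasDerivAt (fun r : ℝ => 1 - r ^ c) (-(c * r ^ (c-1))) r := by
      simpa using (Real.hasDerivAt_rpow_const (p := c) (Or.inl hr0.ne')).const_sub 1
    have d4 : HasDerivAt (fun r : ℝ => a⁻¹ * Real.log (1 - r ^ c))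
        (a⁻¹ * (-(c * r ^ (c-1)) / (1 - r ^ c))) r := (d3.log hden).const_mul a⁻¹
    refine ((d1.add d2).add d4).congr_deriv ?_
    simp only [hL']
    ring
  -- second derivative
  have hDL' : ∀ r ∈ Ioo (0:ℝ) 1, HasDerivAt L'
      (-(r^2)⁻¹ - c/a * (((c-1) * r^(c-1-1)) * (1 - r^c) - r^(c-1) * (-(c * r^(c-1)))) / (1 - r^c)^2) r := by
    intro r hr
    obtain ⟨hr0, hr1⟩ := hr
    have hden : (1 : ℝ) - r ^ c ≠ 0 := by have := hxlt r hr0 hr1; linarith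
    have d1 : HasDerivAt (fun r : ℝ => r⁻¹ + s) (-(r^2)⁻¹) r := by
      simpa using (hasDerivAt_inv hr0.ne').add_const s
    have dnum : HasDerivAt (fun r : ℝ => c/a * r^(c-1)) (c/a * ((c-1) * r^(c-1-1))) r :=
      (Real.hasDerivAt_rpow_const (p := c-1) (Or.inl hr0.ne')).const_mul (c/a)
    have dden : HasDerivAt (fun r : ℝ => 1 - r ^ c) (-(c * r ^ (c-1))) r := by
      simpa using (Real.hasDerivAt_rpow_const (p := c) (Or.inl hr0.ne')).const_sub 1
    have d2 := dnum.div dden hden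
    refine (d1.sub d2).congr_deriv ?_
    ring
  -- second derivative is negative
  have hneg : ∀ r ∈ Ioo (0:ℝ) 1,
      (-(r^2)⁻¹ - c/a * (((c-1) * r^(c-1-1)) * (1 - r^c) - r^(c-1) * (-(c * r^(c-1)))) / (1 - r^c)^2) < 0 := by
    intro r hr
    obtain ⟨hr0, hr1⟩ := hr
    have hx1 : r ^ c < 1 := hxlt r hr0 hr1
    have hx0 : 0 < r ^ c := hxpos r hr0
    have e1 : r ^ (c-1) = r ^ c / r := by rw [Real.rpow_sub hr0, Real.rpow_one]
    have e2 : r ^ (c-1-1) = r ^ c / r / r := by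
      rw [Real.rpow_sub hr0, e1, Real.rpow_one]
    set x := r ^ c with hx
    have hQ := Qpos13 ha hc hcond hx0 hx1
    have hrw : (-(r^2)⁻¹ - c/a * (((c-1) * r^(c-1-1)) * (1 - r^c) - r^(c-1) * (-(c * r^(c-1)))) / (1 - r^c)^2)
        = -((a*(1-x)^2 + c*x^2 + c*(c-1)*x) / (a * r^2 * (1-x)^2)) := by
      rw [e1, e2, ← hx]
      have hden : (1 : ℝ) - x ≠ 0 := by linarith
      have hr0' : r ≠ 0 := hr0.ne'
      have ha0 : a ≠ 0 := ha.ne'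
      field_simp
      ring
    rw [hrw]
    have : 0 < (a*(1-x)^2 + c*x^2 + c*(c-1)*x) / (a * r^2 * (1-x)^2) := by
      apply div_pos hQ
      have : (0:ℝ) < 1 - x := by linarith
      positivity
    linarith
  -- L' is strictly decreasing on (0,1)
  have hanti : StrictAntiOn L' (Ioo (0:ℝ) 1) := by
    apply strictAntiOn_of_deriv_neg (convex_Ioo 0 1)
    · exact fun r hr => ((hDL' r hr).continuousAt).continuousWithinAt
    · intro r hr
      rw [interior_Ioo] at hr
      rw [(hDL' r hr).deriv]
      exact hneg r hr
  have htmem : t₀ ∈ Ioo (0:ℝ) 1 := ⟨ht0, ht1⟩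
  have hL't : L' t₀ = 0 := by rw [hL', hs]; ring
  -- L is monotone up to t₀ and antitone after
  have hsub1 : Ioc (0:ℝ) t₀ ⊆ Ioo 0 1 := fun r hr => ⟨hr.1, lt_of_le_of_lt hr.2 ht1⟩
  have hsub2 : Ico t₀ (1:ℝ) ⊆ Ioo 0 1 := fun r hr => ⟨lt_of_lt_of_le ht0 hr.1, hr.2⟩
  have hmono : StrictMonoOn L (Ioc (0:ℝ) t₀) := by
    apply strictMonoOn_of_deriv_pos (convex_Ioc 0 t₀)
    · exact fun r hr => ((hDL r (hsub1 hr)).continuousAt).continuousWithinAt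
    · intro r hr
      rw [interior_Ioc] at hr
      have hr' : r ∈ Ioo (0:ℝ) 1 := ⟨hr.1, hr.2.trans ht1⟩
      rw [(hDL r hr').deriv]
      have := hanti hr' htmem hr.2
      rw [hL't] at this; exact this
  have hanti2 : StrictAntiOn L (Ico t₀ (1:ℝ)) := by
    apply strictAntiOn_of_deriv_neg (convex_Ico t₀ 1)
    · exact fun r hr => ((hDL r (hsub2 hr)).continuousAt).continuousWithinAt
    · intro r hr
      rw [interior_Ico] at hr
      have hr' : r ∈ Ioo (0:ℝ) 1 := ⟨ht0.trans hr.1, hr.2⟩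
      rw [(hDL r hr').deriv]
      have := hanti htmem hr' hr.1
      rw [hL't] at this; exact this
  have hLle : ∀ r ∈ Ioo (0:ℝ) 1, L r ≤ L t₀ := by
    intro r hr
    rcases lt_trichotomy r t₀ with h | h | h
    · exact (hmono ⟨hr.1, h.le⟩ ⟨ht0, le_refl _⟩ h).le
    · rw [h]
    · exact (hanti2 ⟨le_refl _, ht1⟩ ⟨h.le, hr.2⟩ h).le
  -- translate back
  have hphi : ∀ r ∈ Ioo (0:ℝ) 1,
      r * Real.exp (s*r) * (1 - r ^ c) ^ a⁻¹ = Real.exp (L r) := by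
    intro r hr
    have hx1 : r ^ c < 1 := hxlt r hr.1 hr.2
    rw [hL]
    rw [Real.exp_add, Real.exp_add, Real.exp_log hr.1,
      Real.rpow_def_of_pos (by linarith : (0:ℝ) < 1 - r ^ c), mul_comm a⁻¹]
  intro r hr
  rcases eq_or_lt_of_le hr.1 with h0 | h0
  · rw [← h0]
    have h1 : (0:ℝ) * Real.exp (s*0) * (1 - (0:ℝ) ^ c) ^ a⁻¹ = 0 := by simp
    rw [h1]
    have hx1 : t₀ ^ c < 1 := hxlt t₀ ht0 ht1
    have : (0:ℝ) < 1 - t₀ ^ c := by linarith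
    positivity
  · rw [hphi r ⟨h0, hr.2⟩, hphi t₀ htmem]
    exact Real.exp_le_exp.mpr (hLle r ⟨h0, hr.2⟩)


/-- Proposition d, concrete form: under the stated conditions on `p₁, p₂` there is a
holomorphic `h ≢ 0` on `𝔻` with `h(0) = 0` such that `|h(ζ)|(1-|ζ|^{2p₂})^{1/(2p₁)}`
attains its maximum over `𝔻` at `t₀`. -/
theorem stmt13 (p₁ p₂ : ℝ) (hp1 : 0 < p₁) (hp2 : 0 < p₂)
    (hcond : (1 : ℝ) / 2 ≤ p₂ ∨ 8 * p₁ + 4 * p₂ * (1 - p₂) > 1)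
    (t₀ : ℝ) (ht₀ : t₀ ∈ Set.Ioo (0 : ℝ) 1) (ht : p₁ / (p₁ + p₂) < t₀ ^ (2 * p₂)) :
    ∃ h : ℂ → ℂ, DifferentiableOn ℂ h (Metric.ball 0 1) ∧
      (∃ ζ ∈ Metric.ball (0 : ℂ) 1, h ζ ≠ 0) ∧ h 0 = 0 ∧
      ∀ ζ ∈ Metric.ball (0 : ℂ) 1,
        ‖h ζ‖ * (1 - ‖ζ‖ ^ (2 * p₂)) ^ (2 * p₁)⁻¹ ≤
          ‖h (t₀ : ℂ)‖ * (1 - t₀ ^ (2 * p₂)) ^ (2 * p₁)⁻¹ := by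
  obtain ⟨ht0, ht1⟩ := ht₀
  set a : ℝ := 2 * p₁ with ha'
  set c : ℝ := 2 * p₂ with hc'
  have ha : 0 < a := by positivity
  have hc : 0 < c := by positivity
  have hcond' : 1 ≤ c ∨ (1 - c)^2 < 4*a := by
    rcases hcond with h | h
    · left; rw [hc']; linarith
    · right; rw [ha', hc']; nlinarith
  set s : ℝ := c/a * t₀ ^ (c-1) / (1 - t₀ ^ c) - t₀⁻¹ with hs
  have hx1 : t₀ ^ c < 1 := Real.rpow_lt_one ht0.le ht1 hc
  have hx0 : 0 < t₀ ^ c := Real.rpow_pos_of_pos ht0 c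
  -- s > 0
  have hs0 : 0 < s := by
    have e1 : t₀ ^ (c-1) = t₀ ^ c / t₀ := by rw [Real.rpow_sub ht0, Real.rpow_one]
    have hrw : s = ((a+c) * t₀ ^ c - a) / (a * t₀ * (1 - t₀ ^ c)) := by
      rw [hs, e1]
      have hd : (1:ℝ) - t₀ ^ c ≠ 0 := by linarith
      field_simp
      ring
    rw [hrw]
    apply div_pos
    · rw [div_lt_iff₀ (by linarith : (0:ℝ) < p₁ + p₂)] at ht
      rw [ha', hc']
      have : t₀ ^ (2 * p₂) = t₀ ^ c := by rw [hc']
      rw [this] at ht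
      nlinarith
    · have : (0:ℝ) < 1 - t₀ ^ c := by linarith
      positivity
  refine ⟨fun ζ => ζ * Complex.exp (s * ζ), ?_, ?_, by simp, ?_⟩
  · exact (differentiable_id.mul ((differentiable_const _).mul differentiable_id).cexp).differentiableOn
  · refine ⟨(t₀ : ℂ), ?_, ?_⟩
    · rw [Metric.mem_ball, dist_zero_right, Complex.norm_real, Real.norm_eq_abs,
        abs_of_pos ht0]
      exact ht1
    · apply mul_ne_zero
      · exact_mod_cast ht0.ne'
      · exact Complex.exp_ne_zero _
  · intro ζ hζ
    have hζ1 : ‖ζ‖ < 1 := by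
      rwa [Metric.mem_ball, dist_zero_right] at hζ
    have habs : ‖ζ * Complex.exp (s * ζ)‖ = ‖ζ‖ * Real.exp (s * ζ.re) := by
      rw [norm_mul, Complex.norm_exp]
      congr 2
      simp [Complex.mul_re]
    have habs' : ‖(t₀:ℂ) * Complex.exp (s * (t₀:ℂ))‖ = t₀ * Real.exp (s * t₀) := by
      rw [norm_mul, Complex.norm_exp, Complex.norm_real, Real.norm_eq_abs, abs_of_pos ht0]
      congr 2
      simp [Complex.mul_re]
    rw [habs, habs']
    have key := key13 a c ha hc hcond' t₀ ht0 ht1 (‖ζ‖)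
      ⟨norm_nonneg ζ, hζ1⟩
    have step1 : ‖ζ‖ * Real.exp (s * ζ.re) * (1 - ‖ζ‖ ^ (2*p₂)) ^ (2*p₁)⁻¹ ≤
        ‖ζ‖ * Real.exp (s * ‖ζ‖) * (1 - ‖ζ‖ ^ (2*p₂)) ^ (2*p₁)⁻¹ := by
      have h1 : Real.exp (s * ζ.re) ≤ Real.exp (s * ‖ζ‖) :=
        Real.exp_le_exp.mpr (mul_le_mul_of_nonneg_left (Complex.re_le_norm ζ) hs0.le)
      have h2 : (0:ℝ) ≤ (1 - ‖ζ‖ ^ (2*p₂)) ^ (2*p₁)⁻¹ := by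
        have hlt : ‖ζ‖ ^ (2*p₂) < 1 :=
          Real.rpow_lt_one (norm_nonneg ζ) hζ1 (by positivity)
        have : (0:ℝ) < 1 - ‖ζ‖ ^ (2*p₂) := by linarith
        positivity
      have h3 : (0:ℝ) ≤ ‖ζ‖ := norm_nonneg ζ
      exact mul_le_mul_of_nonneg_right (mul_le_mul_of_nonneg_left h1 h3) h2
    refine step1.trans ?_
    have e2 : (2*p₂ : ℝ) = c := by rw [hc']
    have e1 : ((2*p₁ : ℝ))⁻¹ = a⁻¹ := by rw [ha']
    rw [e2, e1]
    exact key
end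

section
/- (Lemma neg1.) Let p ∈ (0,1), q > 0, and define φ(t) := (1 − t^p)^{−q} for t ∈ [0,1). Assume there exist 0 < c < b < 1 such that φ is strictly concave on [0,b] and φ(0) + (b/c)(φ(c) − φ(0)) > φ(b) + 2. Let f : 𝔻 → ℂ be holomorphic, f ≢ 0, and suppose that the function ζ ↦ |f(ζ)|/φ(|ζ|) attains its maximum over 𝔻 at a point w_0. Then w_0 = 0 or |w_0| ≥ c. -/
/-- Lemma neg1: under a concavity and gap condition on `φ(t) = (1-t^p)^{-q}`,
any maximum point `w₀` of `|f(ζ)|/φ(|ζ|)` on `𝔻` satisfies `w₀ = 0` or `|w₀| ≥ c`. -/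
theorem stmt14 (p q : ℝ) (hp : p ∈ Set.Ioo (0 : ℝ) 1) (hq : 0 < q)
    (φ : ℝ → ℝ) (hφ : φ = fun t => (1 - t ^ p) ^ (-q))
    (b c : ℝ) (hc : 0 < c) (hcb : c < b) (hb : b < 1)
    (hconc : StrictConcaveOn ℝ (Set.Icc 0 b) φ)
    (hineq : φ 0 + (b / c) * (φ c - φ 0) > φ b + 2)
    (f : ℂ → ℂ) (hf : DifferentiableOn ℂ f (Metric.ball 0 1))
    (hf0 : ∃ ζ ∈ Metric.ball (0 : ℂ) 1, f ζ ≠ 0)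
    (w₀ : ℂ) (hw₀ : w₀ ∈ Metric.ball (0 : ℂ) 1)
    (hmax : ∀ ζ ∈ Metric.ball (0 : ℂ) 1,
      ‖f ζ‖ / φ ‖ζ‖ ≤ ‖f w₀‖ / φ ‖w₀‖) :
    w₀ = 0 ∨ c ≤ ‖w₀‖ := by
  by_contra hcon
  push_neg at hcon
  obtain ⟨hw0ne, hr0c⟩ := hcon
  set r₀ : ℝ := ‖w₀‖ with hr₀def
  have hr₀pos : 0 < r₀ := by
    simpa [hr₀def] using (norm_pos_iff.mpr hw0ne)
  -- basic facts about φ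
  have hpos : ∀ t : ℝ, 0 ≤ t → t < 1 → 0 < φ t := by
    intro t ht ht1
    have h1 : t ^ p < 1 := Real.rpow_lt_one ht ht1 hp.1
    have : 0 < 1 - t ^ p := by linarith
    rw [hφ]
    exact Real.rpow_pos_of_pos this _
  have hzero : φ 0 = 1 := by
    rw [hφ]
    simp [Real.zero_rpow hp.1.ne']
  have hlt : ∀ s t : ℝ, 0 ≤ s → s < t → t < 1 → φ s < φ t := by
    intro s t hs hst ht1
    have h1 : s ^ p < t ^ p := Real.rpow_lt_rpow hs hst hp.1
    have h2 : t ^ p < 1 := Real.rpow_lt_one (hs.trans hst.le) ht1 hp.1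
    have h3 : 0 < 1 - t ^ p := by linarith
    have h4 : 1 - t ^ p < 1 - s ^ p := by linarith
    rw [hφ]
    simp only
    rw [Real.rpow_neg h3.le, Real.rpow_neg (by linarith : (0:ℝ) ≤ 1 - s ^ p)]
    have h5 : (1 - t ^ p) ^ q < (1 - s ^ p) ^ q := Real.rpow_lt_rpow h3.le h4 hq
    have h6 : 0 < (1 - t ^ p) ^ q := Real.rpow_pos_of_pos h3 q
    exact inv_strictAnti₀ h6 h5
  have hrb : r₀ < b := hr0c.trans hcb
  have hr₀1 : r₀ < 1 := by
    simpa [hr₀def] using (mem_ball_zero_iff.mp hw₀)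
  have hφr₀pos : 0 < φ r₀ := hpos r₀ (norm_nonneg _) hr₀1
  have hφbpos : 0 < φ b := hpos b (hc.le.trans hcb.le) hb
  set Λ : ℝ := ‖f w₀‖ / φ r₀ with hΛdef
  -- Λ > 0
  obtain ⟨ζ, hζ, hfζ⟩ := hf0
  have hΛpos : 0 < Λ := by
    have h1 : 0 < ‖f ζ‖ := norm_pos_iff.mpr hfζ
    have h2 : 0 < φ (‖ζ‖) :=
      hpos _ (norm_nonneg _) (by simpa using mem_ball_zero_iff.mp hζ)
    have := hmax ζ hζ
    calc (0:ℝ) < ‖f ζ‖ / φ (‖ζ‖) := div_pos h1 h2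
      _ ≤ Λ := this
  -- global bound
  have hbound : ∀ z ∈ Metric.ball (0:ℂ) 1, ‖f z‖ ≤ Λ * φ (‖z‖) := by
    intro z hz
    have h2 : 0 < φ (‖z‖) :=
      hpos _ (norm_nonneg _) (by simpa using mem_ball_zero_iff.mp hz)
    have := hmax z hz
    rw [div_le_iff₀ h2] at this
    linarith [this]
  have hfw₀ : ‖f w₀‖ = Λ * φ r₀ := by
    rw [hΛdef, div_mul_cancel₀ _ hφr₀pos.ne']
  set M : ℝ := Λ * φ b with hMdef
  -- Schwarz lemma setup
  have hball : Metric.ball (0:ℂ) b ⊆ Metric.ball (0:ℂ) 1 :=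
    Metric.ball_subset_ball hb.le
  have hd : DifferentiableOn ℂ f (Metric.ball (0:ℂ) b) := hf.mono hball
  have hmaps : Set.MapsTo f (Metric.ball (0:ℂ) b)
      (Metric.ball (f 0) (M + ‖f 0‖)) := by
    intro z hz
    have hzb : ‖z‖ < b := by simpa using mem_ball_zero_iff.mp hz
    have h1 : ‖f z‖ ≤ Λ * φ (‖z‖) := hbound z (hball hz)
    have h2 : φ (‖z‖) < φ b := hlt _ _ (norm_nonneg _) hzb hb
    have h3 : ‖f z‖ < M := by
      calc ‖f z‖ ≤ Λ * φ (‖z‖) := h1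
        _ < Λ * φ b := by exact mul_lt_mul_of_pos_left h2 hΛpos
    rw [Metric.mem_ball]
    calc dist (f z) (f 0) ≤ ‖f z‖ + ‖f 0‖ := by
          simpa [Complex.dist_eq, Complex.norm_def] using norm_sub_le (f z) (f 0)
      _ < M + ‖f 0‖ := by linarith
  have hw₀b : w₀ ∈ Metric.ball (0:ℂ) b := by
    rw [mem_ball_zero_iff]; simpa using hrb
  have hschwarz := Complex.dist_le_div_mul_dist_of_mapsTo_ball hd (hmaps.mono_right Metric.ball_subset_closedBall) hw₀b
  have hdistw : dist w₀ (0:ℂ) = r₀ := by simp [Complex.dist_eq, hr₀def]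
  have hSch : ‖f w₀‖ ≤ ‖f 0‖
      + (M + ‖f 0‖) / b * r₀ := by
    have h1 : ‖f w₀‖ - ‖f 0‖ ≤ dist (f w₀) (f 0) := by
      simpa [Complex.dist_eq, Complex.norm_def] using norm_sub_norm_le (f w₀) (f 0)
    rw [hdistw] at hschwarz
    linarith
  have hf0le : ‖f 0‖ ≤ Λ := by
    have := hbound 0 (by simp)
    simpa [hzero] using this
  -- concavity bound
  have h0mem : (0:ℝ) ∈ Set.Icc (0:ℝ) b := ⟨le_refl _, (hc.trans hcb).le⟩
  have hcmem : c ∈ Set.Icc (0:ℝ) b := ⟨hc.le, hcb.le⟩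
  have ha1 : (0:ℝ) ≤ 1 - r₀ / c := by
    have : r₀ / c ≤ 1 := by
      rw [div_le_one hc]; exact hr0c.le
    linarith
  have ha2 : (0:ℝ) ≤ r₀ / c := by positivity
  have hconc' := hconc.concaveOn.2 h0mem hcmem ha1 ha2 (by ring)
  have hr₀eq : (1 - r₀ / c) • (0:ℝ) + (r₀ / c) • c = r₀ := by
    rw [smul_eq_mul, smul_eq_mul, mul_zero, zero_add, div_mul_cancel₀ _ hc.ne']
  rw [hr₀eq] at hconc'
  have hconcave : 1 + (r₀ / c) * (φ c - 1) ≤ φ r₀ := by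
    have : (1 - r₀/c) * φ 0 + (r₀/c) * φ c ≤ φ r₀ := by
      simpa [smul_eq_mul] using hconc'
    rw [hzero] at this
    linarith
  -- gap inequality: b * (φ c - 1) > c * (φ b + 1)
  have hkey : c * (φ b + 1) < b * (φ c - 1) := by
    rw [hzero] at hineq
    have h1 : (φ b + 2) * c < (1 + b / c * (φ c - 1)) * c :=
      mul_lt_mul_of_pos_right hineq hc
    have h2 : (1 + b / c * (φ c - 1)) * c = c + b * (φ c - 1) := by
      field_simp
    rw [h2] at h1
    nlinarith
  -- deduce φ r₀ > 1 + (r₀ / b) * (φ b + 1)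
  have hbpos : (0:ℝ) < b := hc.trans hcb
  have hstep : 1 + r₀ / b * (φ b + 1) < φ r₀ := by
    have h1 : r₀ * (c * (φ b + 1)) < r₀ * (b * (φ c - 1)) :=
      mul_lt_mul_of_pos_left hkey hr₀pos
    have h2 : r₀ / b * (φ b + 1) < r₀ / c * (φ c - 1) := by
      rw [div_mul_eq_mul_div, div_mul_eq_mul_div, div_lt_div_iff₀ hbpos hc]
      nlinarith
    linarith
  -- final contradiction
  have hfinal : Λ + (M + Λ) / b * r₀ < Λ * φ r₀ := by
    have := mul_lt_mul_of_pos_left hstep hΛpos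
    have he : Λ * (1 + r₀ / b * (φ b + 1)) = Λ + (M + Λ) / b * r₀ := by
      rw [hMdef]; field_simp
    linarith [he ▸ this]
  have hup : Λ * φ r₀ ≤ Λ + (M + Λ) / b * r₀ := by
    rw [← hfw₀]
    have h3 : (M + ‖f 0‖) / b * r₀ ≤ (M + Λ) / b * r₀ := by
      apply mul_le_mul_of_nonneg_right _ hr₀pos.le
      exact (div_le_div_iff_of_pos_right hbpos).mpr (by linarith)
    linarith [hSch]
  linarith
end
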